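/- arXiv:2512.21800 — 7 statements merged into one kernel-verified Lean document; each statement's English description precedes it below -/
import Mathlib

section
/- Let p ≥ 1 be an integer, 𝐇 a set of graphs, and c ≥ 1 an integer such that every 𝐇-free graph G with ω(G) = 1 satisfies χ(G) ≤ 1 and every 𝐇-free graph G with ω(G) > 1 satisfies χ(G) ≤ c. Then every (pK₂ ∪ 𝐇)-free graph G satisfies χ(G) ≤ C(ω(G)+2p−2, 2p−1) + c·C(ω(G)+2p−2, 2p), where C(a,b) denotes the binomial coefficient. -/
open SimpleGraph

/-- `pK₂`: the disjoint union of `p` copies of the single-edge graph `K₂`. -/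
def pK2 (p : ℕ) : SimpleGraph (Fin p × Fin 2) where
  Adj x y := x.1 = y.1 ∧ x.2 ≠ y.2
  symm := ⟨fun _ _ h => ⟨h.1.symm, h.2.symm⟩⟩
  loopless := ⟨fun _ h => h.2 rfl⟩

section AuxStmt3
open Finset

-- hockey stick helper
lemma aux_H1 (a m : ℕ) : ∀ ω : ℕ, Nat.choose a (m+1) + ∑ l ∈ Finset.range ω, Nat.choose (l+a) m
    = Nat.choose (ω+a) (m+1) := by
  intro ω
  induction ω with
  | zero => simp
  | succ n ih =>
    rw [Finset.sum_range_succ, ← Nat.add_assoc, ih]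
    have : n + 1 + a = (n + a) + 1 := by omega
    rw [this, Nat.choose_succ_succ']
    omega

-- q = 0 arithmetic
lemma aux_A0 (c : ℕ) : ∀ ω : ℕ, ω + ∑ l ∈ Finset.range ω, (ω-1-l) * c
    = Nat.choose ω 1 + c * Nat.choose ω 2 := by
  intro ω
  induction ω with
  | zero => simp
  | succ n ih =>
    have hsplit : ∑ l ∈ Finset.range (n+1), (n+1-1-l) * c
        = (∑ l ∈ Finset.range n, (n-1-l) * c) + (∑ l ∈ Finset.range n, c) := by
      rw [Finset.sum_range_succ, ← Finset.sum_add_distrib]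
      have h0 : (n+1-1-n) * c = 0 := by
        have : n+1-1-n = 0 := by omega
        rw [this]; ring
      rw [h0, Nat.add_zero]
      refine Finset.sum_congr rfl ?_
      intro l hl
      rw [Finset.mem_range] at hl
      have : n + 1 - 1 - l = (n - 1 - l) + 1 := by omega
      rw [this]; ring
    rw [hsplit, Finset.sum_const, Finset.card_range, smul_eq_mul]
    have p2 : Nat.choose (n+1) 2 = Nat.choose n 1 + Nat.choose n 2 := Nat.choose_succ_succ' n 1
    rw [Nat.choose_one_right, p2, Nat.choose_one_right, Nat.mul_add]
    rw [Nat.choose_one_right] at ih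
    rw [Nat.mul_comm n c]
    linarith

lemma aux_sum_coef_succ (f : ℕ → ℕ) (n : ℕ) :
    ∑ l ∈ Finset.range (n+1), (n+1-1-l) * f l
      = (∑ l ∈ Finset.range n, (n-1-l) * f l) + ∑ l ∈ Finset.range n, f l := by
  rw [Finset.sum_range_succ, ← Finset.sum_add_distrib]
  have h0 : (n+1-1-n) * f n = 0 := by
    have : n+1-1-n = 0 := by omega
    rw [this]; ring
  rw [h0, Nat.add_zero]
  refine Finset.sum_congr rfl ?_
  intro l hl
  rw [Finset.mem_range] at hl
  have : n + 1 - 1 - l = (n - 1 - l) + 1 := by omega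
  rw [this]; ring

lemma aux_A1 (c Q : ℕ) : ∀ ω : ℕ,
    ω + ∑ l ∈ Finset.range ω,
      (ω-1-l) * (Nat.choose (l+(2*Q+2)) (2*Q+1) + c * Nat.choose (l+(2*Q+2)) (2*Q+2))
    = Nat.choose (ω+2*Q+2) (2*Q+3) + c * Nat.choose (ω+2*Q+2) (2*Q+4) := by
  intro ω
  induction ω with
  | zero =>
    simp [Nat.choose_eq_zero_of_lt (by omega : 2*Q+2 < 2*Q+3),
      Nat.choose_eq_zero_of_lt (by omega : 2*Q+2 < 2*Q+4)]
  | succ n ih =>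
    rw [aux_sum_coef_succ]
    have hfs : ∑ l ∈ Finset.range n,
        (Nat.choose (l+(2*Q+2)) (2*Q+1) + c * Nat.choose (l+(2*Q+2)) (2*Q+2))
        = (∑ l ∈ Finset.range n, Nat.choose (l+(2*Q+2)) (2*Q+1))
          + c * ∑ l ∈ Finset.range n, Nat.choose (l+(2*Q+2)) (2*Q+2) := by
      rw [Finset.sum_add_distrib, Finset.mul_sum]
    have h1a := aux_H1 (2*Q+2) (2*Q+1) n
    have h1b := aux_H1 (2*Q+2) (2*Q+2) n
    rw [Nat.choose_self] at h1a
    rw [Nat.choose_eq_zero_of_lt (by omega : 2*Q+2 < 2*Q+3), Nat.zero_add] at h1b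
    have e1 : 2*Q+1+1 = 2*Q+2 := by omega
    have e2 : 2*Q+2+1 = 2*Q+3 := by omega
    rw [e1] at h1a
    rw [e2] at h1b
    have pa : Nat.choose (n+1+2*Q+2) (2*Q+3)
        = Nat.choose (n+2*Q+2) (2*Q+2) + Nat.choose (n+2*Q+2) (2*Q+3) := by
      have : n+1+2*Q+2 = (n+2*Q+2)+1 := by omega
      rw [this]
      have : 2*Q+3 = (2*Q+2)+1 := by omega
      rw [this, Nat.choose_succ_succ']
    have pb : Nat.choose (n+1+2*Q+2) (2*Q+4)
        = Nat.choose (n+2*Q+2) (2*Q+3) + Nat.choose (n+2*Q+2) (2*Q+4) := by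
      have : n+1+2*Q+2 = (n+2*Q+2)+1 := by omega
      rw [this]
      have : 2*Q+4 = (2*Q+3)+1 := by omega
      rw [this, Nat.choose_succ_succ']
    rw [hfs, pa, pb, h1b, Nat.mul_add]
    have hn : n + 2*Q + 2 = n + (2*Q+2) := by omega
    rw [hn] at ih ⊢
    linarith

open Classical in
lemma aux_cover_coloring {V : Type} {G : SimpleGraph V} {α : Type} (s : Finset α)
    (P : α → Set V) (n : α → ℕ)
    (hcol : ∀ a ∈ s, ∃ g : V → ℕ, (∀ v ∈ P a, g v < n a) ∧
       ∀ u v, G.Adj u v → u ∈ P a → v ∈ P a → g u ≠ g v) :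
    ∃ f : V → ℕ, (∀ v, (∃ a ∈ s, v ∈ P a) → f v < ∑ a ∈ s, n a) ∧
      ∀ u v, G.Adj u v → (∃ a ∈ s, u ∈ P a) → (∃ a ∈ s, v ∈ P a) → f u ≠ f v := by
  classical
  induction s using Finset.induction with
  | empty =>
    refine ⟨fun _ => 0, ?_, ?_⟩
    · rintro v ⟨a, ha, _⟩; simp at ha
    · rintro u v _ ⟨a, ha, _⟩; simp at ha
  | @insert a s hnotmem ih =>
    obtain ⟨g, hg1, hg2⟩ := hcol a (Finset.mem_insert_self a s)
    obtain ⟨f', hf1, hf2⟩ := ih (fun b hb => hcol b (Finset.mem_insert_of_mem hb))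
    refine ⟨fun v => if v ∈ P a then g v else n a + f' v, ?_, ?_⟩
    · intro v hv
      rw [Finset.sum_insert hnotmem]
      by_cases hva : v ∈ P a
      · simp only [hva, if_pos]
        exact lt_of_lt_of_le (hg1 v hva) (Nat.le_add_right _ _)
      · simp only [hva, if_neg, if_false]
        obtain ⟨b, hb, hvb⟩ := hv
        rcases Finset.mem_insert.mp hb with rfl | hb'
        · exact absurd hvb hva
        · exact Nat.add_lt_add_left (hf1 v ⟨b, hb', hvb⟩) _
    · intro u v hadj hu hv
      by_cases hua : u ∈ P a <;> by_cases hva : v ∈ P a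
      · simpa [hua, hva] using hg2 u v hadj hua hva
      · simp only [hua, hva, if_pos, if_neg, if_false, if_true]
        exact Nat.ne_of_lt (lt_of_lt_of_le (hg1 u hua) (Nat.le_add_right _ _))
      · simp only [hua, hva, if_pos, if_neg, if_false, if_true]
        exact (Nat.ne_of_lt (lt_of_lt_of_le (hg1 v hva) (Nat.le_add_right _ _))).symm
      · simp only [hua, hva, if_neg, if_false]
        have hu' : ∃ b ∈ s, u ∈ P b := by
          obtain ⟨b, hb, hub⟩ := hu
          rcases Finset.mem_insert.mp hb with rfl | hb'
          · exact absurd hub hua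
          · exact ⟨b, hb', hub⟩
        have hv' : ∃ b ∈ s, v ∈ P b := by
          obtain ⟨b, hb, hvb⟩ := hv
          rcases Finset.mem_insert.mp hb with rfl | hb'
          · exact absurd hvb hva
          · exact ⟨b, hb', hvb⟩
        intro heq
        exact hf2 u v hadj hu' hv' (Nat.add_left_cancel heq)

lemma aux_colorable_of_cover {V : Type} {G : SimpleGraph V} {α : Type} (s : Finset α)
    (P : α → Set V) (n : α → ℕ)
    (hcover : ∀ v, ∃ a ∈ s, v ∈ P a)
    (hcol : ∀ a ∈ s, (G.induce (P a)).Colorable (n a)) :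
    G.Colorable (∑ a ∈ s, n a) := by
  classical
  rw [SimpleGraph.colorable_iff_exists_bdd_nat_coloring]
  have hcol' : ∀ a ∈ s, ∃ g : V → ℕ, (∀ v ∈ P a, g v < n a) ∧
      ∀ u v, G.Adj u v → u ∈ P a → v ∈ P a → g u ≠ g v := by
    intro a ha
    obtain ⟨C, hC⟩ := (SimpleGraph.colorable_iff_exists_bdd_nat_coloring _).mp (hcol a ha)
    refine ⟨fun v => if h : v ∈ P a then C ⟨v, h⟩ else 0, ?_, ?_⟩
    · intro v hv; simp only [hv, dif_pos]; exact hC _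
    · intro u v hadj hu hv
      simp only [hu, hv, dif_pos]
      exact C.valid (by exact hadj : (G.induce (P a)).Adj ⟨u, hu⟩ ⟨v, hv⟩)
  obtain ⟨f, hf1, hf2⟩ := aux_cover_coloring s P n hcol'
  exact ⟨SimpleGraph.Coloring.mk f
    (fun {u v} hadj => hf2 u v hadj (hcover u) (hcover v)), fun v => hf1 v (hcover v)⟩

lemma aux_cliqueNum_le_of {V : Type} [Fintype V] {G : SimpleGraph V} {n : ℕ}
    (h : ∀ t : Finset V, G.IsClique ↑t → t.card ≤ n) : G.cliqueNum ≤ n := by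
  have hne : {m | ∃ s, G.IsNClique m s}.Nonempty := ⟨0, ∅, SimpleGraph.isNClique_empty.mpr rfl⟩
  apply csSup_le hne
  rintro m ⟨t, ht⟩
  exact ht.card_eq ▸ h t ht.isClique

lemma aux_card_le_cliqueNum' {V : Type} [Fintype V] {G : SimpleGraph V}
    (t : Finset V) (ht : G.IsClique ↑t) : t.card ≤ G.cliqueNum :=
  SimpleGraph.IsClique.card_le_cliqueNum (tc := ht)

open Classical in
lemma aux_decomp {V : Type} [Fintype V] (G : SimpleGraph V) (b : ℕ → ℕ)
    (hb : ∀ S : Set V, ∀ x y : V, G.Adj x y → (∀ v ∈ S, ¬G.Adj x v ∧ ¬G.Adj y v) →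
       (G.induce S).Colorable (b (G.induce S).cliqueNum))
    (hbmono : Monotone b) :
    G.Colorable (G.cliqueNum + ∑ l ∈ Finset.range G.cliqueNum,
      l * b (G.cliqueNum - l + 1)) := by
  classical
  by_cases hV : IsEmpty V
  · exact SimpleGraph.Colorable.mono (Nat.zero_le _)
      ⟨SimpleGraph.Coloring.mk (fun v => isEmptyElim v) (fun {v} => isEmptyElim v)⟩
  have hne : Nonempty V := not_isEmpty_iff.mp hV
  obtain ⟨Q, hQ⟩ := G.exists_isNClique_cliqueNum
  set ω := G.cliqueNum with hω
  have hcard : Q.card = ω := hQ.card_eq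
  have hclique : G.IsClique ↑Q := hQ.isClique
  have hmax : ∀ t : Finset V, G.IsClique ↑t → t.card ≤ ω := fun t ht => aux_card_le_cliqueNum' t ht
  -- enumeration of the maximum clique
  set e : Fin ω → V := fun k => ↑(Q.equivFin.symm (Fin.cast hcard.symm k)) with he
  have he_mem : ∀ k, e k ∈ Q := fun k => (Q.equivFin.symm _).2
  have he_inj : Function.Injective e := by
    intro k l h
    have h2 : Q.equivFin.symm (Fin.cast hcard.symm k) = Q.equivFin.symm (Fin.cast hcard.symm l) :=
      Subtype.coe_injective h
    have h3 := Q.equivFin.symm.injective h2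
    have h4 : (Fin.cast hcard.symm k).val = (Fin.cast hcard.symm l).val := congrArg Fin.val h3
    exact Fin.ext h4
  have he_surj : ∀ v ∈ Q, ∃ k, e k = v := by
    intro v hv
    refine ⟨Fin.cast hcard (Q.equivFin ⟨v, hv⟩), ?_⟩
    simp [he]
  have he_adj : ∀ {k l}, k ≠ l → G.Adj (e k) (e l) := by
    intro k l hkl
    exact hclique (Finset.mem_coe.mpr (he_mem k)) (Finset.mem_coe.mpr (he_mem l))
      (fun h => hkl (he_inj h))
  set nn : V → Finset (Fin ω) := fun v => Finset.univ.filter (fun k => ¬ G.Adj (e k) v) with hnn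
  have hnn_mem : ∀ v k, k ∈ nn v ↔ ¬ G.Adj (e k) v := by
    intro v k; simp [hnn]
  have hnn_ne : ∀ v, v ∉ Q → (nn v).Nonempty := by
    intro v hv
    by_contra hemp
    rw [Finset.not_nonempty_iff_eq_empty] at hemp
    have hall : ∀ k, G.Adj (e k) v := by
      intro k
      by_contra hadj
      have : k ∈ nn v := (hnn_mem v k).mpr hadj
      rw [hemp] at this
      exact absurd this (Finset.notMem_empty _)
    have hcl : G.IsClique ↑(insert v Q) := by
      rw [Finset.coe_insert]
      refine hclique.insert ?_
      intro u hu hne'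
      obtain ⟨k, rfl⟩ := he_surj u hu
      exact (hall k).symm
    have := hmax _ hcl
    rw [Finset.card_insert_of_notMem hv, hcard] at this
    omega
  -- the classes
  set PA : Fin ω → Set V := fun k => {v | v = e k ∨ (v ∉ Q ∧ nn v = {k})} with hPA
  set PC : Fin ω × Fin ω → Set V := fun kl =>
    {v | v ∉ Q ∧ kl.1 ∈ nn v ∧ kl.2 ∈ nn v ∧ kl.1 < kl.2 ∧
      ∀ m ∈ nn v, m = kl.1 ∨ kl.2 ≤ m} with hPC
  set P : (Fin ω ⊕ Fin ω × Fin ω) → Set V := Sum.elim PA PC with hP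
  set nfun : (Fin ω ⊕ Fin ω × Fin ω) → ℕ :=
    Sum.elim (fun _ => 1) (fun kl => if kl.1 < kl.2 then b (ω - kl.2.val + 1) else 0) with hnfun
  -- cover
  have hcover : ∀ v, ∃ a ∈ (Finset.univ : Finset (Fin ω ⊕ Fin ω × Fin ω)), v ∈ P a := by
    intro v
    by_cases hv : v ∈ Q
    · obtain ⟨k, hk⟩ := he_surj v hv
      exact ⟨Sum.inl k, Finset.mem_univ _, Or.inl hk.symm⟩
    · have hne' := hnn_ne v hv
      set k := (nn v).min' hne' with hk
      have hkmem : k ∈ nn v := (nn v).min'_mem hne'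
      by_cases hsing : nn v = {k}
      · exact ⟨Sum.inl k, Finset.mem_univ _, Or.inr ⟨hv, hsing⟩⟩
      · have herase : ((nn v).erase k).Nonempty := by
          by_contra h
          rw [Finset.not_nonempty_iff_eq_empty] at h
          apply hsing
          apply Finset.eq_singleton_iff_unique_mem.mpr ⟨hkmem, ?_⟩
          intro x hx
          by_contra hxk
          have : x ∈ (nn v).erase k := Finset.mem_erase.mpr ⟨hxk, hx⟩
          rw [h] at this
          exact absurd this (Finset.notMem_empty _)
        set l := ((nn v).erase k).min' herase with hl
        have hlmem' : l ∈ (nn v).erase k := Finset.min'_mem _ _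
        have hlmem : l ∈ nn v := Finset.mem_of_mem_erase hlmem'
        have hlk : k < l := lt_of_le_of_ne ((nn v).min'_le l hlmem)
          (Ne.symm (Finset.ne_of_mem_erase hlmem'))
        refine ⟨Sum.inr (k, l), Finset.mem_univ _, hv, hkmem, hlmem, hlk, ?_⟩
        intro m hm
        by_cases hmk : m = k
        · exact Or.inl hmk
        · exact Or.inr (Finset.min'_le _ _ (Finset.mem_erase.mpr ⟨hmk, hm⟩))
  have homega1 : 1 ≤ ω := by
    have := hmax ({Classical.arbitrary V} : Finset V) (by simp)
    simpa using this
  -- independence of the PA classes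
  have hcolA : ∀ k : Fin ω, (G.induce (PA k)).Colorable 1 := by
    intro k
    have hind : ∀ u v, u ∈ PA k → v ∈ PA k → ¬ G.Adj u v := by
      intro u v hu hv hadj
      rcases hu with rfl | ⟨huQ, hunn⟩ <;> rcases hv with rfl | ⟨hvQ, hvnn⟩
      · exact G.loopless.irrefl _ hadj
      · have : k ∈ nn v := by rw [hvnn]; exact Finset.mem_singleton_self k
        exact ((hnn_mem v k).mp this) hadj
      · have : k ∈ nn u := by rw [hunn]; exact Finset.mem_singleton_self k
        exact ((hnn_mem u k).mp this) hadj.symm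
      · have hadjall : ∀ m : Fin ω, m ≠ k → G.Adj (e m) u ∧ G.Adj (e m) v := by
          intro m hm
          constructor
          · by_contra h
            have : m ∈ nn u := (hnn_mem u m).mpr h
            rw [hunn, Finset.mem_singleton] at this
            exact hm this
          · by_contra h
            have : m ∈ nn v := (hnn_mem v m).mpr h
            rw [hvnn, Finset.mem_singleton] at this
            exact hm this
        have huv : u ≠ v := G.ne_of_adj hadj
        have hvE : v ∉ Q.erase (e k) := fun h => hvQ (Finset.mem_of_mem_erase h)
        have huE : u ∉ insert v (Q.erase (e k)) := by
          intro h
          rcases Finset.mem_insert.mp h with rfl | h'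
          · exact huv rfl
          · exact huQ (Finset.mem_of_mem_erase h')
        have hcl : G.IsClique ↑(insert u (insert v (Q.erase (e k)))) := by
          rw [Finset.coe_insert, Finset.coe_insert]
          have hbase : G.IsClique ↑(Q.erase (e k)) :=
            hclique.subset (by exact_mod_cast Finset.erase_subset _ _)
          have hins1 : G.IsClique (insert v ↑(Q.erase (e k))) := by
            refine hbase.insert ?_
            intro x hx hxv
            rw [Finset.mem_coe, Finset.mem_erase] at hx
            obtain ⟨m, rfl⟩ := he_surj x hx.2
            have hmk : m ≠ k := fun hh => hx.1 (by rw [hh])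
            exact ((hadjall m hmk).2).symm
          refine hins1.insert ?_
          intro x hx hxu
          rcases Set.mem_insert_iff.mp hx with rfl | hx'
          · exact hadj
          · rw [Finset.mem_coe, Finset.mem_erase] at hx'
            obtain ⟨m, rfl⟩ := he_surj x hx'.2
            have hmk : m ≠ k := fun hh => hx'.1 (by rw [hh])
            exact ((hadjall m hmk).1).symm
        have hclcard := hmax _ hcl
        rw [Finset.card_insert_of_notMem huE, Finset.card_insert_of_notMem hvE,
          Finset.card_erase_of_mem (he_mem k), hcard] at hclcard
        omega
    exact ⟨SimpleGraph.Coloring.mk (fun _ => (0 : Fin 1))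
      (fun {u v} hadj => absurd hadj (hind u.1 v.1 u.2 v.2))⟩
  -- the PC classes
  have hcolC : ∀ kl : Fin ω × Fin ω, (G.induce (PC kl)).Colorable (nfun (Sum.inr kl)) := by
    rintro ⟨k, l⟩
    by_cases hkl : k < l
    · have hnf : nfun (Sum.inr (k, l)) = b (ω - l.val + 1) := by simp [hnfun, hkl]
      rw [hnf]
      have hxy : G.Adj (e k) (e l) := he_adj (ne_of_lt hkl)
      have havoid : ∀ v ∈ PC (k,l), ¬G.Adj (e k) v ∧ ¬G.Adj (e l) v := by
        rintro v ⟨hvQ, hk', hl', _, _⟩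
        exact ⟨(hnn_mem v k).mp hk', (hnn_mem v l).mp hl'⟩
      refine (hb (PC (k,l)) (e k) (e l) hxy havoid).mono (hbmono ?_)
      apply aux_cliqueNum_le_of
      intro t ht
      set D : Finset (Fin ω) := (Finset.Iio l).erase k with hD
      have hDcard : D.card = l.val - 1 := by
        rw [hD, Finset.card_erase_of_mem (Finset.mem_Iio.mpr hkl), Fin.card_Iio]
      set big : Finset V := (t.map (Function.Embedding.subtype _)) ∪ D.image e with hbig
      have hdisj : Disjoint (t.map (Function.Embedding.subtype _)) (D.image e) := by
        rw [Finset.disjoint_left]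
        intro x hx hx'
        rw [Finset.mem_map] at hx
        obtain ⟨a, _, rfl⟩ := hx
        rw [Finset.mem_image] at hx'
        obtain ⟨m, _, hm⟩ := hx'
        have hh := he_mem m
        rw [hm] at hh
        exact a.2.1 hh
      have hbigcard : big.card = t.card + (l.val - 1) := by
        rw [hbig, Finset.card_union_of_disjoint hdisj, Finset.card_map,
          Finset.card_image_of_injective _ he_inj, hDcard]
      have hbigclique : G.IsClique ↑big := by
        intro x hx y hy hxy
        rw [Finset.coe_union, Set.mem_union] at hx hy
        have hmap : ∀ z, z ∈ (↑(t.map (Function.Embedding.subtype fun x => x ∈ PC (k,l))) : Set V) →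
            ∃ a : ↥(PC (k,l)), a ∈ t ∧ ↑a = z := by
          intro z hz
          rw [Finset.mem_coe, Finset.mem_map] at hz
          obtain ⟨a, ha, haz⟩ := hz
          exact ⟨a, ha, haz⟩
        have himg : ∀ z, z ∈ (↑(D.image e) : Set V) → ∃ m, (m ≠ k ∧ m < l) ∧ e m = z := by
          intro z hz
          rw [Finset.mem_coe, Finset.mem_image] at hz
          obtain ⟨m, hm, hmz⟩ := hz
          rw [hD, Finset.mem_erase, Finset.mem_Iio] at hm
          exact ⟨m, hm, hmz⟩
        have hcross : ∀ (a : ↥(PC (k,l))), a ∈ t → ∀ m, m ≠ k → m < l → G.Adj (e m) ↑a := by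
          intro a _ m hmk hml
          by_contra h
          have hmnn : m ∈ nn ↑a := (hnn_mem _ m).mpr h
          rcases a.2.2.2.2.2 m hmnn with h' | h'
          · exact hmk h'
          · exact absurd hml (not_lt.mpr h')
        rcases hx with hx | hx <;> rcases hy with hy | hy
        · obtain ⟨a, ha, rfl⟩ := hmap x hx
          obtain ⟨a', ha', rfl⟩ := hmap y hy
          have hne'' : a ≠ a' := fun h => hxy (congrArg _ h)
          exact ht ha ha' hne''
        · obtain ⟨a, ha, rfl⟩ := hmap x hx
          obtain ⟨m, hm, rfl⟩ := himg y hy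
          exact (hcross a ha m hm.1 hm.2).symm
        · obtain ⟨m, hm, rfl⟩ := himg x hx
          obtain ⟨a, ha, rfl⟩ := hmap y hy
          exact hcross a ha m hm.1 hm.2
        · obtain ⟨m, hm, rfl⟩ := himg x hx
          obtain ⟨m', hm', rfl⟩ := himg y hy
          exact he_adj (fun h => hxy (congrArg e h))
      have := hmax big hbigclique
      rw [hbigcard] at this
      have hlω : l.val < ω := l.isLt
      have hl1 : (k : ℕ) < (l : ℕ) := hkl
      omega
    · have hnf : nfun (Sum.inr (k, l)) = 0 := by simp [hnfun, hkl]
      rw [hnf]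
      have hPCempty : IsEmpty ↥(PC (k,l)) := ⟨fun x => hkl x.2.2.2.2.1⟩
      exact ⟨SimpleGraph.Coloring.mk (fun x => isEmptyElim x) (fun {u} => isEmptyElim u)⟩
  have hcol : ∀ a ∈ (Finset.univ : Finset (Fin ω ⊕ Fin ω × Fin ω)),
      (G.induce (P a)).Colorable (nfun a) := by
    rintro (k | kl) _
    · exact hcolA k
    · exact hcolC kl
  have hmain := aux_colorable_of_cover Finset.univ P nfun hcover hcol
  have hsum : ∑ a ∈ (Finset.univ : Finset (Fin ω ⊕ Fin ω × Fin ω)), nfun a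
      = ω + ∑ l ∈ Finset.range ω, l * b (ω - l + 1) := by
    rw [Fintype.sum_sum_type]
    congr 1
    · simp [hnfun]
    · have hswap : ∑ kl : Fin ω × Fin ω, nfun (Sum.inr kl)
          = ∑ l : Fin ω, ∑ k : Fin ω, nfun (Sum.inr (k, l)) := by
        rw [Fintype.sum_prod_type]
        exact Finset.sum_comm
      rw [hswap]
      have hinner : ∀ l : Fin ω, ∑ k : Fin ω, nfun (Sum.inr (k, l))
          = l.val * b (ω - l.val + 1) := by
        intro l
        have hite : ∀ k : Fin ω, nfun (Sum.inr (k, l))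
            = if k < l then b (ω - l.val + 1) else 0 := by
          intro k; simp [hnfun]
        rw [Finset.sum_congr rfl (fun k _ => hite k), ← Finset.sum_filter]
        have hfilt : Finset.univ.filter (fun k : Fin ω => k < l) = Finset.Iio l := by
          ext m; simp
        rw [hfilt, Finset.sum_const, Fin.card_Iio, smul_eq_mul]
      rw [Finset.sum_congr rfl (fun l _ => hinner l)]
      exact Fin.sum_univ_eq_sum_range (fun l => l * b (ω - l + 1)) ω
  rw [hsum] at hmain
  exact hmain

lemma aux_free_zero {V : Type} {G : SimpleGraph V} {Wi : Type} {Hi : SimpleGraph Wi}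
    (h : IsEmpty ((pK2 0 ⊕g Hi) ↪g G)) : IsEmpty (Hi ↪g G) := by
  constructor
  intro f
  apply h.false
  refine ⟨⟨Sum.elim (fun a => (Fin.elim0 a.1 : V)) f, ?_⟩, ?_⟩
  · intro z z' h
    match z, z' with
    | Sum.inl a, _ => exact Fin.elim0 a.1
    | Sum.inr w, Sum.inl a' => exact Fin.elim0 a'.1
    | Sum.inr w, Sum.inr w' => exact congrArg Sum.inr (f.injective h)
  · intro z z'
    match z, z' with
    | Sum.inl a, _ => exact Fin.elim0 a.1
    | Sum.inr w, Sum.inl a' => exact Fin.elim0 a'.1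
    | Sum.inr w, Sum.inr w' => exact f.map_rel_iff

open Classical in
lemma aux_step_free {V : Type} {G : SimpleGraph V} {q : ℕ} {Wi : Type} {Hi : SimpleGraph Wi}
    (S : Set V) (x y : V) (hxy : G.Adj x y)
    (havoid : ∀ v ∈ S, ¬G.Adj x v ∧ ¬G.Adj y v)
    (hfree : IsEmpty ((pK2 (q+1) ⊕g Hi) ↪g G)) :
    IsEmpty ((pK2 q ⊕g Hi) ↪g (G.induce S)) := by
  constructor
  intro f
  apply hfree.false
  have hxS : x ∉ S := fun h => (havoid x h).2 hxy.symm
  have hyS : y ∉ S := fun h => (havoid y h).1 hxy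
  have hfS : ∀ z, ((f z : ↥S) : V) ∈ S := fun z => (f z).2
  have hfx : ∀ z, ((f z : ↥S) : V) ≠ x := fun z h => hxS (h ▸ hfS z)
  have hfy : ∀ z, ((f z : ↥S) : V) ≠ y := fun z h => hyS (h ▸ hfS z)
  have hfinj : ∀ z z', ((f z : ↥S) : V) = ((f z' : ↥S) : V) → z = z' :=
    fun z z' h => f.injective (Subtype.coe_injective h)
  have hnx : ∀ z, ¬ G.Adj x ((f z : ↥S) : V) := fun z => (havoid _ (hfS z)).1
  have hny : ∀ z, ¬ G.Adj y ((f z : ↥S) : V) := fun z => (havoid _ (hfS z)).2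
  have hadj_iff : ∀ z z', G.Adj ((f z : ↥S) : V) ((f z' : ↥S) : V) ↔ (pK2 q ⊕g Hi).Adj z z' :=
    fun z z' => f.map_rel_iff
  set F : (Fin (q+1) × Fin 2) ⊕ Wi → V := fun z =>
    match z with
    | Sum.inl (m, t) =>
        if hm : (m : ℕ) < q then ((f (Sum.inl (⟨m, hm⟩, t)) : ↥S) : V)
        else (if t = 0 then x else y)
    | Sum.inr w => ((f (Sum.inr w) : ↥S) : V)
    with hFdef
  have hxy' : x ≠ y := G.ne_of_adj hxy
  have ht01 : ∀ t : Fin 2, t = 0 ∨ t = 1 := by decide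
  refine ⟨⟨F, ?_⟩, ?_⟩
  · rintro (⟨m, t⟩ | w) (⟨m', t'⟩ | w') h
    · simp only [hFdef] at h
      by_cases hm : (m : ℕ) < q <;> by_cases hm' : (m' : ℕ) < q <;>
        simp only [hm, hm', dif_pos, dif_neg, not_false_iff] at h
      · have h1 := hfinj _ _ h
        have h2 := Sum.inl.inj h1
        have h3 : (⟨(m : ℕ), hm⟩ : Fin q) = ⟨(m' : ℕ), hm'⟩ := congrArg Prod.fst h2
        have h4 : t = t' := congrArg Prod.snd h2
        have hmm := congrArg Fin.val h3
        exact congrArg Sum.inl (Prod.ext (Fin.ext hmm) h4)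
      · rcases ht01 t' with rfl | rfl
        · rw [if_pos rfl] at h
          exact absurd h (hfx _)
        · rw [if_neg (by decide)] at h
          exact absurd h (hfy _)
      · rcases ht01 t with rfl | rfl
        · rw [if_pos rfl] at h
          exact absurd h.symm (hfx _)
        · rw [if_neg (by decide)] at h
          exact absurd h.symm (hfy _)
      · have hmq : (m : ℕ) = q := by omega
        have hmq' : (m' : ℕ) = q := by omega
        have hmm' : m = m' := Fin.ext (by rw [hmq, hmq'])
        rcases ht01 t with rfl | rfl <;> rcases ht01 t' with rfl | rfl
        · exact congrArg Sum.inl (Prod.ext hmm' rfl)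
        · rw [if_pos rfl, if_neg (by decide)] at h
          exact absurd h hxy'
        · rw [if_neg (by decide), if_pos rfl] at h
          exact absurd h.symm hxy'
        · exact congrArg Sum.inl (Prod.ext hmm' rfl)
    · simp only [hFdef] at h
      by_cases hm : (m : ℕ) < q <;>
        simp only [hm, dif_pos, dif_neg, not_false_iff] at h
      · exact absurd (hfinj _ _ h) (by simp)
      · rcases ht01 t with rfl | rfl
        · rw [if_pos rfl] at h
          exact absurd h.symm (hfx _)
        · rw [if_neg (by decide)] at h
          exact absurd h.symm (hfy _)
    · simp only [hFdef] at h
      by_cases hm' : (m' : ℕ) < q <;>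
        simp only [hm', dif_pos, dif_neg, not_false_iff] at h
      · exact absurd (hfinj _ _ h) (by simp)
      · rcases ht01 t' with rfl | rfl
        · rw [if_pos rfl] at h
          exact absurd h (hfx _)
        · rw [if_neg (by decide)] at h
          exact absurd h (hfy _)
    · exact congrArg Sum.inr (Sum.inr.inj (hfinj _ _ h))
  · rintro (⟨m, t⟩ | w) (⟨m', t'⟩ | w')
    · rw [SimpleGraph.sum_adj_inl]
      show G.Adj (F (Sum.inl (m, t))) (F (Sum.inl (m', t'))) ↔ (m = m' ∧ t ≠ t')
      simp only [hFdef]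
      by_cases hm : (m : ℕ) < q <;> by_cases hm' : (m' : ℕ) < q <;>
        simp only [hm, hm', dif_pos, dif_neg, not_false_iff]
      · rw [hadj_iff]
        show ((⟨(m : ℕ), hm⟩ : Fin q) = ⟨(m' : ℕ), hm'⟩ ∧ t ≠ t') ↔ (m = m' ∧ t ≠ t')
        simp [Fin.ext_iff]
      · have hfalse : ¬ (m = m' ∧ t ≠ t') := by
          rintro ⟨rfl, -⟩
          exact hm' hm
        refine iff_of_false ?_ hfalse
        split_ifs
        · exact fun h => hnx _ h.symm
        · exact fun h => hny _ h.symm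
      · have hfalse : ¬ (m = m' ∧ t ≠ t') := by
          rintro ⟨rfl, -⟩
          exact hm hm'
        refine iff_of_false ?_ hfalse
        split_ifs
        · exact fun h => hnx _ h
        · exact fun h => hny _ h
      · have hmm' : m = m' := Fin.ext (by omega)
        split_ifs with h1 h2 h2
        · refine iff_of_false (G.loopless.irrefl x) ?_
          rintro ⟨-, hne2⟩
          exact hne2 (h1.trans h2.symm)
        · refine iff_of_true hxy ⟨hmm', ?_⟩
          intro hh
          rw [← hh] at h2
          exact h2 h1
        · refine iff_of_true hxy.symm ⟨hmm', ?_⟩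
          intro hh
          rw [hh] at h1
          exact h1 h2
        · have ht1 : t = 1 := by
            rcases ht01 t with rfl | rfl
            · exact absurd rfl h1
            · rfl
          have ht'1 : t' = 1 := by
            rcases ht01 t' with rfl | rfl
            · exact absurd rfl h2
            · rfl
          refine iff_of_false (G.loopless.irrefl y) ?_
          rintro ⟨-, hne2⟩
          exact hne2 (ht1.trans ht'1.symm)
    · refine iff_of_false ?_ (by simp)
      show ¬ G.Adj (F (Sum.inl (m, t))) (F (Sum.inr w'))
      simp only [hFdef]
      by_cases hm : (m : ℕ) < q <;>
        simp only [hm, dif_pos, dif_neg, not_false_iff]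
      · intro h
        have h2 := (hadj_iff _ _).mp h
        simp at h2
      · split_ifs
        · exact fun h => hnx _ h
        · exact fun h => hny _ h
    · refine iff_of_false ?_ (by simp)
      show ¬ G.Adj (F (Sum.inr w)) (F (Sum.inl (m', t')))
      simp only [hFdef]
      by_cases hm' : (m' : ℕ) < q <;>
        simp only [hm', dif_pos, dif_neg, not_false_iff]
      · intro h
        have h2 := (hadj_iff _ _).mp h
        simp at h2
      · split_ifs
        · exact fun h => hnx _ h.symm
        · exact fun h => hny _ h.symm
    · exact (hadj_iff (Sum.inr w) (Sum.inr w')).trans (by simp)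

def auxFb (c : ℕ) : ℕ → ℕ → ℕ
  | 0, _ => c
  | (q+1), w => Nat.choose (w + 2*q) (2*q+1) + c * Nat.choose (w + 2*q) (2*q+2)

lemma auxFb_mono (c q : ℕ) : Monotone (auxFb c q) := by
  cases q with
  | zero => intro a b _; simp [auxFb]
  | succ q =>
    intro a b hab
    simp only [auxFb]
    exact Nat.add_le_add (Nat.choose_le_choose _ (by omega))
      (Nat.mul_le_mul_left _ (Nat.choose_le_choose _ (by omega)))

lemma aux_main {ι : Type} (W : ι → Type) [∀ i, Fintype (W i)] (H : ∀ i, SimpleGraph (W i))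
    (c : ℕ) (hc : 1 ≤ c)
    (hf1 : ∀ (V : Type) [Fintype V] (G : SimpleGraph V),
      (∀ i, IsEmpty (H i ↪g G)) → G.cliqueNum = 1 → G.chromaticNumber ≤ (1 : ℕ∞))
    (hfc : ∀ (V : Type) [Fintype V] (G : SimpleGraph V),
      (∀ i, IsEmpty (H i ↪g G)) → 1 < G.cliqueNum → G.chromaticNumber ≤ (c : ℕ∞)) :
    ∀ (q : ℕ) (V : Type) [Fintype V] (G : SimpleGraph V),
      (∀ i, IsEmpty ((pK2 q ⊕g H i) ↪g G)) → G.Colorable (auxFb c q G.cliqueNum) := by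
  intro q
  induction q with
  | zero =>
    intro V _ G hfree
    have hH : ∀ i, IsEmpty (H i ↪g G) := fun i => aux_free_zero (hfree i)
    show G.Colorable c
    rcases Nat.lt_or_ge 1 G.cliqueNum with h | h
    · exact SimpleGraph.chromaticNumber_le_iff_colorable.mp (hfc V G hH h)
    · by_cases hV : IsEmpty V
      · exact SimpleGraph.Colorable.mono (Nat.zero_le _)
          ⟨SimpleGraph.Coloring.mk (fun v => isEmptyElim v) (fun {v} => isEmptyElim v)⟩
      · have hne : Nonempty V := not_isEmpty_iff.mp hV
        have h1 : 1 ≤ G.cliqueNum := by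
          have := aux_card_le_cliqueNum' (G := G) ({Classical.arbitrary V} : Finset V) (by simp)
          simpa using this
        have heq : G.cliqueNum = 1 := le_antisymm h h1
        have hh := hf1 V G hH heq
        rw [← Nat.cast_one] at hh
        exact (SimpleGraph.chromaticNumber_le_iff_colorable.mp hh).mono hc
  | succ q ih =>
    intro V _ G hfree
    classical
    have hdec := aux_decomp G (auxFb c q)
      (fun S x y hxy havoid => ih ↥S (G.induce S)
        (fun i => aux_step_free S x y hxy havoid (hfree i)))
      (auxFb_mono c q)
    refine hdec.mono (le_of_eq ?_)
    set ω := G.cliqueNum with hω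
    have hreflect : ∑ l ∈ Finset.range ω, l * auxFb c q (ω - l + 1)
        = ∑ l ∈ Finset.range ω, (ω - 1 - l) * auxFb c q (l + 2) := by
      rw [← Finset.sum_range_reflect (fun l => (ω - 1 - l) * auxFb c q (l + 2)) ω]
      refine Finset.sum_congr rfl ?_
      intro j hj
      rw [Finset.mem_range] at hj
      have h1 : ω - 1 - (ω - 1 - j) = j := by omega
      have h2 : ω - 1 - j + 2 = ω - j + 1 := by omega
      rw [h1, h2]
    rw [hreflect]
    cases q with
    | zero =>
      have hA := aux_A0 c ω
      have hsum2 : ∑ l ∈ Finset.range ω, (ω - 1 - l) * auxFb c 0 (l + 2)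
          = ∑ l ∈ Finset.range ω, (ω - 1 - l) * c := rfl
      have hR : auxFb c 1 ω = Nat.choose ω 1 + c * Nat.choose ω 2 := by
        simp [auxFb]
      rw [hsum2, hR]
      exact hA
    | succ Q =>
      have hA := aux_A1 c Q ω
      have hsum2 : ∑ l ∈ Finset.range ω, (ω - 1 - l) * auxFb c (Q+1) (l + 2)
          = ∑ l ∈ Finset.range ω, (ω - 1 - l) *
            (Nat.choose (l+(2*Q+2)) (2*Q+1) + c * Nat.choose (l+(2*Q+2)) (2*Q+2)) := by
        refine Finset.sum_congr rfl ?_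
        intro l _
        have h1 : l + 2 + 2*Q = l + (2*Q+2) := by omega
        simp only [auxFb, h1]
      have hR : auxFb c (Q+1+1) ω
          = Nat.choose (ω+2*Q+2) (2*Q+3) + c * Nat.choose (ω+2*Q+2) (2*Q+4) := by
        simp only [auxFb]
        have h1 : ω + 2*(Q+1) = ω + 2*Q+2 := by omega
        have h2 : 2*(Q+1)+1 = 2*Q+3 := by omega
        have h3 : 2*(Q+1)+2 = 2*Q+4 := by omega
        rw [h1, h2, h3]
      rw [hsum2, hR]
      exact hA


end AuxStmt3

theorem stmt_3 (p : ℕ) (hp : 1 ≤ p) (c : ℕ) (hc : 1 ≤ c)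
    {ι : Type} (W : ι → Type) [∀ i, Fintype (W i)] (H : ∀ i, SimpleGraph (W i))
    (hf1 : ∀ (V : Type) [Fintype V] (G : SimpleGraph V),
      (∀ i, IsEmpty (H i ↪g G)) → G.cliqueNum = 1 → G.chromaticNumber ≤ (1 : ℕ∞))
    (hfc : ∀ (V : Type) [Fintype V] (G : SimpleGraph V),
      (∀ i, IsEmpty (H i ↪g G)) → 1 < G.cliqueNum → G.chromaticNumber ≤ (c : ℕ∞))
    (V : Type) [Fintype V] (G : SimpleGraph V)
    (hG : ∀ i, IsEmpty ((pK2 p ⊕g H i) ↪g G)) :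
    G.chromaticNumber ≤
      ((Nat.choose (G.cliqueNum + 2 * p - 2) (2 * p - 1) +
        c * Nat.choose (G.cliqueNum + 2 * p - 2) (2 * p) : ℕ) : ℕ∞) := by
  obtain ⟨q, rfl⟩ : ∃ q, p = q + 1 := ⟨p - 1, by omega⟩
  have hcol := aux_main W H c hc hf1 hfc (q+1) V G hG
  rw [SimpleGraph.chromaticNumber_le_iff_colorable]
  have hE : Nat.choose (G.cliqueNum + 2 * (q+1) - 2) (2 * (q+1) - 1) +
      c * Nat.choose (G.cliqueNum + 2 * (q+1) - 2) (2 * (q+1)) = auxFb c (q+1) G.cliqueNum := by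
    simp only [auxFb]
    have h1 : G.cliqueNum + 2*(q+1) - 2 = G.cliqueNum + 2*q := by omega
    have h2 : 2*(q+1) - 1 = 2*q+1 := by omega
    have h3 : 2*(q+1) = 2*q+2 := by omega
    rw [h1, h2, h3]
  rw [hE]
  exact hcol
end

section
/- Let n ≥ 2 and p ≥ 1 be integers. If a graph G has no induced subgraph isomorphic to pK₂ ∪ B for any graph B on n vertices having a vertex of degree n−1 (i.e., a vertex adjacent to all other vertices of B), then χ(G) ≤ C(ω(G)+2p−2, 2p−1) + (n−1)·C(ω(G)+2p−2, 2p), where C(a,b) denotes the binomial coefficient. -/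
open SimpleGraph

namespace Stmt4

open Finset
def FF (n q k : ℕ) : ℕ := (k + 2*q).choose (2*q+1) + (n-1) * (k + 2*q).choose (2*q+2)

lemma FF_mono (n q : ℕ) {k k' : ℕ} (h : k ≤ k') : FF n q k ≤ FF n q k' := by
  unfold FF
  gcongr <;> exact Nat.choose_le_choose _ (by omega)

lemma hockeyA (k r : ℕ) : 1 + ∑ s ∈ range k, (s + r + 1).choose r = (k + r + 1).choose (r+1) := by
  induction k with
  | zero => simp
  | succ k ih =>
    rw [Finset.sum_range_succ, ← add_assoc, ih]
    have : k + 1 + r + 1 = (k + r + 1) + 1 := by ring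
    rw [this, Nat.choose_succ_succ' (k+r+1) r]
    ring

lemma hockeyB (k r : ℕ) : ∑ s ∈ range k, (s + r + 1).choose (r+1) = (k + r + 1).choose (r+2) := by
  induction k with
  | zero => simp [Nat.choose_eq_zero_of_lt]
  | succ k ih =>
    rw [Finset.sum_range_succ, ih]
    have : k + 1 + r + 1 = (k + r + 1) + 1 := by ring
    rw [this, Nat.choose_succ_succ' (k+r+1) (r+1)]
    ring

lemma gauss (k : ℕ) : ∑ s ∈ range k, s = k.choose 2 := by
  have h1 := Finset.sum_range_id_mul_two k
  have h2 : k.choose 2 = k * (k-1) / 2 := Nat.choose_two_right k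
  omega

lemma idA (n k : ℕ) : k + (∑ t ∈ range k, t * (n-1)) = FF n 0 k := by
  rw [← Finset.sum_mul, gauss]
  simp [FF, mul_comm]

lemma idB' (n q : ℕ) : ∀ k, k + ∑ s ∈ range k, (k-1-s) * FF n q (s+2) = FF n (q+1) k := by
  intro k
  induction k with
  | zero => simp [FF, Nat.choose_eq_zero_of_lt]
  | succ k ih =>
    rw [Finset.sum_range_succ]
    have hlast : (k+1-1-k) * FF n q (k+2) = 0 := by simp
    rw [hlast, add_zero]
    have hsplit : ∑ s ∈ range k, (k+1-1-s) * FF n q (s+2)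
        = (∑ s ∈ range k, (k-1-s) * FF n q (s+2)) + ∑ s ∈ range k, FF n q (s+2) := by
      rw [← Finset.sum_add_distrib]
      refine Finset.sum_congr rfl fun s hs => ?_
      have : s < k := Finset.mem_range.mp hs
      have : k+1-1-s = (k-1-s) + 1 := by omega
      rw [this, add_mul, one_mul]
    rw [hsplit]
    have key : 1 + ∑ s ∈ range k, FF n q (s+2) =
        (k + 2*q + 2).choose (2*q+2) + (n-1) * (k + 2*q + 2).choose (2*q+3) := by
      unfold FF
      rw [Finset.sum_add_distrib, ← Finset.mul_sum]
      have hA := hockeyA k (2*q+1)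
      have hB := hockeyB k (2*q+1)
      simp only [show ∀ s:ℕ, s+(2*q+1)+1 = s+2*q+2 from fun s => by ring,
        show (2*q+1)+1 = 2*q+2 from by ring,
        show (2*q+1)+2 = 2*q+3 from by ring] at hA hB
      simp only [show ∀ s:ℕ, s+2+2*q = s+2*q+2 from fun s => by ring]
      rw [hB]
      omega
    have goal2 : FF n (q+1) (k+1) = FF n (q+1) k +
        ((k + 2*q + 2).choose (2*q+2) + (n-1) * (k + 2*q + 2).choose (2*q+3)) := by
      have hP1 := Nat.choose_succ_succ' (k+2*q+2) (2*q+2)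
      have hP2 := Nat.choose_succ_succ' (k+2*q+2) (2*q+3)
      simp only [FF, show k+1+2*(q+1) = k+2*q+2+1 from by ring,
        show k+2*(q+1) = k+2*q+2 from by ring,
        show 2*(q+1)+1 = 2*q+2+1 from by ring,
        show 2*(q+1)+2 = 2*q+3+1 from by ring] at *
      rw [hP1, hP2]
      ring
    omega

lemma idB (n q k : ℕ) : k + ∑ t ∈ range k, t * FF n q (k+1-t) = FF n (q+1) k := by
  rw [← Finset.sum_range_reflect (fun t => t * FF n q (k+1-t)) k]
  rw [← idB' n q k]
  congr 1
  refine Finset.sum_congr rfl fun s hs => ?_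
  have hsk : s < k := Finset.mem_range.mp hs
  have h1 : k + 1 - (k - 1 - s) = s + 2 := by omega
  rw [h1]


lemma greedy_aux (d : ℕ) : ∀ (N : ℕ) (V : Type) [Fintype V] (G : SimpleGraph V),
    Fintype.card V ≤ N → (∀ v : V, (G.neighborSet v).ncard ≤ d) → G.Colorable (d+1) := by
  intro N
  induction N with
  | zero =>
    intro V _ G hcard _
    have : IsEmpty V := Fintype.card_eq_zero_iff.mp (Nat.le_zero.mp hcard)
    exact SimpleGraph.Colorable.of_isEmpty (G := G) _
  | succ N ih =>
    intro V _ G hcard hdeg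
    classical
    by_cases hV : Nonempty V
    · obtain ⟨v⟩ := hV
      set S : Set V := {u | u ≠ v} with hS
      have hcard' : Fintype.card ↥S ≤ N := by
        have hlt : Fintype.card ↥S < Fintype.card V := by
          have h1 : Fintype.card ↥S = Fintype.card {u // u ≠ v} :=
            Fintype.card_congr (Equiv.subtypeEquivRight (fun u => by simp [hS]))
          rw [h1]
          exact Fintype.card_subtype_lt (x := v) (by simp)
        omega
      have hdeg' : ∀ u : ↥S, ((G.induce S).neighborSet u).ncard ≤ d := by
        intro u
        have hsub : Subtype.val '' ((G.induce S).neighborSet u) ⊆ G.neighborSet u.val := by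
          rintro _ ⟨w, hw, rfl⟩
          exact hw
        calc ((G.induce S).neighborSet u).ncard
            = (Subtype.val '' ((G.induce S).neighborSet u)).ncard :=
              (Set.ncard_image_of_injective _ Subtype.val_injective).symm
          _ ≤ (G.neighborSet u.val).ncard := Set.ncard_le_ncard hsub (Set.toFinite _)
          _ ≤ d := hdeg _
      obtain ⟨C⟩ := ih ↥S (G.induce S) hcard' hdeg'
      set aux : V → Fin (d+1) := fun u => if h : u ∈ S then C ⟨u, h⟩ else 0 with haux
      set used : Finset (Fin (d+1)) := (G.neighborFinset v).image aux with hused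
      have husedcard : used.card < Fintype.card (Fin (d+1)) := by
        have h1 : used.card ≤ (G.neighborFinset v).card := Finset.card_image_le
        have h2 : (G.neighborFinset v).card = (G.neighborSet v).ncard := by
          rw [← Nat.card_coe_set_eq, Nat.card_eq_fintype_card,
            SimpleGraph.card_neighborSet_eq_degree]
          rfl
        have := hdeg v
        simp only [Fintype.card_fin]
        omega
      have hne : used ≠ Finset.univ := by
        intro h
        rw [h, Finset.card_univ] at husedcard
        omega
      have hcompl : 0 < usedᶜ.card := by
        rw [Finset.card_compl]
        omega
      obtain ⟨c₀, hc₀mem⟩ := Finset.card_pos.mp hcompl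
      have hc₀ : c₀ ∉ used := Finset.mem_compl.mp hc₀mem
      refine ⟨SimpleGraph.Coloring.mk (fun u => if h : u ∈ S then C ⟨u, h⟩ else c₀) ?_⟩
      intro a b hadj heq
      by_cases ha : a ∈ S <;> by_cases hb : b ∈ S
      · simp only [dif_pos ha, dif_pos hb] at heq
        exact C.valid (by exact hadj) heq
      · have hbv : b = v := by simpa [hS] using hb
        simp only [dif_pos ha, dif_neg hb] at heq
        apply hc₀
        rw [hused]
        refine Finset.mem_image.mpr ⟨a, ?_, ?_⟩
        · rw [SimpleGraph.mem_neighborFinset]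
          exact hbv ▸ hadj.symm
        · rw [haux]
          simp only [dif_pos ha]
          exact heq
      · have hav : a = v := by simpa [hS] using ha
        simp only [dif_neg ha, dif_pos hb] at heq
        apply hc₀
        rw [hused]
        refine Finset.mem_image.mpr ⟨b, ?_, ?_⟩
        · rw [SimpleGraph.mem_neighborFinset]
          exact hav ▸ hadj
        · rw [haux]
          simp only [dif_pos hb]
          exact heq.symm
      · have ha' : a = v := by simpa [hS] using ha
        have hb' : b = v := by simpa [hS] using hb
        exact hadj.ne (ha'.trans hb'.symm)
    · have : IsEmpty V := not_nonempty_iff.mp hV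
      exact SimpleGraph.Colorable.of_isEmpty (G := G) _

def Out {V : Type} (G : SimpleGraph V) {p : ℕ} (m : Fin p → V × V) (v : V) : Prop :=
  ∀ i, v ≠ (m i).1 ∧ v ≠ (m i).2 ∧ ¬ G.Adj v (m i).1 ∧ ¬ G.Adj v (m i).2

def IndM {V : Type} (G : SimpleGraph V) {p : ℕ} (m : Fin p → V × V) : Prop :=
  (∀ i, G.Adj (m i).1 (m i).2) ∧
  ∀ i j, i ≠ j →
    ((m i).1 ≠ (m j).1 ∧ (m i).1 ≠ (m j).2 ∧ (m i).2 ≠ (m j).1 ∧ (m i).2 ≠ (m j).2) ∧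
    (¬G.Adj (m i).1 (m j).1 ∧ ¬G.Adj (m i).1 (m j).2 ∧
     ¬G.Adj (m i).2 (m j).1 ∧ ¬G.Adj (m i).2 (m j).2)

def StarP (n p : ℕ) {V : Type} (G : SimpleGraph V) : Prop :=
  ∀ (m : Fin p → V × V), IndM G m → ∀ v : V, Out G m v →
    ∀ s : Finset V, v ∉ s → (∀ w ∈ s, G.Adj v w ∧ Out G m w) → s.card ≤ n - 2

lemma star_of_hG {n p : ℕ} (hn : 2 ≤ n) {V : Type} [Fintype V] (G : SimpleGraph V)
    (hG : ∀ (W : Type) [Fintype W] (B : SimpleGraph W), Fintype.card W = n →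
      (∃ v : W, ∀ w : W, w ≠ v → B.Adj v w) → IsEmpty ((pK2 p ⊕g B) ↪g G)) :
    StarP n p G := by
  classical
  intro m hm v hv s hvs hs
  by_contra hcard
  push_neg at hcard
  obtain ⟨t, hts, htcard⟩ := Finset.exists_subset_card_eq (show n - 1 ≤ s.card by omega)
  have hvt : v ∉ t := fun h => hvs (hts h)
  set u : Finset V := insert v t with hu
  have hucard : u.card = n := by
    rw [hu, Finset.card_insert_of_notMem hvt]; omega
  have humem : ∀ x ∈ u, Out G m x := by
    intro x hx
    rcases Finset.mem_insert.mp hx with rfl | hx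
    · exact hv
    · exact (hs x (hts hx)).2
  set W := {x // x ∈ u} with hW
  set B : SimpleGraph W := G.comap (⟨Subtype.val, Subtype.val_injective⟩ : W ↪ V) with hB
  have hWcard : Fintype.card W = n := by
    have : Fintype.card W = u.card := Fintype.card_coe u
    omega
  have hdom : ∃ v₀ : W, ∀ w : W, w ≠ v₀ → B.Adj v₀ w := by
    refine ⟨⟨v, Finset.mem_insert_self _ _⟩, ?_⟩
    intro w hw
    have hwv : (w : V) ≠ v := fun h => hw (Subtype.ext h)
    have hwt : (w : V) ∈ t := by
      rcases Finset.mem_insert.mp w.2 with h | h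
      · exact absurd h hwv
      · exact h
    exact (hs w (hts hwt)).1
  set φ : Fin p × Fin 2 → V := fun a => if a.2 = 0 then (m a.1).1 else (m a.1).2 with hφ
  have fin2 : ∀ c : Fin 2, c = 0 ∨ c = 1 := by decide
  have hφ0 : ∀ c : Fin p × Fin 2, c.2 = 0 → φ c = (m c.1).1 := fun c h => by simp [hφ, h]
  have hφ1 : ∀ c : Fin p × Fin 2, c.2 = 1 → φ c = (m c.1).2 := fun c h => by simp [hφ, h]
  have hout : ∀ x, Out G m x → ∀ a, x ≠ φ a ∧ ¬G.Adj x (φ a) := by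
    intro x hx a
    rcases fin2 a.2 with h | h
    · rw [hφ0 a h]; exact ⟨(hx a.1).1, (hx a.1).2.2.1⟩
    · rw [hφ1 a h]; exact ⟨(hx a.1).2.1, (hx a.1).2.2.2⟩
  have hφadj : ∀ a b : Fin p × Fin 2, G.Adj (φ a) (φ b) ↔ (a.1 = b.1 ∧ a.2 ≠ b.2) := by
    intro a b
    constructor
    · intro hadj
      by_cases h1 : a.1 = b.1
      · refine ⟨h1, fun h2 => ?_⟩
        have : φ a = φ b := by
          rcases fin2 a.2 with h | h
          · rw [hφ0 a h, hφ0 b (h2 ▸ h), h1]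
          · rw [hφ1 a h, hφ1 b (h2 ▸ h), h1]
        exact G.irrefl (this ▸ hadj)
      · exfalso
        obtain ⟨hc1, hc2, hc3, hc4⟩ := (hm.2 a.1 b.1 h1).2
        rcases fin2 a.2 with ha | ha <;> rcases fin2 b.2 with hb | hb
        · rw [hφ0 a ha, hφ0 b hb] at hadj; exact hc1 hadj
        · rw [hφ0 a ha, hφ1 b hb] at hadj; exact hc2 hadj
        · rw [hφ1 a ha, hφ0 b hb] at hadj; exact hc3 hadj
        · rw [hφ1 a ha, hφ1 b hb] at hadj; exact hc4 hadj
    · rintro ⟨h1, h2⟩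
      rcases fin2 a.2 with ha | ha <;> rcases fin2 b.2 with hb | hb
      · exact absurd (ha.trans hb.symm) h2
      · rw [hφ0 a ha, hφ1 b hb, h1]; exact hm.1 b.1
      · rw [hφ1 a ha, hφ0 b hb, h1]; exact (hm.1 b.1).symm
      · exact absurd (ha.trans hb.symm) h2
  have hφout : ∀ (a : Fin p × Fin 2) (w : W), φ a ≠ (w : V) ∧ ¬G.Adj (φ a) (w : V) := by
    intro a w
    have h := hout (w : V) (humem _ w.2) a
    exact ⟨fun h' => h.1 h'.symm, fun h' => h.2 h'.symm⟩
  set f : (Fin p × Fin 2) ⊕ W → V := Sum.elim φ Subtype.val with hf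
  have hinj : Function.Injective f := by
    rintro (a | w) (b | w') hab
    · simp only [hf, Sum.elim_inl] at hab
      by_cases h1 : a.1 = b.1
      · by_cases h2 : a.2 = b.2
        · exact congrArg Sum.inl (Prod.ext h1 h2)
        · exfalso
          rcases fin2 a.2 with ha | ha <;> rcases fin2 b.2 with hb | hb
          · exact h2 (ha.trans hb.symm)
          · rw [hφ0 a ha, hφ1 b hb, h1] at hab; exact (hm.1 b.1).ne hab
          · rw [hφ1 a ha, hφ0 b hb, h1] at hab; exact (hm.1 b.1).ne hab.symm
          · exact h2 (ha.trans hb.symm)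
      · exfalso
        obtain ⟨hc1, hc2, hc3, hc4⟩ := (hm.2 a.1 b.1 h1).1
        rcases fin2 a.2 with ha | ha <;> rcases fin2 b.2 with hb | hb
        · rw [hφ0 a ha, hφ0 b hb] at hab; exact hc1 hab
        · rw [hφ0 a ha, hφ1 b hb] at hab; exact hc2 hab
        · rw [hφ1 a ha, hφ0 b hb] at hab; exact hc3 hab
        · rw [hφ1 a ha, hφ1 b hb] at hab; exact hc4 hab
    · exact absurd hab (hφout a w').1
    · exact absurd hab.symm (hφout b w).1
    · exact congrArg Sum.inr (Subtype.ext hab)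
  have E : (pK2 p ⊕g B) ↪g G := by
    refine ⟨⟨f, hinj⟩, ?_⟩
    rintro (a | w) (b | w')
    · exact (hφadj a b).trans (by simp [pK2])
    · exact iff_of_false (hφout a w').2 (by simp)
    · exact iff_of_false (fun h => (hφout b w).2 h.symm) (by simp)
    · exact Iff.rfl
  exact (hG W B hWcard hdom).false E

lemma star_anti {n p : ℕ} {V : Type} (G : SimpleGraph V) (h : StarP n (p+1) G)
    (x y : V) (hxy : G.Adj x y) (S : Set V)
    (hS : ∀ u ∈ S, ¬G.Adj u x ∧ ¬G.Adj u y ∧ u ≠ x ∧ u ≠ y) :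
    StarP n p (G.induce S) := by
  classical
  intro m' hm' v' hv' s' hvs' hs'
  set m : Fin (p+1) → V × V :=
    Fin.snoc (fun i => (((m' i).1 : V), ((m' i).2 : V))) (x, y) with hmdef
  have hmc : ∀ i : Fin p, m i.castSucc = (((m' i).1 : V), ((m' i).2 : V)) := by
    intro i; simp [hmdef]
  have hml : m (Fin.last p) = (x, y) := by simp [hmdef]
  have outlift : ∀ (z : ↥S), Out (G.induce S) m' z → Out G m (z : V) := by
    intro z hz i
    refine Fin.lastCases ?_ ?_ i
    · rw [hml]
      obtain ⟨h1, h2, h3, h4⟩ := hS (z : V) z.2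
      exact ⟨h3, h4, h1, h2⟩
    · intro j
      rw [hmc j]
      obtain ⟨h1, h2, h3, h4⟩ := hz j
      exact ⟨fun hh => h1 (Subtype.ext hh), fun hh => h2 (Subtype.ext hh), h3, h4⟩
  have hm : IndM G m := by
    constructor
    · intro i
      refine Fin.lastCases ?_ ?_ i
      · rw [hml]; exact hxy
      · intro j; rw [hmc j]; exact hm'.1 j
    · intro i j hij
      induction i using Fin.lastCases with
      | last =>
        induction j using Fin.lastCases with
        | last => exact absurd rfl hij
        | cast j' =>
          rw [hml, hmc j']
          obtain ⟨h1, h2, h3, h4⟩ := hS _ (m' j').1.2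
          obtain ⟨h1', h2', h3', h4'⟩ := hS _ (m' j').2.2
          exact ⟨⟨fun hh => h3 hh.symm, fun hh => h3' hh.symm, fun hh => h4 hh.symm,
            fun hh => h4' hh.symm⟩, ⟨fun hh => h1 hh.symm, fun hh => h1' hh.symm,
            fun hh => h2 hh.symm, fun hh => h2' hh.symm⟩⟩
      | cast i' =>
        induction j using Fin.lastCases with
        | last =>
          rw [hml, hmc i']
          obtain ⟨h1, h2, h3, h4⟩ := hS _ (m' i').1.2
          obtain ⟨h1', h2', h3', h4'⟩ := hS _ (m' i').2.2
          exact ⟨⟨h3, h4, h3', h4'⟩, ⟨h1, h2, h1', h2'⟩⟩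
        | cast j' =>
          have hij' : i' ≠ j' := fun hh => hij (congrArg Fin.castSucc hh)
          rw [hmc i', hmc j']
          obtain ⟨⟨h1, h2, h3, h4⟩, h5, h6, h7, h8⟩ := hm'.2 i' j' hij'
          exact ⟨⟨fun hh => h1 (Subtype.ext hh), fun hh => h2 (Subtype.ext hh),
            fun hh => h3 (Subtype.ext hh), fun hh => h4 (Subtype.ext hh)⟩, h5, h6, h7, h8⟩
  have hvout : Out G m (v' : V) := outlift v' hv'
  set s : Finset V := s'.image Subtype.val with hsdef
  have hvs : (v' : V) ∉ s := by
    intro hh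
    obtain ⟨w, hw, hwv⟩ := Finset.mem_image.mp hh
    exact hvs' ((Subtype.ext hwv : w = v') ▸ hw)
  have hsmem : ∀ w ∈ s, G.Adj (v' : V) w ∧ Out G m w := by
    intro w hw
    obtain ⟨w', hw', rfl⟩ := Finset.mem_image.mp hw
    exact ⟨(hs' w' hw').1, outlift w' (hs' w' hw').2⟩
  have := h m hm (v' : V) hvout s hvs hsmem
  rwa [hsdef, Finset.card_image_of_injective s' Subtype.val_injective] at this


lemma decomp {V : Type} [Fintype V] (G : SimpleGraph V) (c : ℕ → ℕ)
    (hc : ∀ x y : V, G.Adj x y → ∀ S : Set V,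
      (∀ u ∈ S, ¬G.Adj u x ∧ ¬G.Adj u y ∧ u ≠ x ∧ u ≠ y) → ∀ t : ℕ,
      (∀ (a : ℕ) (C : Finset ↥S), (G.induce S).IsNClique a C → a + t ≤ G.cliqueNum + 1) →
      (G.induce S).Colorable (c t)) :
    G.Colorable (G.cliqueNum + ∑ t ∈ Finset.range G.cliqueNum, t * c t) := by
  classical
  set k := G.cliqueNum with hk
  obtain ⟨K, hK⟩ := G.exists_isNClique_cliqueNum
  rw [← hk] at hK
  set e : ↥K ≃ Fin k := Finset.equivFinOfCardEq hK.2 with he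
  set v : Fin k → V := fun i => ((e.symm i : ↥K) : V) with hv
  have hvinj : Function.Injective v := fun i j h => by
    apply e.symm.injective
    exact Subtype.ext h
  have hvK : ∀ i, v i ∈ K := fun i => (e.symm i).2
  have hKv : ∀ x (hx : x ∈ K), v (e ⟨x, hx⟩) = x := fun x hx => by
    simp [hv]
  have hadjK : ∀ i j : Fin k, i ≠ j → G.Adj (v i) (v j) := fun i j hij =>
    hK.1 (hvK i) (hvK j) (fun h => hij (hvinj h))
  -- the pair sets
  set S : Fin k → Fin k → Set V := fun i j =>
    {u | ¬G.Adj u (v i) ∧ ¬G.Adj u (v j) ∧ u ≠ v i ∧ u ≠ v j ∧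
      ∀ l, l < j → l ≠ i → G.Adj u (v l)} with hS
  have hSanti : ∀ i j, ∀ u ∈ S i j, ¬G.Adj u (v i) ∧ ¬G.Adj u (v j) ∧ u ≠ v i ∧ u ≠ v j :=
    fun i j u hu => ⟨hu.1, hu.2.1, hu.2.2.1, hu.2.2.2.1⟩
  -- the clique bound for the pair sets
  have hCB : ∀ (j i : Fin k), i < j → ∀ (a : ℕ) (C : Finset ↥(S i j)),
      (G.induce (S i j)).IsNClique a C → a + j.val ≤ k + 1 := by
    intro j i hij a C hC
    set T : Finset V :=
      (((univ : Finset (Fin j.val))).image (fun l => v ⟨l.val, lt_trans l.2 j.2⟩)).erase (v i)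
      with hT
    have hTmem : ∀ w ∈ T, ∃ l : Fin k, l < j ∧ l ≠ i ∧ v l = w := by
      intro w hw
      obtain ⟨hwne, hwmem⟩ := Finset.mem_erase.mp hw
      obtain ⟨l, _, rfl⟩ := Finset.mem_image.mp hwmem
      refine ⟨⟨l.val, lt_trans l.2 j.2⟩, ?_, ?_, rfl⟩
      · exact l.2
      · exact fun h => hwne (by rw [h])
    have hTcard : T.card = j.val - 1 := by
      rw [hT, Finset.card_erase_of_mem, Finset.card_image_of_injective, Finset.card_univ,
        Fintype.card_fin]
      · intro l l' h
        have h2 := hvinj h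
        have h3 : l.val = l'.val := by simpa using h2
        exact Fin.ext h3
      · refine Finset.mem_image.mpr ⟨⟨i.val, hij⟩, Finset.mem_univ _, rfl⟩
    set C' : Finset V := (C.image Subtype.val) ∪ T with hC'
    have hdisj : Disjoint (C.image Subtype.val) T := by
      rw [Finset.disjoint_left]
      intro w hwC hwT
      obtain ⟨u, _, rfl⟩ := Finset.mem_image.mp hwC
      obtain ⟨l, hl1, hl2, hl3⟩ := hTmem _ hwT
      have := u.2.2.2.2.2 l hl1 hl2
      rw [hl3] at this
      exact G.irrefl this
    have hC'card : C'.card = a + (j.val - 1) := by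
      rw [hC', Finset.card_union_of_disjoint hdisj,
        Finset.card_image_of_injective _ Subtype.val_injective, hC.2, hTcard]
    have hC'clique : G.IsClique C' := by
      intro x hx y hy hxy
      simp only [hC', Finset.coe_union, Set.mem_union, Finset.coe_image, Set.mem_image] at hx hy
      rcases hx with ⟨ux, huxC, rfl⟩ | hx <;> rcases hy with ⟨uy, huyC, rfl⟩ | hy
      · exact hC.1 (by simpa using huxC) (by simpa using huyC)
          (fun h => hxy (congrArg Subtype.val h))
      · obtain ⟨l, hl1, hl2, hl3⟩ := hTmem _ hy
        rw [← hl3]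
        exact ux.2.2.2.2.2 l hl1 hl2
      · obtain ⟨l, hl1, hl2, hl3⟩ := hTmem _ hx
        rw [← hl3]
        exact (uy.2.2.2.2.2 l hl1 hl2).symm
      · obtain ⟨l, hl1, hl2, hl3⟩ := hTmem _ hx
        obtain ⟨l', hl1', hl2', hl3'⟩ := hTmem _ hy
        rw [← hl3, ← hl3']
        exact hadjK l l' (fun h => hxy (by rw [← hl3, ← hl3', h]))
    have hle : C'.card ≤ k := by
      rw [hk]
      exact Finset.card_le_card_of_injOn id (fun x hx => hx) (Set.injOn_id _) |>.trans_eq rfl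
        |>.trans (by exact hC'clique.card_le_cliqueNum)
    have hj1 : 1 ≤ j.val := Nat.one_le_iff_ne_zero.mpr (fun h => by
      have := hij; omega)
    omega
  -- colorings of the pair sets
  have hCpair : ∀ (j : Fin k) (ii : Fin j.val),
      Nonempty ((G.induce (S ⟨ii.val, lt_trans ii.2 j.2⟩ j)).Coloring (Fin (c j.val))) := by
    intro j ii
    set i : Fin k := ⟨ii.val, lt_trans ii.2 j.2⟩ with hi
    have hij : i < j := ii.2
    have hne : i ≠ j := Fin.ne_of_lt hij
    exact hc (v i) (v j) (hadjK i j hne) (S i j) (hSanti i j) j.val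
      (fun a C hC => hCB j i hij a C hC)
  set Cp : ∀ (j : Fin k) (ii : Fin j.val),
      (G.induce (S ⟨ii.val, lt_trans ii.2 j.2⟩ j)).Coloring (Fin (c j.val)) :=
    fun j ii => Classical.choice (hCpair j ii) with hCp
  -- the color type
  set Spec : V → ((Fin k) ⊕ (Σ j : Fin k, Fin j.val × Fin (c j.val))) → Prop := fun u col =>
    (∃ i : Fin k, col = Sum.inl i ∧
      (u = v i ∨ (u ∉ K ∧ ¬G.Adj u (v i) ∧ ∀ l, l ≠ i → G.Adj u (v l))))
    ∨ (∃ (j : Fin k) (ii : Fin j.val) (hu : u ∈ S ⟨ii.val, lt_trans ii.2 j.2⟩ j),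
        col = Sum.inr ⟨j, ii, Cp j ii ⟨u, hu⟩⟩) with hSpec
  have hspec : ∀ u : V, ∃ col, Spec u col := by
    intro u
    by_cases huK : u ∈ K
    · exact ⟨Sum.inl (e ⟨u, huK⟩), Or.inl ⟨e ⟨u, huK⟩, rfl, Or.inl (hKv u huK).symm⟩⟩
    · set NN : Finset (Fin k) := univ.filter (fun i => ¬ G.Adj u (v i)) with hNN
      have hNNne : NN.Nonempty := by
        by_contra hne
        rw [Finset.not_nonempty_iff_eq_empty] at hne
        have hadjall : ∀ i, G.Adj u (v i) := by
          intro i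
          by_contra hna
          have : i ∈ NN := by rw [hNN]; exact Finset.mem_filter.mpr ⟨Finset.mem_univ _, hna⟩
          rw [hne] at this
          exact absurd this (Finset.notMem_empty _)
        have hins : G.IsNClique (k+1) (insert u K) := by
          refine hK.insert ?_
          intro b hb
          have := hadjall (e ⟨b, hb⟩)
          rwa [hKv b hb] at this
        have : k + 1 ≤ k := by
          rw [hk]
          have h2 := hins.1.card_le_cliqueNum (G := G)
          rwa [hins.2] at h2
        omega
      set i₀ : Fin k := NN.min' hNNne with hi₀
      have hi₀NN : i₀ ∈ NN := NN.min'_mem hNNne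
      have hi₀na : ¬ G.Adj u (v i₀) := (Finset.mem_filter.mp hi₀NN).2
      by_cases hsing : ∀ l ∈ NN, l = i₀
      · refine ⟨Sum.inl i₀, Or.inl ⟨i₀, rfl, Or.inr ⟨huK, hi₀na, ?_⟩⟩⟩
        intro l hl
        by_contra hna
        have : l ∈ NN := Finset.mem_filter.mpr ⟨Finset.mem_univ _, hna⟩
        exact hl (hsing l this)
      · push_neg at hsing
        obtain ⟨l₁, hl₁NN, hl₁ne⟩ := hsing
        set NN' : Finset (Fin k) := NN.erase i₀ with hNN'
        have hNN'ne : NN'.Nonempty := ⟨l₁, Finset.mem_erase.mpr ⟨hl₁ne, hl₁NN⟩⟩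
        set j₀ : Fin k := NN'.min' hNN'ne with hj₀
        have hj₀NN' : j₀ ∈ NN' := NN'.min'_mem hNN'ne
        have hj₀NN : j₀ ∈ NN := Finset.mem_erase.mp hj₀NN' |>.2
        have hj₀ne : j₀ ≠ i₀ := Finset.mem_erase.mp hj₀NN' |>.1
        have hij : i₀ < j₀ := lt_of_le_of_ne (NN.min'_le _ hj₀NN) (Ne.symm hj₀ne)
        have huknot : ∀ i : Fin k, u ≠ v i := by
          intro i h
          exact huK (h ▸ hvK i)
        have hu : u ∈ S i₀ j₀ := by
          refine ⟨hi₀na, (Finset.mem_filter.mp hj₀NN).2, huknot i₀, huknot j₀, ?_⟩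
          intro l hl hlne
          by_contra hna
          have hlNN : l ∈ NN := Finset.mem_filter.mpr ⟨Finset.mem_univ _, hna⟩
          have hlNN' : l ∈ NN' := Finset.mem_erase.mpr ⟨hlne, hlNN⟩
          have := NN'.min'_le _ hlNN'
          rw [← hj₀] at this
          exact absurd hl (not_lt.mpr this)
        refine ⟨Sum.inr ⟨j₀, ⟨i₀.val, hij⟩, Cp j₀ ⟨i₀.val, hij⟩ ⟨u, hu⟩⟩,
          Or.inr ⟨j₀, ⟨i₀.val, hij⟩, hu, rfl⟩⟩
  set f : V → ((Fin k) ⊕ (Σ j : Fin k, Fin j.val × Fin (c j.val))) :=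
    fun u => Classical.choose (hspec u) with hfdef
  have hf : ∀ u, Spec u (f u) := fun u => Classical.choose_spec (hspec u)
  have hvalid : ∀ a b : V, G.Adj a b → f a ≠ f b := by
    intro a b hadj heq
    have hfa := hf a
    have hfb := hf b
    rcases hfa with ⟨i, hcol, hcase⟩ | ⟨j, ii, hu, hcol⟩
    · rcases hfb with ⟨i', hcol', hcase'⟩ | ⟨j', ii', hu', hcol'⟩
      · -- both inl
        have hii' : i' = i := by
          rw [heq, hcol'] at hcol
          exact Sum.inl.inj hcol
        subst hii'
        rcases hcase with ha | ⟨haK, hana, hall⟩ <;> rcases hcase' with hb | ⟨hbK, hbna, hball⟩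
        · exact hadj.ne (ha.trans hb.symm)
        · exact hbna (by rw [← ha]; exact hadj.symm)
        · exact hana (by rw [← hb]; exact hadj)
        · -- two non-clique vertices adjacent to everything except v i
          have hbig : G.IsNClique (k+1) (insert a (insert b (K.erase (v i')))) := by
            constructor
            · intro x hx y hy hxy
              simp only [Finset.coe_insert, Set.mem_insert_iff, Finset.coe_erase,
                Set.mem_diff, Finset.mem_coe, Set.mem_singleton_iff] at hx hy
              have hKadj : ∀ z, (z ∈ K ∧ ¬z = v i') → ∀ w, (w ∈ K ∧ ¬w = v i') →
                  z ≠ w → G.Adj z w := by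
                rintro z ⟨hz1, _⟩ w ⟨hw1, _⟩ hzw
                exact hK.1 hz1 hw1 hzw
              have hadjvl : ∀ z, (z ∈ K ∧ ¬z = v i') →
                  G.Adj a z ∧ G.Adj b z := by
                rintro z ⟨hz1, hz2⟩
                have := hKv z hz1
                refine ⟨?_, ?_⟩
                · have h3 := hall (e ⟨z, hz1⟩) (fun hh => hz2 (by rw [← this, hh]))
                  rwa [this] at h3
                · have h3 := hball (e ⟨z, hz1⟩) (fun hh => hz2 (by rw [← this, hh]))
                  rwa [this] at h3
              rcases hx with rfl | rfl | hx <;> rcases hy with rfl | rfl | hy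
              · exact absurd rfl hxy
              · exact hadj
              · exact (hadjvl _ hy).1
              · exact hadj.symm
              · exact absurd rfl hxy
              · exact (hadjvl _ hy).2
              · exact ((hadjvl _ hx).1).symm
              · exact ((hadjvl _ hx).2).symm
              · exact hKadj _ hx _ hy hxy
            · have hbK' : b ∉ K.erase (v i') := fun hh => hbK (Finset.mem_of_mem_erase hh)
              have haK' : a ∉ insert b (K.erase (v i')) := by
                intro hh
                rcases Finset.mem_insert.mp hh with hh | hh
                · exact hadj.ne hh
                · exact haK (Finset.mem_of_mem_erase hh)
              rw [Finset.card_insert_of_notMem haK', Finset.card_insert_of_notMem hbK',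
                Finset.card_erase_of_mem (hvK i'), hK.2]
              have hkpos : 0 < k := Fin.pos i'
              omega
          have : k + 1 ≤ k := by
            have h2 := hbig.1.card_le_cliqueNum (G := G)
            rw [hbig.2] at h2
            exact h2
          omega
      · rw [heq, hcol'] at hcol
        exact absurd hcol (by simp)
    · rcases hfb with ⟨i', hcol', hcase'⟩ | ⟨j', ii', hu', hcol'⟩
      · rw [← heq, hcol] at hcol'
        exact absurd hcol' (by simp)
      · -- both inr
        rw [heq, hcol'] at hcol
        have hsig := Sum.inr.inj hcol
        have hjj : j' = j := congrArg Sigma.fst hsig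
        subst hjj
        have hpair : (ii', (Cp j' ii' ⟨b, hu'⟩)) = (ii, (Cp j' ii ⟨a, hu⟩)) := by
          have h2 := Sigma.mk.inj_iff.mp hsig
          exact eq_of_heq h2.2
        have hiieq : ii' = ii := congrArg Prod.fst hpair
        subst hiieq
        have hceq : Cp j' ii' ⟨b, hu'⟩ = Cp j' ii' ⟨a, hu⟩ := congrArg Prod.snd hpair
        have hadj' : (G.induce (S ⟨ii'.val, lt_trans ii'.2 j'.2⟩ j')).Adj ⟨a, hu⟩ ⟨b, hu'⟩ := hadj
        exact (Cp j' ii').valid hadj' hceq.symm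
  have hcoloring : G.Coloring ((Fin k) ⊕ (Σ j : Fin k, Fin j.val × Fin (c j.val))) :=
    SimpleGraph.Coloring.mk f (fun {a b} hadj => hvalid a b hadj)
  have hcolorable := hcoloring.colorable
  have hcard : Fintype.card ((Fin k) ⊕ (Σ j : Fin k, Fin j.val × Fin (c j.val)))
      = k + ∑ t ∈ Finset.range k, t * c t := by
    rw [Fintype.card_sum, Fintype.card_sigma, Fintype.card_fin]
    congr 1
    have h2 : ∀ j : Fin k, Fintype.card (Fin j.val × Fin (c j.val)) = j.val * c j.val := by
      intro j; rw [Fintype.card_prod, Fintype.card_fin, Fintype.card_fin]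
    rw [Finset.sum_congr rfl (fun j _ => h2 j)]
    exact Fin.sum_univ_eq_sum_range (fun t => t * c t) k
  rwa [hcard] at hcolorable

lemma main (n : ℕ) (hn : 2 ≤ n) :
    ∀ (q : ℕ) (V : Type) [Fintype V] (G : SimpleGraph V),
      StarP n (q+1) G → G.Colorable (FF n q G.cliqueNum) := by
  intro q
  induction q with
  | zero =>
    intro V _ G hstar
    classical
    have hdec := decomp G (fun _ => n - 1) ?_
    · have hid := idA n G.cliqueNum
      exact hdec.mono (le_of_eq hid)
    · intro x y hxy S hanti t hcl
      have hdeg : ∀ u : ↥S, ((G.induce S).neighborSet u).ncard ≤ n - 2 := by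
        intro u
        set s : Finset V := ((G.induce S).neighborSet u).toFinset.image Subtype.val with hs
        have hscard : s.card = ((G.induce S).neighborSet u).ncard := by
          rw [hs, Finset.card_image_of_injective _ Subtype.val_injective,
            Set.ncard_eq_toFinset_card']
        set mm : Fin 1 → V × V := fun _ => (x, y) with hmm
        have hIndM : IndM G mm := by
          constructor
          · intro i; exact hxy
          · intro i j hij; exact absurd (Subsingleton.elim i j) hij
        have hOut : ∀ z ∈ S, Out G mm z := by
          intro z hz i
          obtain ⟨h1, h2, h3, h4⟩ := hanti z hz
          exact ⟨h3, h4, h1, h2⟩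
        have hnotmem : (u : V) ∉ s := by
          intro hmem
          obtain ⟨w, hw, hweq⟩ := Finset.mem_image.mp hmem
          rw [Set.mem_toFinset] at hw
          have : w = u := Subtype.ext hweq
          rw [this] at hw
          exact (G.induce S).irrefl hw
        have hmemadj : ∀ w ∈ s, G.Adj (u : V) w ∧ Out G mm w := by
          intro w hw
          obtain ⟨w', hw', rfl⟩ := Finset.mem_image.mp hw
          rw [Set.mem_toFinset] at hw'
          exact ⟨hw', hOut _ w'.2⟩
        have := hstar mm hIndM (u : V) (hOut _ u.2) s hnotmem hmemadj
        omega
      have hcolor := greedy_aux (n-2) (Fintype.card ↥S) ↥S (G.induce S) le_rfl hdeg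
      have : n - 2 + 1 = n - 1 := by omega
      rwa [this] at hcolor
  | succ q ih =>
    intro V _ G hstar
    classical
    have hdec := decomp G (fun t => FF n q (G.cliqueNum + 1 - t)) ?_
    · exact hdec.mono (le_of_eq (idB n q G.cliqueNum))
    · intro x y hxy S hanti t hcl
      have hstar' : StarP n (q+1) (G.induce S) := star_anti G hstar x y hxy S hanti
      have hcol := ih ↥S (G.induce S) hstar'
      obtain ⟨C, hC⟩ := (G.induce S).exists_isNClique_cliqueNum
      have hb := hcl _ C hC
      exact hcol.mono (FF_mono n q (by omega))

end Stmt4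

theorem stmt_4 (n p : ℕ) (hn : 2 ≤ n) (hp : 1 ≤ p)
    (V : Type) [Fintype V] (G : SimpleGraph V)
    (hG : ∀ (W : Type) [Fintype W] (B : SimpleGraph W), Fintype.card W = n →
      (∃ v : W, ∀ w : W, w ≠ v → B.Adj v w) → IsEmpty ((pK2 p ⊕g B) ↪g G)) :
    G.chromaticNumber ≤
      ((Nat.choose (G.cliqueNum + 2 * p - 2) (2 * p - 1) +
        (n - 1) * Nat.choose (G.cliqueNum + 2 * p - 2) (2 * p) : ℕ) : ℕ∞) := by
  classical
  obtain ⟨q, rfl⟩ : ∃ q, p = q + 1 := ⟨p - 1, by omega⟩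
  have hstar : Stmt4.StarP n (q+1) G := Stmt4.star_of_hG hn G hG
  have hcol := Stmt4.main n hn q V G hstar
  have h1 : G.cliqueNum + 2 * (q+1) - 2 = G.cliqueNum + 2*q := by omega
  have h2 : 2 * (q+1) - 1 = 2*q+1 := by omega
  have h3 : 2 * (q+1) = 2*q+2 := by omega
  rw [h1, h2, h3, SimpleGraph.chromaticNumber_le_iff_colorable]
  exact hcol
end

section
/- For every integer p ≥ 1, every pK₂-free graph G satisfies χ(G) ≤ C(ω(G)−1+2(p−1), 2(p−1)), where C(a,b) denotes the binomial coefficient. -/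
open SimpleGraph

open Finset

section helpers

lemma wg_pascal (a b : ℕ) : (a+1).choose (b+1) = a.choose b + a.choose (b+1) := by
  simp [Nat.choose_succ_succ]

lemma wg_hockey (q : ℕ) : ∀ n, ∑ t ∈ range (n+1), (n - t + q).choose q = (n+q+1).choose (q+1)
  | 0 => by simp
  | n+1 => by
    rw [Finset.sum_range_succ']
    simp only [Nat.succ_sub_succ, Nat.sub_zero]
    rw [wg_hockey q n]
    have e : n+1+q = n+q+1 := by ring
    rw [e]
    have := wg_pascal (n+q+1) q
    omega

lemma wg_L2 (q : ℕ) : ∀ n, ∑ t ∈ range (n+1), (t+1) * ((n - t + q).choose q) = (n+q+2).choose (q+2)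
  | 0 => by simp
  | n+1 => by
    rw [Finset.sum_range_succ']
    simp only [Nat.succ_sub_succ, Nat.sub_zero]
    have e1 : ∀ t, (t+1+1) * ((n - t + q).choose q)
        = (t+1) * ((n - t + q).choose q) + (n - t + q).choose q := fun t => by ring
    rw [Finset.sum_congr rfl (fun t _ => e1 t), Finset.sum_add_distrib, wg_L2 q n, wg_hockey q n]
    have e : n+1+q = n+q+1 := by ring
    rw [e]
    have e3 : n+q+1+2 = n+q+2+1 := by ring
    rw [e3]
    have h1 := wg_pascal (n+q+2) (q+1)
    simp only [show q+1+1 = q+2 from rfl] at h1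
    have h2 := wg_pascal (n+q+1) q
    have e2 : n+q+1+1 = n+q+2 := by ring
    rw [e2] at h2
    omega

lemma wg_L3 (q n : ℕ) : (n+1) + ∑ j ∈ range (n+1), j * ((n+1-j+q).choose q)
    = (n+q+2).choose (q+2) := by
  rw [← wg_L2 q n, Finset.sum_range_succ', Finset.sum_range_succ (fun t => (t+1) * ((n - t + q).choose q))]
  simp only [Nat.succ_sub_succ, Nat.sub_self, zero_add, Nat.choose_self, mul_one, zero_mul, add_zero]
  omega


lemma wg_colorable_sum {V : Type} [Fintype V] (G : SimpleGraph V) {I : Type} [Fintype I]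
    (c : V → I) (n : I → ℕ)
    (h : ∀ i, (G.induce {v | c v = i}).Colorable (n i)) :
    G.Colorable (∑ i, n i) := by
  have f : ∀ i, (G.induce {v | c v = i}).Coloring (Fin (n i)) := fun i => (h i).some
  have aux : ∀ (v : V) (i j : I) (hij : i = j) (hv : c v = i) (hv' : c v = j),
      HEq (f i ⟨v, hv⟩) (f j ⟨v, hv'⟩) := by
    rintro v i j rfl hv hv'; rfl
  let col : G.Coloring (Σ i, Fin (n i)) :=
    Coloring.mk (fun v => ⟨c v, f (c v) ⟨v, rfl⟩⟩) (by
      intro v w hadj heq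
      rw [Sigma.mk.inj_iff] at heq
      obtain ⟨h1, h2⟩ := heq
      have hadj' : (G.induce {x | c x = c w}).Adj ⟨v, h1⟩ ⟨w, rfl⟩ := hadj
      exact (f (c w)).valid hadj'
        (eq_of_heq (((aux v (c v) (c w) h1 rfl h1).symm.trans h2))))
  have := col.colorable
  simpa using this

lemma wg_fin2 : ∀ j : Fin 2, j = 0 ∨ j = 1 := by decide

noncomputable def wg_extend {V : Type} {G : SimpleGraph V} {p : ℕ} (f : Fin p × Fin 2 → V)
    (hinj : Function.Injective f)
    (hiff : ∀ x y, G.Adj (f x) (f y) ↔ (pK2 p).Adj x y)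
    (a b : V) (hab : G.Adj a b)
    (hna : ∀ x, ¬ G.Adj (f x) a) (hnb : ∀ x, ¬ G.Adj (f x) b)
    (hea : ∀ x, f x ≠ a) (heb : ∀ x, f x ≠ b) :
    pK2 (p+1) ↪g G := by
  classical
  have ea : ∀ (a b : V), (if (0:Fin 2) = 0 then a else b) = a := fun a b => if_pos rfl
  have eb : ∀ (a b : V), (if (1:Fin 2) = 0 then a else b) = b := fun a b => if_neg (by decide)
  refine ⟨⟨fun x => if h : (x.1 : ℕ) < p then f (⟨x.1, h⟩, x.2) else (if x.2 = 0 then a else b), ?_⟩, ?_⟩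
  · intro x y hxy
    simp only at hxy
    by_cases hx : (x.1 : ℕ) < p <;> by_cases hy : (y.1 : ℕ) < p <;>
      simp only [hx, hy, dif_pos, dif_neg, not_false_iff] at hxy
    · have h0 := hinj hxy
      rw [Prod.ext_iff] at h0
      obtain ⟨h1, h2⟩ := h0
      have h1' : (x.1 : ℕ) = (y.1 : ℕ) := by simpa using congrArg Fin.val h1
      rw [Prod.ext_iff]
      exact ⟨Fin.ext h1', h2⟩
    · rcases wg_fin2 y.2 with hy2 | hy2 <;> rw [hy2] at hxy <;> [rw [ea] at hxy; rw [eb] at hxy]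
      · exact absurd hxy (hea _)
      · exact absurd hxy (heb _)
    · rcases wg_fin2 x.2 with hx2 | hx2 <;> rw [hx2] at hxy <;> [rw [ea] at hxy; rw [eb] at hxy]
      · exact absurd hxy.symm (hea _)
      · exact absurd hxy.symm (heb _)
    · have hb1 := x.1.isLt
      have hb2 := y.1.isLt
      have h1 : x.1 = y.1 := Fin.ext (by omega)
      have h2 : x.2 = y.2 := by
        rcases wg_fin2 x.2 with hx2 | hx2 <;> rcases wg_fin2 y.2 with hy2 | hy2 <;>
            rw [hx2, hy2] at hxy ⊢
        · rw [ea, eb] at hxy; exact absurd hxy hab.ne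
        · rw [ea, eb] at hxy; exact absurd hxy.symm hab.ne
      rw [Prod.ext_iff]; exact ⟨h1, h2⟩
  · intro x y
    change G.Adj (if h : (x.1 : ℕ) < p then f (⟨x.1, h⟩, x.2) else (if x.2 = 0 then a else b))
      (if h : (y.1 : ℕ) < p then f (⟨y.1, h⟩, y.2) else (if y.2 = 0 then a else b)) ↔ _
    constructor
    · intro hadj
      by_cases hx : (x.1 : ℕ) < p <;> by_cases hy : (y.1 : ℕ) < p <;>
        simp only [hx, hy, dif_pos, dif_neg, not_false_iff] at hadj
      · obtain ⟨h1, h2⟩ := (hiff _ _).mp hadj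
        have h1' : (x.1 : ℕ) = (y.1 : ℕ) := by simpa using congrArg Fin.val h1
        exact ⟨Fin.ext h1', h2⟩
      · exfalso
        rcases wg_fin2 y.2 with hy2 | hy2 <;> rw [hy2] at hadj <;> [rw [ea] at hadj; rw [eb] at hadj]
        · exact hna _ hadj
        · exact hnb _ hadj
      · exfalso
        rcases wg_fin2 x.2 with hx2 | hx2 <;> rw [hx2] at hadj <;> [rw [ea] at hadj; rw [eb] at hadj]
        · exact hna _ hadj.symm
        · exact hnb _ hadj.symm
      · have hb1 := x.1.isLt
        have hb2 := y.1.isLt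
        refine ⟨Fin.ext (by omega), ?_⟩
        intro he
        rw [he] at hadj
        rcases wg_fin2 y.2 with hy2 | hy2 <;> rw [hy2] at hadj <;> [rw [ea] at hadj; rw [eb] at hadj] <;>
          exact G.loopless.irrefl _ hadj
    · rintro ⟨h1, h2⟩
      by_cases hx : (x.1 : ℕ) < p
      · have hy : (y.1 : ℕ) < p := h1 ▸ hx
        simp only [hx, hy, dif_pos]
        exact (hiff _ _).mpr ⟨Fin.ext (by simpa using congrArg Fin.val h1), h2⟩
      · have hy : ¬ (y.1 : ℕ) < p := h1 ▸ hx
        simp only [hx, hy, dif_neg, not_false_iff]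
        rcases wg_fin2 x.2 with hx2 | hx2 <;> rcases wg_fin2 y.2 with hy2 | hy2 <;>
          rw [hx2, hy2] at h2 ⊢
        · exact absurd rfl h2
        · rw [ea, eb]; exact hab
        · rw [ea, eb]; exact hab.symm
        · exact absurd rfl h2

lemma wg_isClique_insert2 {V : Type} {G : SimpleGraph V} [DecidableEq V] {s : Finset V}
    (hs : G.IsClique (s : Set V))
    {x y : V} (hxy : G.Adj x y) (hx : ∀ z ∈ s, G.Adj x z) (hy : ∀ z ∈ s, G.Adj y z) :
    G.IsClique ((insert x (insert y s) : Finset V) : Set V) := by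
  intro u hu v hv huv
  simp only [Finset.coe_insert, Set.mem_insert_iff, Finset.mem_coe] at hu hv
  rcases hu with rfl | rfl | hu <;> rcases hv with rfl | rfl | hv
  · exact absurd rfl huv
  · exact hxy
  · exact hx _ hv
  · exact hxy.symm
  · exact absurd rfl huv
  · exact hy _ hv
  · exact (hx _ hu).symm
  · exact (hy _ hu).symm
  · exact hs hu hv huv

end helpers

lemma wg_main : ∀ (p : ℕ) (V : Type) [Fintype V] (G : SimpleGraph V),
    IsEmpty (pK2 (p+1) ↪g G) → G.Colorable ((G.cliqueNum - 1 + 2*p).choose (2*p)) := by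
  intro p
  induction p with
  | zero =>
    intro V _ G hG
    have hc1 : G.Colorable 1 := by
      refine ⟨SimpleGraph.Coloring.mk (fun _ => 0) ?_⟩
      intro v w hadj _
      exact hG.false (wg_extend (fun x => x.1.elim0) (fun x => x.1.elim0)
        (fun x => x.1.elim0) v w hadj (fun x => x.1.elim0) (fun x => x.1.elim0)
        (fun x => x.1.elim0) (fun x => x.1.elim0))
    simpa using hc1
  | succ p IH =>
    intro V _ G hG
    classical
    by_cases hE : ∃ u v, G.Adj u v
    case neg =>
      have hc1 : G.Colorable 1 := by
        refine ⟨SimpleGraph.Coloring.mk (fun _ => 0) ?_⟩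
        intro v w hadj _
        exact hE ⟨v, w, hadj⟩
      exact hc1.mono (Nat.succ_le_of_lt (Nat.choose_pos (by omega)))
    case pos =>
    obtain ⟨u0, v0, huv⟩ := hE
    letI : LinearOrder V := LinearOrder.lift' (Fintype.equivFin V) (Equiv.injective _)
    obtain ⟨K, hK⟩ := G.exists_isNClique_cliqueNum
    -- clique number at least 2
    have hω2 : 2 ≤ G.cliqueNum := by
      have hcl : G.IsClique (({u0, v0} : Finset V) : Set V) := by
        rw [Finset.coe_pair]
        exact isClique_pair.mpr (fun _ => huv)
      have hcard : ({u0, v0} : Finset V).card = 2 := Finset.card_pair huv.ne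
      have := IsClique.card_le_cliqueNum (tc := hcl)
      omega
    -- the nonneighbor set inside K
    set S : V → Finset V := fun u => K.filter (fun w => ¬ G.Adj u w) with hSdef
    have hSsub : ∀ u, S u ⊆ K := fun u => Finset.filter_subset _ _
    have hSmem : ∀ u w, w ∈ S u ↔ w ∈ K ∧ ¬ G.Adj u w := by
      intro u w; rw [hSdef]; exact Finset.mem_filter
    have hSne : ∀ u, (S u).Nonempty := by
      intro u
      by_cases hu : u ∈ K
      · exact ⟨u, (hSmem u u).mpr ⟨hu, G.loopless.irrefl u⟩⟩
      · by_contra h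
        rw [Finset.not_nonempty_iff_eq_empty, hSdef, Finset.filter_eq_empty_iff] at h
        have hcl : G.IsClique ((insert u K : Finset V) : Set V) := by
          intro x hx y hy hxy
          simp only [Finset.coe_insert, Set.mem_insert_iff, Finset.mem_coe] at hx hy
          rcases hx with rfl | hx <;> rcases hy with rfl | hy
          · exact absurd rfl hxy
          · exact not_not.mp (h hy)
          · exact (not_not.mp (h hx)).symm
          · exact hK.1 hx hy hxy
        have := IsClique.card_le_cliqueNum (tc := hcl)
        rw [Finset.card_insert_of_notMem hu, hK.2] at this
        omega
    -- the class function
    set cl : V → V ⊕ (V × V) := fun u =>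
      if h : ((S u).erase ((S u).min' (hSne u))).Nonempty
      then Sum.inr ((S u).min' (hSne u), ((S u).erase ((S u).min' (hSne u))).min' h)
      else Sum.inl ((S u).min' (hSne u)) with hcldef
    have F1 : ∀ u w, cl u = Sum.inl w → S u = {w} := by
      intro u w h
      rw [hcldef] at h
      simp only at h
      split at h
      · exact absurd h (by simp)
      · next hne =>
        rw [Finset.not_nonempty_iff_eq_empty, Finset.erase_eq_empty_iff] at hne
        rcases hne with hne | hne
        · exact absurd hne (hSne u).ne_empty
        · rw [hne]
          rw [Sum.inl.injEq] at h
          rw [h]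
    have F2 : ∀ u a b, cl u = Sum.inr (a, b) →
        a ∈ S u ∧ b ∈ S u ∧ a < b ∧ (∀ w ∈ S u, w = a ∨ b ≤ w) := by
      intro u a b h
      rw [hcldef] at h
      simp only at h
      split at h
      · next hne =>
        rw [Sum.inr.injEq, Prod.mk.injEq] at h
        obtain ⟨ha, hb⟩ := h
        have hamem : a ∈ S u := ha ▸ (S u).min'_mem (hSne u)
        have hbmem' : b ∈ (S u).erase ((S u).min' (hSne u)) := by
          rw [← hb]; exact Finset.min'_mem _ _
        have hbmem : b ∈ S u := Finset.mem_of_mem_erase hbmem'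
        have hbne : b ≠ a := by
          rw [← ha]; exact Finset.ne_of_mem_erase hbmem'
        have hab : a < b := lt_of_le_of_ne (ha ▸ Finset.min'_le _ _ hbmem) (Ne.symm hbne)
        refine ⟨hamem, hbmem, hab, ?_⟩
        intro w hw
        by_cases hwa : w = a
        · exact Or.inl hwa
        · refine Or.inr ?_
          rw [← hb]
          refine Finset.min'_le _ _ ?_
          exact Finset.mem_erase.mpr ⟨by rw [ha]; exact hwa, hw⟩
      · exact absurd h (by simp)
    have F3 : ∀ u a b, cl u = Sum.inr (a, b) → ∀ w ∈ K, w < b → w ≠ a → G.Adj u w := by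
      intro u a b h w hwK hwb hwa
      obtain ⟨_, _, _, hmin⟩ := F2 u a b h
      by_contra hadj
      rcases hmin w ((hSmem u w).mpr ⟨hwK, hadj⟩) with rfl | hle
      · exact hwa rfl
      · exact absurd hwb (not_lt.mpr hle)
    -- the color counts
    set nn : V ⊕ (V × V) → ℕ := Sum.elim
      (fun w => if w ∈ K then 1 else 0)
      (fun z => if z.1 ∈ K ∧ z.2 ∈ K ∧ z.1 < z.2
        then ((G.cliqueNum - (K.filter (· < z.2)).card + 2*p).choose (2*p)) else 0) with hnndef
    -- each class is appropriately colorable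
    have hcol : ∀ i, (G.induce {v | cl v = i}).Colorable (nn i) := by
      rintro (w | ⟨a, b⟩)
      · by_cases hw : w ∈ K
        · have hn1 : nn (Sum.inl w) = 1 := by simp [hnndef, hw]
          rw [hn1]
          refine ⟨SimpleGraph.Coloring.mk (fun _ => 0) ?_⟩
          rintro ⟨u, hu⟩ ⟨u', hu'⟩ hadj _
          have hSu := F1 u w hu
          have hSu' := F1 u' w hu'
          have hadj' : G.Adj u u' := hadj
          have hadjall : ∀ z ∈ K.erase w, G.Adj u z := by
            intro z hz
            obtain ⟨hzw, hzK⟩ := Finset.mem_erase.mp hz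
            by_contra hc
            have hmem : z ∈ S u := (hSmem u z).mpr ⟨hzK, hc⟩
            rw [hSu, Finset.mem_singleton] at hmem
            exact hzw hmem
          have hadjall' : ∀ z ∈ K.erase w, G.Adj u' z := by
            intro z hz
            obtain ⟨hzw, hzK⟩ := Finset.mem_erase.mp hz
            by_contra hc
            have hmem : z ∈ S u' := (hSmem u' z).mpr ⟨hzK, hc⟩
            rw [hSu', Finset.mem_singleton] at hmem
            exact hzw hmem
          have hclq := wg_isClique_insert2 (G := G)
            (hK.1.subset (Finset.coe_subset.mpr (Finset.erase_subset w K)))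
            hadj' hadjall hadjall'
          have hunotmem : u ∉ K.erase w := by
            intro hmem
            have h1 : u ∈ S u := (hSmem u u).mpr ⟨(Finset.mem_erase.mp hmem).2, G.loopless.irrefl u⟩
            rw [hSu, Finset.mem_singleton] at h1
            exact (Finset.mem_erase.mp hmem).1 h1
          have hu'notmem : u' ∉ K.erase w := by
            intro hmem
            have h1 : u' ∈ S u' := (hSmem u' u').mpr ⟨(Finset.mem_erase.mp hmem).2, G.loopless.irrefl u'⟩
            rw [hSu', Finset.mem_singleton] at h1
            exact (Finset.mem_erase.mp hmem).1 h1
          have hcardD : (insert u (insert u' (K.erase w))).card = G.cliqueNum + 1 := by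
            rw [Finset.card_insert_of_notMem (by
              simp only [Finset.mem_insert]
              push_neg
              exact ⟨hadj'.ne, hunotmem⟩),
              Finset.card_insert_of_notMem hu'notmem,
              Finset.card_erase_of_mem hw, hK.2]
            omega
          have hle := IsClique.card_le_cliqueNum (tc := hclq)
          rw [hcardD] at hle
          omega
        · have hn0 : nn (Sum.inl w) = 0 := by simp [hnndef, hw]
          rw [hn0]
          haveI hempty : IsEmpty {v | cl v = Sum.inl w} := by
            constructor
            rintro ⟨u, hu⟩
            have h1 := F1 u w hu
            exact hw (hSsub u (h1 ▸ Finset.mem_singleton_self w))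
          exact SimpleGraph.Colorable.of_isEmpty (G := G.induce {v | cl v = Sum.inl w}) 0
      · by_cases hab : a ∈ K ∧ b ∈ K ∧ a < b
        case neg =>
          have hn0 : nn (Sum.inr (a, b)) = 0 := by
            simp only [hnndef, Sum.elim_inr]
            rw [if_neg hab]
          rw [hn0]
          haveI hempty : IsEmpty {v | cl v = Sum.inr (a, b)} := by
            constructor
            rintro ⟨u, hu⟩
            obtain ⟨haS, hbS, habl, _⟩ := F2 u a b hu
            exact hab ⟨hSsub u haS, hSsub u hbS, habl⟩
          exact SimpleGraph.Colorable.of_isEmpty (G := G.induce {v | cl v = Sum.inr (a, b)}) 0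
        case pos =>
        obtain ⟨haK, hbK, hlt⟩ := hab
        have hnval : nn (Sum.inr (a, b))
            = ((G.cliqueNum - (K.filter (· < b)).card + 2*p).choose (2*p)) := by
          simp only [hnndef, Sum.elim_inr]
          rw [if_pos ⟨haK, hbK, hlt⟩]
        rw [hnval]
        have hGab : G.Adj a b := hK.1 haK hbK (ne_of_lt hlt)
        have hmema : ∀ u : {v | cl v = Sum.inr (a, b)}, ¬ G.Adj u.1 a :=
          fun u => ((hSmem _ _).mp (F2 u.1 a b u.2).1).2
        have hmemb : ∀ u : {v | cl v = Sum.inr (a, b)}, ¬ G.Adj u.1 b :=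
          fun u => ((hSmem _ _).mp (F2 u.1 a b u.2).2.1).2
        have hnea : ∀ u : {v | cl v = Sum.inr (a, b)}, u.1 ≠ a := by
          intro u hu
          have hbS := (F2 u.1 a b u.2).2.1
          rw [hu] at hbS
          exact ((hSmem a b).mp hbS).2 hGab
        have hneb : ∀ u : {v | cl v = Sum.inr (a, b)}, u.1 ≠ b := by
          intro u hu
          have haS := (F2 u.1 a b u.2).1
          rw [hu] at haS
          exact ((hSmem b a).mp haS).2 hGab.symm
        have hfree : IsEmpty (pK2 (p+1) ↪g (G.induce {v | cl v = Sum.inr (a, b)})) := by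
          constructor
          intro emb
          exact hG.false (wg_extend (fun x => (emb x).1)
            (Subtype.val_injective.comp emb.injective)
            (fun x y => emb.map_rel_iff)
            a b hGab (fun x => hmema _) (fun x => hmemb _) (fun x => hnea _) (fun x => hneb _))
        have hHclique : (G.induce {v | cl v = Sum.inr (a, b)}).cliqueNum
            ≤ G.cliqueNum - (K.filter (· < b)).card + 1 := by
          obtain ⟨C, hC⟩ := (G.induce {v | cl v = Sum.inr (a, b)}).exists_isNClique_cliqueNum
          have hdisj : Disjoint (C.image Subtype.val) ((K.filter (· < b)).erase a) := by
            rw [Finset.disjoint_left]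
            intro x hx hx'
            obtain ⟨u, hu, rfl⟩ := Finset.mem_image.mp hx
            obtain ⟨hxa, hxf⟩ := Finset.mem_erase.mp hx'
            obtain ⟨hxK, hxb⟩ := Finset.mem_filter.mp hxf
            exact G.loopless.irrefl _ (F3 u.1 a b u.2 u.1 hxK hxb hxa)
          have hclD : G.IsClique ((C.image Subtype.val ∪ (K.filter (· < b)).erase a : Finset V) : Set V) := by
            intro x hx y hy hxy
            simp only [Finset.coe_union, Set.mem_union, Finset.mem_coe, Finset.mem_image,
              Finset.mem_erase, Finset.mem_filter] at hx hy
            rcases hx with ⟨u, hu, rfl⟩ | ⟨hxa, hxK, hxb⟩ <;>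
              rcases hy with ⟨u', hu', rfl⟩ | ⟨hya, hyK, hyb⟩
            · have hne : u ≠ u' := fun h => hxy (congrArg Subtype.val h)
              exact hC.1 (Finset.mem_coe.mpr hu) (Finset.mem_coe.mpr hu') hne
            · exact F3 u.1 a b u.2 y hyK hyb hya
            · exact (F3 u'.1 a b u'.2 x hxK hxb hxa).symm
            · exact hK.1 hxK hyK hxy
          have hcardD : (C.image Subtype.val ∪ (K.filter (· < b)).erase a).card
              = (G.induce {v | cl v = Sum.inr (a, b)}).cliqueNum + ((K.filter (· < b)).card - 1) := by
            rw [Finset.card_union_of_disjoint hdisj,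
              Finset.card_image_of_injective _ Subtype.val_injective, hC.2,
              Finset.card_erase_of_mem (show a ∈ K.filter (· < b) from Finset.mem_filter.mpr ⟨haK, hlt⟩)]
          have hle := IsClique.card_le_cliqueNum (tc := hclD)
          rw [hcardD] at hle
          have htb1 : 1 ≤ (K.filter (· < b)).card :=
            Finset.card_pos.mpr ⟨a, show a ∈ K.filter (· < b) from Finset.mem_filter.mpr ⟨haK, hlt⟩⟩
          omega
        exact (IH _ (G.induce {v | cl v = Sum.inr (a, b)}) hfree).mono
          (Nat.choose_le_choose _ (by omega))
    have hsum : ∑ i, nn i = (G.cliqueNum - 1 + 2*(p+1)).choose (2*(p+1)) := by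
      have e0 : ∑ i, nn i = (∑ w : V, nn (Sum.inl w)) + ∑ z : V × V, nn (Sum.inr z) :=
        Fintype.sum_sum_type nn
      have e1 : (∑ w : V, nn (Sum.inl w)) = G.cliqueNum := by
        rw [hnndef]
        simp only [Sum.elim_inl]
        rw [Finset.sum_ite_mem, Finset.univ_inter, Finset.sum_const, smul_eq_mul, mul_one, hK.2]
      have e2 : ∀ b : V, (∑ a : V, nn (Sum.inr (a, b)))
          = if b ∈ K then (K.filter (· < b)).card
              * ((G.cliqueNum - (K.filter (· < b)).card + 2*p).choose (2*p)) else 0 := by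
        intro b
        by_cases hb : b ∈ K
        · rw [if_pos hb, hnndef]
          simp only [Sum.elim_inr]
          rw [← Finset.sum_filter]
          have efil : Finset.univ.filter (fun a => a ∈ K ∧ b ∈ K ∧ a < b) = K.filter (· < b) := by
            ext x
            simp [Finset.mem_filter, hb]
          rw [efil]
          exact Finset.sum_const_nat (fun x _ => rfl)
        · rw [if_neg hb]
          apply Finset.sum_eq_zero
          intro a _
          rw [hnndef]
          simp only [Sum.elim_inr]
          rw [if_neg (by tauto)]
      have e3 : ∑ z : V × V, nn (Sum.inr z) = ∑ b ∈ K, (K.filter (· < b)).card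
          * ((G.cliqueNum - (K.filter (· < b)).card + 2*p).choose (2*p)) := by
        rw [Fintype.sum_prod_type_right, Finset.sum_congr rfl (fun b _ => e2 b),
          Finset.sum_ite_mem, Finset.univ_inter]
      have hmaps : ∀ b ∈ K, (K.filter (· < b)).card ∈ Finset.range G.cliqueNum := by
        intro b hb
        rw [Finset.mem_range, ← hK.2]
        refine Finset.card_lt_card ?_
        rw [Finset.ssubset_iff_of_subset (Finset.filter_subset _ _)]
        exact ⟨b, hb, fun hmem => absurd (Finset.mem_filter.mp hmem).2 (lt_irrefl b)⟩
      have hinj : ∀ b ∈ K, ∀ b' ∈ K,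
          (K.filter (· < b)).card = (K.filter (· < b')).card → b = b' := by
        intro b hb b' hb' heq
        by_contra hne
        have key : ∀ x y : V, x ∈ K → x < y →
            (K.filter (· < x)).card < (K.filter (· < y)).card := by
          intro x y hx hxy
          refine Finset.card_lt_card ?_
          have hsub : K.filter (· < x) ⊆ K.filter (· < y) := fun z hz =>
            Finset.mem_filter.mpr ⟨(Finset.mem_filter.mp hz).1,
              lt_trans (Finset.mem_filter.mp hz).2 hxy⟩
          rw [Finset.ssubset_iff_of_subset hsub]
          exact ⟨x, Finset.mem_filter.mpr ⟨hx, hxy⟩,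
            fun hmem => absurd (Finset.mem_filter.mp hmem).2 (lt_irrefl x)⟩
        rcases lt_or_gt_of_ne hne with hlt | hlt
        · exact absurd heq (ne_of_lt (key b b' hb hlt))
        · exact absurd heq.symm (ne_of_lt (key b' b hb' hlt))
      have e4 : ∑ b ∈ K, (K.filter (· < b)).card
            * ((G.cliqueNum - (K.filter (· < b)).card + 2*p).choose (2*p))
          = ∑ j ∈ Finset.range G.cliqueNum, j * ((G.cliqueNum - j + 2*p).choose (2*p)) := by
        refine Finset.sum_bij (fun b _ => (K.filter (· < b)).card) hmaps ?_ ?_ (fun b hb => rfl)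
        · intro b hb b' hb' heq
          exact hinj b hb b' hb' heq
        · intro j hj
          have hcard : (Finset.range G.cliqueNum).card ≤ K.card := by
            rw [Finset.card_range, hK.2]
          obtain ⟨b, hb, hjb⟩ := Finset.surj_on_of_inj_on_of_card_le
            (fun b (_ : b ∈ K) => (K.filter (· < b)).card) hmaps
            (fun b b' hb hb' heq => hinj b hb b' hb' heq) hcard j hj
          exact ⟨b, hb, hjb.symm⟩
      obtain ⟨m, hm⟩ : ∃ m, G.cliqueNum = m + 1 := ⟨G.cliqueNum - 1, by omega⟩
      have hL3 := wg_L3 (2*p) m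
      rw [e0, e1, e3, e4, hm]
      have eg1 : m + 1 - 1 + 2*(p+1) = m + 2*p + 2 := by omega
      have eg2 : 2*(p+1) = 2*p + 2 := by omega
      rw [eg1, eg2]
      exact hL3
    have := wg_colorable_sum G cl nn hcol
    rwa [hsum] at this

theorem stmt_5 (p : ℕ) (hp : 1 ≤ p) (V : Type) [Fintype V] (G : SimpleGraph V)
    (hG : IsEmpty (pK2 p ↪g G)) :
    G.chromaticNumber ≤
      (Nat.choose (G.cliqueNum - 1 + 2 * (p - 1)) (2 * (p - 1)) : ℕ∞) := by
  obtain ⟨q, rfl⟩ : ∃ q, p = q + 1 := ⟨p - 1, by omega⟩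
  have := (wg_main q V G hG).chromaticNumber_le
  have e : q + 1 - 1 = q := by omega
  rw [e]
  exact_mod_cast this
end

section
/- Define f_p^W : ℕ → ℕ for p ≥ 1 by f_1^W(ω) = 1 and f_{p+1}^W(ω) = C(ω,2)·f_p^W(ω) + ω. Then every pK₂-free graph G satisfies χ(G) ≤ f_p^W(ω(G)). In particular, every 2K₂-free graph G satisfies χ(G) ≤ C(ω(G)+1, 2). -/
open SimpleGraph

/-- Wagon's bounding function: `fW 1 ω = 1` and `fW (p+1) ω = C(ω,2) * fW p ω + ω`
for `p ≥ 1` (the value at `p = 0` is irrelevant). -/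
def fW : ℕ → ℕ → ℕ
  | 0, _ => 1
  | 1, _ => 1
  | p + 2, ω => Nat.choose ω 2 * fW (p + 1) ω + ω

section aux

lemma colorable_of_cover {V : Type} {ι : Type} [Fintype ι] (G : SimpleGraph V)
    (f : ι → Set V) (n : ι → ℕ) (hcov : ∀ v, ∃ i, v ∈ f i)
    (hcol : ∀ i, (G.induce (f i)).Colorable (n i)) :
    G.Colorable (∑ i, n i) := by
  classical
  choose idx hidx using hcov
  have hc : ∀ i, (G.induce (f i)).Coloring (Fin (n i)) := fun i => (hcol i).some
  have key : ∀ (i j : ι), i = j → ∀ (v w : V) (hv : v ∈ f i) (hw : w ∈ f j), G.Adj v w →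
      ((hc i ⟨v, hv⟩ : ℕ) ≠ (hc j ⟨w, hw⟩ : ℕ)) := by
    rintro i _ rfl v w hv hw hadj h
    exact (hc i).valid (by exact hadj : (G.induce (f i)).Adj ⟨v, hv⟩ ⟨w, hw⟩) (Fin.ext h)
  have C : G.Coloring ((i : ι) × Fin (n i)) := Coloring.mk
    (fun v => ⟨idx v, hc (idx v) ⟨v, hidx v⟩⟩)
    (by
      intro v w hadj h
      exact key _ _ (congrArg Sigma.fst h) v w _ _ hadj
        (congrArg (fun z : (i : ι) × Fin (n i) => (z.2 : ℕ)) h))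
  have h2 := C.colorable
  have h3 : Fintype.card ((i : ι) × Fin (n i)) = ∑ i, n i := by
    simp [Fintype.card_sigma]
  rwa [h3] at h2

lemma indep_colorable_one {V : Type} (G : SimpleGraph V) (A : Set V)
    (h : ∀ x ∈ A, ∀ y ∈ A, ¬ G.Adj x y) : (G.induce A).Colorable 1 :=
  ⟨Coloring.mk (fun _ => 0) (by
    rintro ⟨x, hx⟩ ⟨y, hy⟩ hadj
    exact absurd (by exact hadj : G.Adj x y) (h x hx y hy))⟩
noncomputable def pK2_extend {p : ℕ} {V : Type} {G : SimpleGraph V} (φ : pK2 p ↪g G) {u v : V}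
    (huv : G.Adj u v)
    (hmiss : ∀ x w, w = u ∨ w = v → ¬ G.Adj (φ x) w ∧ φ x ≠ w) :
    pK2 (p+1) ↪g G := by
  classical
  refine ⟨⟨fun x => if h : (x.1 : ℕ) < p then φ (⟨x.1, h⟩, x.2) else if x.2 = 0 then u else v,
    ?_⟩, ?_⟩
  · -- injective
    rintro ⟨a, b⟩ ⟨c, d⟩ h
    simp only at h
    by_cases h1 : (a : ℕ) < p <;> by_cases h2 : (c : ℕ) < p
    · rw [dif_pos h1, dif_pos h2] at h
      have h' := φ.injective h
      have hfst : (⟨(a : ℕ), h1⟩ : Fin p) = ⟨(c : ℕ), h2⟩ := congrArg Prod.fst h'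
      have hval : (a : ℕ) = (c : ℕ) := by
        have := congrArg (Fin.val (n := p)) hfst; simpa using this
      exact Prod.ext (Fin.ext hval) (congrArg (Prod.snd (α := Fin p) (β := Fin 2)) h')
    · rw [dif_pos h1, dif_neg h2] at h
      exfalso
      by_cases hd : d = 0
      · rw [if_pos hd] at h
        exact (hmiss (⟨a, h1⟩, b) u (Or.inl rfl)).2 h
      · rw [if_neg hd] at h
        exact (hmiss (⟨a, h1⟩, b) v (Or.inr rfl)).2 h
    · rw [dif_neg h1, dif_pos h2] at h
      exfalso
      by_cases hb : b = 0
      · rw [if_pos hb] at h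
        exact (hmiss (⟨c, h2⟩, d) u (Or.inl rfl)).2 h.symm
      · rw [if_neg hb] at h
        exact (hmiss (⟨c, h2⟩, d) v (Or.inr rfl)).2 h.symm
    · rw [dif_neg h1, dif_neg h2] at h
      have hac : a = c := Fin.ext (by omega)
      by_cases hb : b = 0 <;> by_cases hd : d = 0
      · exact Prod.ext hac (hb.trans hd.symm)
      · rw [if_pos hb, if_neg hd] at h
        exact absurd h huv.ne
      · rw [if_neg hb, if_pos hd] at h
        exact absurd h.symm huv.ne
      · exact Prod.ext hac ((Fin.eq_one_of_ne_zero b hb).trans (Fin.eq_one_of_ne_zero d hd).symm)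
  · -- map_rel_iff
    rintro ⟨a, b⟩ ⟨c, d⟩
    show G.Adj _ _ ↔ (a = c ∧ b ≠ d)
    show G.Adj (if h : (a : ℕ) < p then φ (⟨a, h⟩, b) else if b = 0 then u else v)
      (if h : (c : ℕ) < p then φ (⟨c, h⟩, d) else if d = 0 then u else v) ↔ _
    by_cases h1 : (a : ℕ) < p <;> by_cases h2 : (c : ℕ) < p
    · rw [dif_pos h1, dif_pos h2]
      rw [show (G.Adj (φ (⟨(a:ℕ), h1⟩, b)) (φ (⟨(c:ℕ), h2⟩, d)) ↔
          (pK2 p).Adj (⟨(a:ℕ), h1⟩, b) (⟨(c:ℕ), h2⟩, d)) from φ.map_rel_iff]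
      show (⟨(a:ℕ), h1⟩ : Fin p) = ⟨(c:ℕ), h2⟩ ∧ b ≠ d ↔ _
      constructor
      · rintro ⟨h, h'⟩
        refine ⟨Fin.ext ?_, h'⟩
        have := congrArg (Fin.val (n := p)) h; simpa using this
      · rintro ⟨h, h'⟩
        exact ⟨Fin.ext (congrArg (Fin.val (n := p + 1)) h), h'⟩
    · rw [dif_pos h1, dif_neg h2]
      constructor
      · intro h
        exfalso
        by_cases hd : d = 0
        · rw [if_pos hd] at h; exact (hmiss (⟨a, h1⟩, b) u (Or.inl rfl)).1 h
        · rw [if_neg hd] at h; exact (hmiss (⟨a, h1⟩, b) v (Or.inr rfl)).1 h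
      · rintro ⟨h, -⟩
        exfalso; rw [h] at h1; exact h2 h1
    · rw [dif_neg h1, dif_pos h2]
      constructor
      · intro h
        exfalso
        by_cases hb : b = 0
        · rw [if_pos hb] at h
          exact (hmiss (⟨c, h2⟩, d) u (Or.inl rfl)).1 h.symm
        · rw [if_neg hb] at h
          exact (hmiss (⟨c, h2⟩, d) v (Or.inr rfl)).1 h.symm
      · rintro ⟨h, -⟩
        exfalso; rw [h] at h1; exact h1 h2
    · rw [dif_neg h1, dif_neg h2]
      have hac : a = c := Fin.ext (by omega)
      by_cases hb : b = 0 <;> by_cases hd : d = 0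
      · rw [if_pos hb, if_pos hd]
        exact iff_of_false (G.loopless.irrefl u) (fun hh => hh.2 (hb.trans hd.symm))
      · rw [if_pos hb, if_neg hd]
        exact iff_of_true huv ⟨hac, fun hh => hd (hh.symm.trans hb)⟩
      · rw [if_neg hb, if_pos hd]
        exact iff_of_true huv.symm ⟨hac, fun hh => hb (hh.trans hd)⟩
      · rw [if_neg hb, if_neg hd]
        refine iff_of_false (G.loopless.irrefl v) ?_
        rintro ⟨-, h⟩
        exact h ((Fin.eq_one_of_ne_zero b hb).trans (Fin.eq_one_of_ne_zero d hd).symm)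

noncomputable def pK2_zero_embed {V : Type} (G : SimpleGraph V) : pK2 0 ↪g G :=
  ⟨⟨fun x => x.1.elim0, fun x => x.1.elim0⟩, fun {x} => x.1.elim0⟩

lemma card_le_cliqueNum' {V : Type} [Fintype V] {G : SimpleGraph V} {t : Finset V}
    (h : G.IsClique ↑t) : t.card ≤ G.cliqueNum :=
  IsClique.card_le_cliqueNum (tc := h)

lemma wagon : ∀ (p : ℕ) (ω : ℕ) (V : Type) [Fintype V] (G : SimpleGraph V),
    IsEmpty (pK2 (p+1) ↪g G) → G.CliqueFree (ω+1) → G.Colorable (fW (p+1) ω) := by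
  intro p
  induction p with
  | zero =>
    intro ω V _ G hemb _
    have h1 : fW 1 ω = 1 := rfl
    rw [h1]
    refine ⟨Coloring.mk (fun _ => 0) ?_⟩
    intro v w hadj _
    exact hemb.false (pK2_extend (pK2_zero_embed G) hadj (fun x => x.1.elim0))
  | succ p IH =>
    intro ω V _ G hemb hfree
    classical
    obtain ⟨t, ht⟩ := G.exists_isNClique_cliqueNum
    set s := G.cliqueNum with hs
    have hcard : t.card = s := ht.2
    have hsω : s ≤ ω := by
      by_contra hlt
      push_neg at hlt
      obtain ⟨t', ht', hc'⟩ := Finset.exists_subset_card_eq (hcard ▸ hlt)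
      exact hfree t' ⟨ht.1.subset (Finset.coe_subset.mpr ht'), hc'⟩
    let c : Fin s → V := fun i => (t.equivFin.symm (Fin.cast hcard.symm i) : V)
    have hmem : ∀ i, c i ∈ t := fun i => (t.equivFin.symm _).2
    have hinj : Function.Injective c := by
      intro i j hij
      have h2 := t.equivFin.symm.injective (Subtype.coe_injective hij)
      have h3 : (i : ℕ) = j := by simpa using congrArg (Fin.val (n := t.card)) h2
      exact Fin.ext h3
    have hsurj : ∀ v ∈ t, ∃ i, c i = v := by
      intro v hv
      refine ⟨Fin.cast hcard (t.equivFin ⟨v, hv⟩), ?_⟩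
      simp [c]
    have hadjc : ∀ i j, i ≠ j → G.Adj (c i) (c j) := fun i j hij =>
      ht.1 (Finset.mem_coe.mpr (hmem i)) (Finset.mem_coe.mpr (hmem j))
        (fun h => hij (hinj h))
    let T : Fin s → Set V := fun i => {v | ¬ G.Adj v (c i) ∧ ∀ j, j ≠ i → G.Adj v (c j)}
    let P : {a : Sym2 (Fin s) // ¬ a.IsDiag} → Set V :=
      fun a => {v | ∀ i ∈ a.1, ¬ G.Adj v (c i) ∧ v ≠ c i}
    have hspos : ∀ (_ : Fin s), 1 ≤ s := fun i => Nat.pos_of_ne_zero (fun h => (h ▸ i).elim0)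
    -- T i has no edges
    have hTindep : ∀ i, ∀ x ∈ T i, ∀ y ∈ T i, ¬ G.Adj x y := by
      intro i x hx y hy hxy
      have hxne : x ≠ c i := by rintro rfl; exact hy.1 hxy.symm
      have hyne : y ≠ c i := by rintro rfl; exact hx.1 hxy
      have hxt : x ∉ t := by
        intro hxt
        obtain ⟨j, hj⟩ := hsurj x hxt
        rcases eq_or_ne j i with rfl | hji
        · exact hxne hj.symm
        · have h4 : G.Adj x (c j) := hx.2 j hji
          rw [hj] at h4
          exact G.loopless.irrefl x h4
      have hyt : y ∉ t := by
        intro hyt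
        obtain ⟨j, hj⟩ := hsurj y hyt
        rcases eq_or_ne j i with rfl | hji
        · exact hyne hj.symm
        · have h4 : G.Adj y (c j) := hy.2 j hji
          rw [hj] at h4
          exact G.loopless.irrefl y h4
      have hbase : G.IsClique ↑(t.erase (c i)) :=
        ht.1.subset (Finset.coe_subset.mpr (Finset.erase_subset _ _))
      have hb_spec : ∀ b ∈ t.erase (c i), ∃ j, j ≠ i ∧ c j = b := by
        intro b hb
        obtain ⟨j, hj⟩ := hsurj b (Finset.mem_of_mem_erase hb)
        refine ⟨j, ?_, hj⟩
        rintro rfl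
        exact (Finset.ne_of_mem_erase hb) hj.symm
      have hstep1 : G.IsClique (insert y ↑(t.erase (c i))) := by
        refine hbase.insert ?_
        intro b hb _
        obtain ⟨j, hji, rfl⟩ := hb_spec b hb
        exact hy.2 j hji
      have hstep2 : G.IsClique (insert x (insert y ↑(t.erase (c i)))) := by
        refine hstep1.insert ?_
        intro b hb _
        rcases hb with rfl | hb
        · exact hxy
        · obtain ⟨j, hji, rfl⟩ := hb_spec b hb
          exact hx.2 j hji
      have hKc : G.IsClique (↑(insert x (insert y (t.erase (c i)))) : Set V) := by
        rw [Finset.coe_insert, Finset.coe_insert]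
        exact hstep2
      have hKcard : (insert x (insert y (t.erase (c i)))).card = s + 1 := by
        rw [Finset.card_insert_of_notMem, Finset.card_insert_of_notMem,
          Finset.card_erase_of_mem (hmem i), hcard]
        · have := hspos i; omega
        · intro hc'; exact hyt (Finset.mem_of_mem_erase hc')
        · intro hc'
          rcases Finset.mem_insert.mp hc' with rfl | hc''
          · exact hxy.ne rfl
          · exact hxt (Finset.mem_of_mem_erase hc'')
      have := card_le_cliqueNum' hKc
      rw [hKcard, ← hs] at this
      omega
    -- P a induces a (p+1)K2-free graph
    have hPfree : ∀ a, IsEmpty (pK2 (p+1) ↪g (G.induce (P a))) := by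
      intro a
      constructor
      intro φ
      obtain ⟨⟨i, j⟩, hrep⟩ := Quot.exists_rep a.1
      have hij : i ≠ j := by
        intro h
        exact a.2 (by rw [← hrep, h]; exact Sym2.mk_isDiag_iff.mpr rfl)
      have hmemi : i ∈ a.1 := by rw [← hrep]; exact Sym2.mem_mk_left i j
      have hmemj : j ∈ a.1 := by rw [← hrep]; exact Sym2.mem_mk_right i j
      refine hemb.false (pK2_extend ((Embedding.induce (P a)).comp φ) (hadjc i j hij) ?_)
      intro x w hw
      have hprop := (φ x).2
      rcases hw with rfl | rfl
      · exact hprop i hmemi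
      · exact hprop j hmemj
    -- cover
    have hcover : ∀ v, ∃ k : Fin s ⊕ {a : Sym2 (Fin s) // ¬ a.IsDiag},
        v ∈ Sum.elim T P k := by
      intro v
      by_cases hvt : v ∈ t
      · obtain ⟨i, rfl⟩ := hsurj v hvt
        exact ⟨Sum.inl i, fun h => G.loopless.irrefl _ h, fun j hj => hadjc i j (Ne.symm hj)⟩
      · have hvc : ∀ i, v ≠ c i := fun i h => hvt (h ▸ hmem i)
        set M := Finset.univ.filter (fun i : Fin s => ¬ G.Adj v (c i)) with hM
        rcases Nat.lt_or_ge M.card 2 with h2 | h2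
        · rcases Nat.lt_or_ge M.card 1 with h1 | h1
          · exfalso
            have hMe : M = ∅ := Finset.card_eq_zero.mp (by omega)
            have hall : ∀ i, G.Adj v (c i) := by
              intro i
              by_contra hna
              have : i ∈ M := Finset.mem_filter.mpr ⟨Finset.mem_univ _, hna⟩
              rw [hMe] at this
              exact absurd this (Finset.notMem_empty i)
            have hclq : G.IsClique (↑(insert v t) : Set V) := by
              rw [Finset.coe_insert]
              refine ht.1.insert ?_
              intro b hb _
              obtain ⟨i, rfl⟩ := hsurj b hb
              exact hall i
            have hcard2 : (insert v t).card = s + 1 := by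
              rw [Finset.card_insert_of_notMem hvt, hcard]
            have := card_le_cliqueNum' hclq
            rw [hcard2, ← hs] at this
            omega
          · have hM1 : M.card = 1 := by omega
            obtain ⟨i, hi⟩ := Finset.card_eq_one.mp hM1
            refine ⟨Sum.inl i, ?_, ?_⟩
            · have : i ∈ M := hi ▸ Finset.mem_singleton_self i
              exact (Finset.mem_filter.mp this).2
            · intro j hj
              by_contra hna
              have : j ∈ M := Finset.mem_filter.mpr ⟨Finset.mem_univ _, hna⟩
              rw [hi] at this
              exact hj (Finset.mem_singleton.mp this)
        · obtain ⟨i, hiM, j, hjM, hij⟩ := Finset.one_lt_card.mp h2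
          refine ⟨Sum.inr ⟨s(i, j), by simp [Sym2.mk_isDiag_iff, hij]⟩, ?_⟩
          intro k hk
          rw [Sym2.mem_iff] at hk
          rcases hk with rfl | rfl
          · exact ⟨(Finset.mem_filter.mp hiM).2, hvc _⟩
          · exact ⟨(Finset.mem_filter.mp hjM).2, hvc _⟩
    have hcols : ∀ k, (G.induce (Sum.elim T P k)).Colorable
        (Sum.elim (fun _ => 1) (fun _ => fW (p+1) ω) k) := by
      rintro (i | a)
      · exact indep_colorable_one _ _ (hTindep i)
      · exact IH ω _ _ (hPfree a) (hfree.comap (Embedding.induce (P a)).isContained)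
    have hcol := colorable_of_cover G _ _ hcover hcols
    have hsum : (∑ k : Fin s ⊕ {a : Sym2 (Fin s) // ¬ a.IsDiag},
        Sum.elim (fun _ => 1) (fun _ => fW (p+1) ω) k) = s * 1 + s.choose 2 * fW (p+1) ω := by
      rw [Fintype.sum_sum_type]
      simp only [Sum.elim_inl, Sum.elim_inr, Finset.sum_const, Finset.card_univ, smul_eq_mul, Fintype.card_fin]
      rw [Sym2.card_subtype_not_diag, Fintype.card_fin]
    rw [hsum] at hcol
    have hfw : fW (p + 1 + 1) ω = ω.choose 2 * fW (p+1) ω + ω := rfl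
    rw [hfw]
    refine hcol.mono ?_
    have := Nat.choose_le_choose 2 hsω
    have := Nat.mul_le_mul_right (fW (p+1) ω) this
    omega

end aux

lemma cliqueFree_succ_cliqueNum {V : Type} [Fintype V] (G : SimpleGraph V) :
    G.CliqueFree (G.cliqueNum + 1) := by
  intro t ht
  have h1 := card_le_cliqueNum' ht.1
  have h2 := ht.2
  omega


theorem stmt_6 :
    (∀ p : ℕ, 1 ≤ p → ∀ (V : Type) [Fintype V] (G : SimpleGraph V),
      IsEmpty (pK2 p ↪g G) → G.chromaticNumber ≤ (fW p G.cliqueNum : ℕ∞)) ∧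
    (∀ (V : Type) [Fintype V] (G : SimpleGraph V),
      IsEmpty (pK2 2 ↪g G) →
        G.chromaticNumber ≤ (Nat.choose (G.cliqueNum + 1) 2 : ℕ∞)) := by
  constructor
  · intro p hp V _ G hfree
    obtain ⟨q, rfl⟩ : ∃ q, p = q + 1 := ⟨p - 1, by omega⟩
    exact (wagon q G.cliqueNum V G hfree (cliqueFree_succ_cliqueNum G)).chromaticNumber_le
  · intro V _ G hfree
    have h := wagon 1 G.cliqueNum V G hfree (cliqueFree_succ_cliqueNum G)
    have h2 : (G.cliqueNum + 1).choose 2 = G.cliqueNum + G.cliqueNum.choose 2 := by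
      rw [Nat.choose_succ_succ, Nat.choose_one_right]
    have h3 : fW 2 G.cliqueNum = G.cliqueNum.choose 2 * 1 + G.cliqueNum := rfl
    have h4 : G.Colorable ((G.cliqueNum + 1).choose 2) := h.mono (by rw [h3, h2]; omega)
    exact h4.chromaticNumber_le
end

section
/- Define f_p^W : ℕ → ℕ for p ≥ 1 by f_1^W(ω) = 1 and f_{p+1}^W(ω) = C(ω,2)·f_p^W(ω) + ω, and let f_{pK₂}(ω) = C(ω−1+2(p−1), 2(p−1)). For all integers p ≥ 1 and ω ≥ 1: if ω > 2 and p > 2 then f_p^W(ω) > f_{pK₂}(ω), and otherwise (i.e., if ω ≤ 2 or p ≤ 2) f_p^W(ω) = f_{pK₂}(ω). -/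
lemma fW_at_one : ∀ p, fW (p+1) 1 = 1
  | 0 => rfl
  | p+1 => by
      show Nat.choose 1 2 * fW (p+1) 1 + 1 = 1
      rw [fW_at_one p]; decide

lemma fW_at_two : ∀ p, fW (p+1) 2 = 2*p + 1
  | 0 => rfl
  | p+1 => by
      show Nat.choose 2 2 * fW (p+1) 2 + 2 = _
      rw [fW_at_two p, Nat.choose_self]
      ring

lemma fW_two (ω : ℕ) : fW 2 ω = Nat.choose (ω+1) 2 := by
  show Nat.choose ω 2 * 1 + ω = _
  rw [Nat.choose_succ_succ, Nat.choose_one_right]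
  ring

lemma key (n k : ℕ) (hn : 2 ≤ n) (hk : 2 ≤ k) :
    Nat.choose (n+k+2) (k+2) ≤ Nat.choose (n+1) 2 * Nat.choose (n+k) k := by
  set A := Nat.choose (n+k+2) (k+2) with hA
  set B := Nat.choose (n+k+1) (k+1) with hB
  set C := Nat.choose (n+k) k with hC
  set D := Nat.choose (n+1) 2 with hD
  have h1 : (n+k+2) * B = A * (k+2) := Nat.add_one_mul_choose_eq (n+k+1) (k+1)
  have h2 : (n+k+1) * C = B * (k+1) := Nat.add_one_mul_choose_eq (n+k) k
  have h3 : (n+1) * n = D * 2 := by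
    have h := Nat.add_one_mul_choose_eq n 1
    rwa [Nat.choose_one_right] at h
  have heq : (k+1)*(k+2)*A = (n+k+1)*(n+k+2)*C := by
    calc (k+1)*(k+2)*A = (k+1)*(A*(k+2)) := by ring
      _ = (k+1)*((n+k+2)*B) := by rw [h1]
      _ = (n+k+2)*(B*(k+1)) := by ring
      _ = (n+k+2)*((n+k+1)*C) := by rw [h2]
      _ = (n+k+1)*(n+k+2)*C := by ring
  have harith : 2 * ((n+k+1)*(n+k+2)) ≤ (k+1)*(k+2)*((n+1)*n) := by
    obtain ⟨a, rfl⟩ : ∃ a, n = a + 2 := ⟨n - 2, by omega⟩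
    obtain ⟨b, rfl⟩ : ∃ b, k = b + 2 := ⟨k - 2, by omega⟩
    nlinarith [sq_nonneg (a+b), Nat.zero_le a, Nat.zero_le b, Nat.zero_le (a*b)]
  have hbig : 2*((k+1)*(k+2)) * A ≤ 2*((k+1)*(k+2)) * (D * C) := by
    calc 2*((k+1)*(k+2)) * A = 2 * ((n+k+1)*(n+k+2)) * C := by rw [mul_assoc 2, heq]; ring
      _ ≤ (k+1)*(k+2)*((n+1)*n) * C := Nat.mul_le_mul_right C harith
      _ = (k+1)*(k+2)*(D*2) * C := by rw [h3]
      _ = 2*((k+1)*(k+2)) * (D * C) := by ring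
  exact Nat.le_of_mul_le_mul_left hbig (by positivity)

lemma fW_ge (n : ℕ) (hn : 2 ≤ n) :
    ∀ q, Nat.choose (n + 2*(q+1)) (2*(q+1)) ≤ fW (q+2) (n+1)
  | 0 => by
      rw [fW_two]
  | q+1 => by
      have ih := fW_ge n hn q
      have hkey := key n (2*(q+1)) hn (by omega)
      show Nat.choose _ _ ≤ Nat.choose (n+1) 2 * fW (q+2) (n+1) + (n+1)
      calc Nat.choose (n + 2*(q+2)) (2*(q+2))
          = Nat.choose (n + 2*(q+1) + 2) (2*(q+1) + 2) := by congr 1 <;> ring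
        _ ≤ Nat.choose (n+1) 2 * Nat.choose (n + 2*(q+1)) (2*(q+1)) := hkey
        _ ≤ Nat.choose (n+1) 2 * fW (q+2) (n+1) := Nat.mul_le_mul_left _ ih
        _ ≤ _ := Nat.le_add_right _ _

theorem stmt_8 (p ω : ℕ) (hp : 1 ≤ p) (hω : 1 ≤ ω) :
    (2 < ω → 2 < p →
      Nat.choose (ω - 1 + 2 * (p - 1)) (2 * (p - 1)) < fW p ω) ∧
    (ω ≤ 2 ∨ p ≤ 2 →
      fW p ω = Nat.choose (ω - 1 + 2 * (p - 1)) (2 * (p - 1))) := by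
  constructor
  · intro hω3 hp3
    obtain ⟨n, rfl⟩ : ∃ n, ω = n + 1 := ⟨ω - 1, by omega⟩
    obtain ⟨q, rfl⟩ : ∃ q, p = q + 3 := ⟨p - 3, by omega⟩
    have hn : 2 ≤ n := by omega
    have h1 : Nat.choose (n + 2*(q+1)) (2*(q+1)) ≤ fW (q+2) (n+1) := fW_ge n hn q
    have hkey := key n (2*(q+1)) hn (by omega)
    have : Nat.choose (n + 2*(q+2)) (2*(q+2)) < fW (q+3) (n+1) := by
      show _ < Nat.choose (n+1) 2 * fW (q+2) (n+1) + (n+1)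
      calc Nat.choose (n + 2*(q+2)) (2*(q+2))
          = Nat.choose (n + 2*(q+1) + 2) (2*(q+1) + 2) := by congr 1 <;> ring
        _ ≤ Nat.choose (n+1) 2 * Nat.choose (n + 2*(q+1)) (2*(q+1)) := hkey
        _ ≤ Nat.choose (n+1) 2 * fW (q+2) (n+1) := Nat.mul_le_mul_left _ h1
        _ < _ := by omega
    convert this using 2 <;> omega
  · intro h
    rcases h with h | h
    · interval_cases ω
      · obtain ⟨q, rfl⟩ : ∃ q, p = q + 1 := ⟨p - 1, by omega⟩
        rw [fW_at_one]
        simp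
      · obtain ⟨q, rfl⟩ : ∃ q, p = q + 1 := ⟨p - 1, by omega⟩
        rw [fW_at_two]
        have : (2 : ℕ) - 1 + 2 * (q + 1 - 1) = 2*q + 1 := by omega
        rw [this, show 2 * (q+1-1) = 2*q from by omega]
        exact (Nat.choose_succ_self_right (2*q)).symm
    · interval_cases p
      · show (1 : ℕ) = _
        simp
      · rw [fW_two]
        congr 1 <;> omega
end

section
/- Let p ≥ 1 be an integer and 𝐇 a set of graphs such that every 𝐇-free graph is perfect. Then every (pK₂ ∪ 𝐇)-free graph G satisfies χ(G) ≤ C(ω(G)+2p, 2p+1), where C(a,b) denotes the binomial coefficient. -/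
open SimpleGraph

/-- A graph is perfect if every induced subgraph has chromatic number equal to
its clique number. -/
def IsPerfect {V : Type} (G : SimpleGraph V) : Prop :=
  ∀ s : Set V, (G.induce s).chromaticNumber = ((G.induce s).cliqueNum : ℕ∞)

open Finset

lemma hockey (r : ℕ) : ∀ w, ∑ m ∈ range (w+1), (m+r).choose r = (w+r+1).choose (r+1) := by
  intro w
  induction w with
  | zero => simp
  | succ w ih =>
    rw [Finset.sum_range_succ, ih]
    have h2 : w + 1 + r + 1 = (w + r + 1) + 1 := by ring
    rw [h2, Nat.choose_succ_succ (w + r + 1) r]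
    have h1 : w + 1 + r = (w + r) + 1 := by ring
    rw [h1]
    simp only [Nat.succ_eq_add_one]
    omega

lemma identB (r : ℕ) : ∀ w, ∑ m ∈ range (w+1), (w - m) * (m+r).choose r = (w+r+1).choose (r+2) := by
  intro w
  induction w with
  | zero => simp [Nat.choose_eq_zero_of_lt]
  | succ w ih =>
    rw [Finset.sum_range_succ]
    have he : ∀ m ∈ range (w+1), (w + 1 - m) * (m+r).choose r
        = (w - m) * (m+r).choose r + (m+r).choose r := by
      intro m hm
      rw [Finset.mem_range] at hm
      have : w + 1 - m = (w - m) + 1 := by omega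
      rw [this]; ring
    rw [Finset.sum_congr rfl he, Finset.sum_add_distrib, ih, hockey r w]
    have h2 : w + 1 + r + 1 = (w + r + 1) + 1 := by ring
    rw [h2, Nat.choose_succ_succ (w + r + 1) (r+1)]
    have h3 : w + 1 - (w + 1) = 0 := by omega
    rw [h3]
    have h4 : w + 1 + r = w + r + 1 := by ring
    rw [h4]
    simp only [Nat.succ_eq_add_one]
    have h5 : (w + r + 1).choose (r + 1 + 1) = (w + r + 1).choose (r + 2) := by norm_num
    rw [h5]
    omega

lemma identC (r w : ℕ) : ∑ m ∈ range (w+1), m * ((w - m + r).choose r) = (w+r+1).choose (r+2) := by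
  rw [← identB r w, ← Finset.sum_range_reflect (fun m => (w - m) * (m+r).choose r) (w+1)]
  apply Finset.sum_congr rfl
  intro m hm
  rw [Finset.mem_range] at hm
  have h1 : w + 1 - 1 - m = w - m := by omega
  have h2 : w - (w - m) = m := by omega
  rw [h1, h2]

lemma cliqueNum_le_of_embedding {V U : Type} [Fintype V] [Fintype U] {G' : SimpleGraph V}
    {G : SimpleGraph U} (f : G' ↪g G) : G'.cliqueNum ≤ G.cliqueNum := by
  obtain ⟨s, hs⟩ := G'.exists_isNClique_cliqueNum
  have hcl : G.IsClique ↑(s.map f.toEmbedding) := by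
    intro a ha b hb hne
    simp only [Finset.coe_map, Set.mem_image, Finset.mem_coe] at ha hb
    obtain ⟨a', ha', rfl⟩ := ha
    obtain ⟨b', hb', rfl⟩ := hb
    exact f.map_rel_iff.2 (hs.isClique ha' hb' (fun h => hne (congrArg _ h)))
  have := IsClique.card_le_cliqueNum (G := G) (tc := hcl)
  rwa [Finset.card_map, hs.card_eq] at this

lemma perfect_colorable {V : Type} [Fintype V] (G : SimpleGraph V) (h : IsPerfect G) :
    G.Colorable G.cliqueNum := by
  have h1 := h Set.univ
  have h2 : (G.induce Set.univ).Colorable (G.induce Set.univ).cliqueNum := by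
    rw [← chromaticNumber_le_iff_colorable, h1]
  have h3 : G.Colorable (G.induce Set.univ).cliqueNum :=
    Colorable.of_hom (G.induceUnivIso).symm.toEmbedding.toHom h2
  exact h3.mono (cliqueNum_le_of_embedding (G.induceUnivIso).toEmbedding)

lemma embed_zero {V Wt : Type} {G : SimpleGraph V} {Hg : SimpleGraph Wt} (f : Hg ↪g G) :
    Nonempty ((pK2 0 ⊕g Hg) ↪g G) := by
  refine ⟨⟨⟨Sum.elim (fun x => (x.1.elim0 : V)) f, ?_⟩, ?_⟩⟩
  · intro z1 z2 h
    match z1, z2 with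
    | Sum.inl x, _ => exact x.1.elim0
    | Sum.inr y, Sum.inl x => exact x.1.elim0
    | Sum.inr y1, Sum.inr y2 =>
      simp only [Sum.elim_inr] at h
      exact congrArg _ (f.injective h)
  · intro z1 z2
    match z1, z2 with
    | Sum.inl x, _ => exact x.1.elim0
    | _, Sum.inl x => exact x.1.elim0
    | Sum.inr y1, Sum.inr y2 =>
      exact f.map_rel_iff

lemma pk2_adj {p : ℕ} (x y : Fin p × Fin 2) : (pK2 p).Adj x y ↔ x.1 = y.1 ∧ x.2 ≠ y.2 := Iff.rfl

lemma embed_step {V Wt : Type} {G : SimpleGraph V} {Hg : SimpleGraph Wt} {p : ℕ}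
    {A : Set V} {a b : V} (hab : G.Adj a b)
    (hA : ∀ x, x ∈ A → ¬ G.Adj x a ∧ ¬ G.Adj x b ∧ x ≠ a ∧ x ≠ b)
    (f : (pK2 p ⊕g Hg) ↪g (G.induce A)) :
    Nonempty ((pK2 (p+1) ⊕g Hg) ↪g G) := by
  classical
  have hmem : ∀ u, ((f u : ↥A) : V) ∈ A := fun u => (f u).2
  have hab' : a ≠ b := hab.ne
  refine ⟨⟨⟨fun z =>
    match z with
    | Sum.inl kc => if h : (kc.1 : ℕ) < p then ((f (Sum.inl (⟨kc.1, h⟩, kc.2)) : ↥A) : V)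
        else (if kc.2 = 0 then a else b)
    | Sum.inr y => ((f (Sum.inr y) : ↥A) : V), ?_⟩, ?_⟩⟩
  · -- injectivity
    rintro (⟨k1, c1⟩ | y1) (⟨k2, c2⟩ | y2) h <;> simp only at h
    · by_cases h1 : (k1 : ℕ) < p <;> by_cases h2 : (k2 : ℕ) < p <;>
        simp only [h1, h2, dif_pos, dif_neg, not_false_iff] at h
      · have h' := f.injective (Subtype.val_injective h)
        rw [Sum.inl.injEq, Prod.mk.injEq, Fin.mk.injEq] at h'
        have : k1 = k2 := Fin.ext h'.1
        rw [this, h'.2]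
      · split at h
        · exact absurd h (hA _ (hmem _)).2.2.1
        · exact absurd h (hA _ (hmem _)).2.2.2
      · split at h
        · exact absurd h.symm (hA _ (hmem _)).2.2.1
        · exact absurd h.symm (hA _ (hmem _)).2.2.2
      · have hk : k1 = k2 := by
          apply Fin.ext
          omega
        split at h <;> split at h
        · rename_i e1 e2
          rw [hk, e1, e2]
        · exact absurd h hab'
        · exact absurd h.symm hab'
        · rename_i e1 e2
          rw [hk]
          congr 2
          omega
    · by_cases h1 : (k1 : ℕ) < p <;> simp only [h1, dif_pos, dif_neg, not_false_iff] at h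
      · exact absurd (f.injective (Subtype.val_injective h)) (by simp)
      · split at h
        · exact absurd h.symm (hA _ (hmem _)).2.2.1
        · exact absurd h.symm (hA _ (hmem _)).2.2.2
    · by_cases h2 : (k2 : ℕ) < p <;> simp only [h2, dif_pos, dif_neg, not_false_iff] at h
      · exact absurd (f.injective (Subtype.val_injective h)) (by simp)
      · split at h
        · exact absurd h (hA _ (hmem _)).2.2.1
        · exact absurd h (hA _ (hmem _)).2.2.2
    · rw [Sum.inr.injEq]
      exact Sum.inr.inj (f.injective (Subtype.val_injective h))
  · -- map_rel_iff
    rintro (⟨k1, c1⟩ | y1) (⟨k2, c2⟩ | y2) <;>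
      simp only [RelEmbedding.coe_mk, Function.Embedding.coeFn_mk, sum_adj, pk2_adj, DFunLike.coe] <;>
      simp only [Function.Embedding.toFun_eq_coe, RelEmbedding.coe_toEmbedding]
    · by_cases h1 : (k1 : ℕ) < p <;> by_cases h2 : (k2 : ℕ) < p <;>
        simp only [h1, h2, dif_pos, dif_neg, not_false_iff]
      · rw [show (G.Adj ((f (Sum.inl (⟨k1, h1⟩, c1))  : ↥A) : V) ((f (Sum.inl (⟨k2, h2⟩, c2)) : ↥A) : V))
              ↔ (G.induce A).Adj (f (Sum.inl (⟨k1, h1⟩, c1))) (f (Sum.inl (⟨k2, h2⟩, c2))) from Iff.rfl,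
            f.map_rel_iff]
        simp only [sum_adj, pk2_adj]
        constructor
        · rintro ⟨e, hc⟩
          rw [Fin.mk.injEq] at e
          exact ⟨Fin.ext e, hc⟩
        · rintro ⟨e, hc⟩
          rw [Fin.mk.injEq]
          exact ⟨congrArg Fin.val e, hc⟩
      · constructor
        · intro hadj
          exfalso
          split at hadj
          · exact (hA _ (hmem _)).1 hadj
          · exact (hA _ (hmem _)).2.1 hadj
        · rintro ⟨e, _⟩
          exfalso
          rw [Fin.ext_iff] at e
          omega
      · constructor
        · intro hadj
          exfalso
          split at hadj
          · exact (hA _ (hmem _)).1 hadj.symm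
          · exact (hA _ (hmem _)).2.1 hadj.symm
        · rintro ⟨e, _⟩
          exfalso
          rw [Fin.ext_iff] at e
          omega
      · have hk : k1 = k2 := by apply Fin.ext; omega
        constructor
        · intro hadj
          refine ⟨hk, ?_⟩
          intro hc
          rw [hc] at hadj
          split at hadj <;> exact G.loopless.irrefl _ hadj
        · rintro ⟨_, hc⟩
          rcases Fin.exists_fin_two.mp ⟨c1, rfl⟩ with _ | _
          all_goals {
            split <;> split
            all_goals first
              | exact hab
              | exact hab.symm
              | (exfalso; apply hc; omega)
          }
    · by_cases h1 : (k1 : ℕ) < p <;> simp only [h1, dif_pos, dif_neg, not_false_iff]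
      · constructor
        · intro hadj
          have := f.map_rel_iff.mp
            (show (G.induce A).Adj (f (Sum.inl (⟨k1, h1⟩, c1))) (f (Sum.inr y2)) from hadj)
          simpa using this
        · exact False.elim
      · constructor
        · intro hadj
          split at hadj
          · exact (hA _ (hmem _)).1 hadj.symm
          · exact (hA _ (hmem _)).2.1 hadj.symm
        · exact False.elim
    · by_cases h2 : (k2 : ℕ) < p <;> simp only [h2, dif_pos, dif_neg, not_false_iff]
      · constructor
        · intro hadj
          have := f.map_rel_iff.mp
            (show (G.induce A).Adj (f (Sum.inr y1)) (f (Sum.inl (⟨k2, h2⟩, c2))) from hadj)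
          simpa using this
        · exact False.elim
      · constructor
        · intro hadj
          split at hadj
          · exact (hA _ (hmem _)).1 hadj
          · exact (hA _ (hmem _)).2.1 hadj
        · exact False.elim
    · exact f.map_rel_iff

lemma key_s9 {ι : Type} (W : ι → Type) [∀ i, Fintype (W i)] (H : ∀ i, SimpleGraph (W i))
    (hperf : ∀ (V : Type) [Fintype V] (G : SimpleGraph V),
      (∀ i, IsEmpty (H i ↪g G)) → IsPerfect G) :
    ∀ (p : ℕ) (V : Type) [Fintype V] (G : SimpleGraph V),
      (∀ i, IsEmpty ((pK2 p ⊕g H i) ↪g G)) →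
      G.Colorable ((G.cliqueNum + 2 * p).choose (2 * p + 1)) := by
  intro p
  induction p with
  | zero =>
    intro V _ G hG
    have hfree : ∀ i, IsEmpty (H i ↪g G) := by
      intro i
      constructor
      intro f
      exact (hG i).false (embed_zero f).some
    have h := perfect_colorable G (hperf V G hfree)
    simpa using h
  | succ p IH =>
    intro V _ G hG
    classical
    cases isEmpty_or_nonempty V with
    | inl hV => exact Colorable.of_isEmpty _
    | inr hV =>
    set w := G.cliqueNum with hw
    obtain ⟨K, hK⟩ := G.exists_isNClique_cliqueNum
    have hcard : Fintype.card ↥K = w := by rw [Fintype.card_coe, hK.card_eq]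
    let e : ↥K ≃ Fin w := Fintype.equivFinOfCardEq hcard
    let v : Fin w → V := fun i => ((e.symm i : ↥K) : V)
    have hv_inj : Function.Injective v := fun i j h =>
      e.symm.injective (Subtype.val_injective h)
    have hv_mem : ∀ i, v i ∈ K := fun i => (e.symm i).2
    have hv_surj : ∀ x ∈ K, ∃ i, v i = x := by
      intro x hx
      exact ⟨e ⟨x, hx⟩, by simp [v]⟩
    have hv_adj : ∀ i j, i ≠ j → G.Adj (v i) (v j) := by
      intro i j hij
      exact hK.isClique (hv_mem i) (hv_mem j) (fun h => hij (hv_inj h))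
    let miss : V → Finset (Fin w) := fun x => univ.filter (fun i => ¬ G.Adj x (v i))
    have hmiss_mem : ∀ x k, k ∈ miss x ↔ ¬ G.Adj x (v k) := by
      intro x k; simp [miss]
    have hmiss_ne : ∀ x, (miss x).Nonempty := by
      intro x
      by_contra hne
      rw [Finset.not_nonempty_iff_eq_empty] at hne
      have hadj : ∀ i, G.Adj x (v i) := by
        intro i
        by_contra hc
        have : i ∈ miss x := (hmiss_mem x i).2 hc
        simp [hne] at this
      have hxK : x ∉ K := by
        intro hx
        obtain ⟨i, hi⟩ := hv_surj x hx
        exact G.loopless.irrefl x (by nth_rewrite 2 [← hi]; exact hadj i)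
      have hcl : G.IsClique ↑(insert x K) := by
        rw [Finset.coe_insert, isClique_insert]
        refine ⟨hK.isClique, ?_⟩
        intro b hb _
        obtain ⟨i, rfl⟩ := hv_surj b hb
        exact hadj i
      have hle := IsClique.card_le_cliqueNum (G := G) (tc := hcl)
      rw [Finset.card_insert_of_notMem hxK, hK.card_eq] at hle
      omega
    let i₁ : V → Fin w := fun x => (miss x).min' (hmiss_ne x)
    have hi₁_mem : ∀ x, i₁ x ∈ miss x := fun x => Finset.min'_mem _ _
    let j₂ : ∀ x, 1 < (miss x).card → Fin w := fun x h =>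
      ((miss x).erase (i₁ x)).min' (by
        rw [← Finset.card_pos, Finset.card_erase_of_mem (hi₁_mem x)]
        omega)
    have hj₂_mem : ∀ x h, j₂ x h ∈ miss x ∧ j₂ x h ≠ i₁ x := by
      intro x h
      have := Finset.min'_mem ((miss x).erase (i₁ x)) (by
        rw [← Finset.card_pos, Finset.card_erase_of_mem (hi₁_mem x)]
        omega)
      rw [Finset.mem_erase] at this
      exact ⟨this.2, this.1⟩
    have hij : ∀ x h, i₁ x < j₂ x h :=
      fun x h => lt_of_le_of_ne (Finset.min'_le _ _ (hj₂_mem x h).1) (Ne.symm (hj₂_mem x h).2)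
    have hbelow : ∀ x h k, k < j₂ x h → k ≠ i₁ x → G.Adj x (v k) := by
      intro x h k hk hki
      by_contra hc
      have hkm : k ∈ (miss x).erase (i₁ x) :=
        Finset.mem_erase.2 ⟨hki, (hmiss_mem x k).2 hc⟩
      exact absurd (Finset.min'_le _ _ hkm) (not_le.2 hk)
    let A : Fin w → Fin w → Set V := fun i j =>
      {x | ∃ h : 1 < (miss x).card, i₁ x = i ∧ j₂ x h = j}
    -- basic properties of A
    have hA_nadj : ∀ i j x, x ∈ A i j → ¬ G.Adj x (v i) ∧ ¬ G.Adj x (v j) := by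
      rintro i j x ⟨h, hi, hj⟩
      constructor
      · rw [← hi]; exact (hmiss_mem x _).1 (hi₁_mem x)
      · rw [← hj]; exact (hmiss_mem x _).1 (hj₂_mem x h).1
    have hA_adj : ∀ i j x, x ∈ A i j → ∀ k, k < j → k ≠ i → G.Adj x (v k) := by
      rintro i j x ⟨h, hi, hj⟩ k hk hki
      exact hbelow x h k (by rw [hj]; exact hk) (by rw [hi]; exact hki)
    have hA_lt : ∀ i j, (A i j).Nonempty → i < j := by
      rintro i j ⟨x, h, hi, hj⟩
      rw [← hi, ← hj]
      exact hij x h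
    have hA_prop : ∀ i j, i < j → ∀ x, x ∈ A i j →
        ¬ G.Adj x (v i) ∧ ¬ G.Adj x (v j) ∧ x ≠ v i ∧ x ≠ v j := by
      intro i j hlt x hx
      obtain ⟨h1, h2⟩ := hA_nadj i j x hx
      refine ⟨h1, h2, ?_, ?_⟩
      · rintro rfl
        exact h2 (hv_adj i j (ne_of_lt hlt))
      · rintro rfl
        exact h1 ((hv_adj i j (ne_of_lt hlt)).symm)
    -- colorability of each piece
    let N : Fin w → ℕ := fun j => (w - (j : ℕ) + (2*p+1)).choose (2*p+1)
    have hNpos : ∀ j, 0 < N j := fun j => Nat.choose_pos (Nat.le_add_left _ _)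
    have hAcol : ∀ i j : Fin w, Nonempty ((G.induce (A i j)).Coloring (Fin (N j))) := by
      intro i j
      by_cases hlt : i < j
      · haveI : Fintype ↥(A i j) := Fintype.ofFinite _
        have hfree : ∀ i₀, IsEmpty ((pK2 p ⊕g H i₀) ↪g (G.induce (A i j))) := by
          intro i₀
          constructor
          intro femb
          exact (hG i₀).false
            ((embed_step (hv_adj i j (ne_of_lt hlt)) (hA_prop i j hlt) femb).some)
        have h1 := IH ↥(A i j) (G.induce (A i j)) hfree
        -- clique number bound
        have hcl : (G.induce (A i j)).cliqueNum + (j : ℕ) ≤ w + 1 := by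
          obtain ⟨s, hs⟩ := (G.induce (A i j)).exists_isNClique_cliqueNum
          let s' : Finset V := s.map (Function.Embedding.subtype _)
          let T : Finset V := ((Iio j).erase i).image v
          have hs'A : ∀ x ∈ s', x ∈ A i j := by
            intro x hx
            rw [Finset.mem_map] at hx
            obtain ⟨u, _, rfl⟩ := hx
            exact u.2
          have hTmem : ∀ x ∈ T, ∃ k, k < j ∧ k ≠ i ∧ v k = x := by
            intro x hx
            rw [Finset.mem_image] at hx
            obtain ⟨k, hk, rfl⟩ := hx
            rw [Finset.mem_erase, Finset.mem_Iio] at hk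
            exact ⟨k, hk.2, hk.1, rfl⟩
          have hdisj : Disjoint s' T := by
            rw [Finset.disjoint_left]
            intro x hx hxT
            obtain ⟨k, hk1, hk2, rfl⟩ := hTmem x hxT
            exact G.loopless.irrefl _ (hA_adj i j _ (hs'A _ hx) k hk1 hk2)
          have hclq : G.IsClique ↑(s' ∪ T) := by
            intro a ha b hb hne
            rw [Finset.coe_union, Set.mem_union] at ha hb
            have hst : ∀ a' b', a' ∈ s' → b' ∈ T → G.Adj a' b' := by
              intro a' b' ha' hb'
              obtain ⟨k, hk1, hk2, rfl⟩ := hTmem b' hb'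
              exact hA_adj i j _ (hs'A _ ha') k hk1 hk2
            rcases ha with ha | ha <;> rcases hb with hb | hb
            · rw [Finset.mem_coe, Finset.mem_map] at ha hb
              obtain ⟨a', ha', rfl⟩ := ha
              obtain ⟨b', hb', rfl⟩ := hb
              exact hs.isClique ha' hb' (fun h => hne (congrArg _ h))
            · exact hst a b ha hb
            · exact (hst b a hb ha).symm
            · obtain ⟨k, _, _, rfl⟩ := hTmem a ha
              obtain ⟨l, _, _, rfl⟩ := hTmem b hb
              exact hv_adj k l (fun h => hne (congrArg v h))
          have hle := IsClique.card_le_cliqueNum (G := G) (tc := hclq)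
          rw [Finset.card_union_of_disjoint hdisj] at hle
          have hcs : s'.card = (G.induce (A i j)).cliqueNum := by
            rw [Finset.card_map, hs.card_eq]
          have hcT : T.card = (j : ℕ) - 1 := by
            rw [Finset.card_image_of_injective _ hv_inj,
              Finset.card_erase_of_mem (Finset.mem_Iio.2 hlt), Fin.card_Iio]
          have hj1 : 1 ≤ (j : ℕ) := by
            have : (i : ℕ) < (j : ℕ) := hlt
            omega
          omega
        refine h1.mono (Nat.choose_le_choose _ ?_)
        omega
      · have hempty : IsEmpty ↥(A i j) := by
          constructor
          rintro ⟨x, hx⟩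
          exact hlt (hA_lt i j ⟨x, hx⟩)
        exact Colorable.of_isEmpty _
    -- the final coloring
    let Q := {q : Fin w × Fin w // q.1 < q.2}
    let CC : ∀ q : Q, (G.induce (A q.1.1 q.1.2)).Coloring (Fin (N q.1.2)) :=
      fun q => (hAcol q.1.1 q.1.2).some
    let cF : ∀ q : Q, V → Fin (N q.1.2) :=
      fun q x => if hx : x ∈ A q.1.1 q.1.2 then CC q ⟨x, hx⟩ else ⟨0, hNpos _⟩
    have hcF : ∀ (q : Q) x y, x ∈ A q.1.1 q.1.2 → y ∈ A q.1.1 q.1.2 → G.Adj x y →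
        cF q x ≠ cF q y := by
      intro q x y hx hy hadj
      simp only [cF, dif_pos hx, dif_pos hy]
      exact (CC q).valid (show (G.induce _).Adj ⟨x, hx⟩ ⟨y, hy⟩ from hadj)
    let qf : ∀ x, 1 < (miss x).card → Q := fun x h => ⟨(i₁ x, j₂ x h), hij x h⟩
    have hxq : ∀ x h, x ∈ A (qf x h).1.1 (qf x h).1.2 := fun x h => ⟨h, rfl, rfl⟩
    let col : V → Fin w ⊕ (Σ q : Q, Fin (N q.1.2)) := fun x =>
      if h : 1 < (miss x).card then Sum.inr ⟨qf x h, cF (qf x h) x⟩ else Sum.inl (i₁ x)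
    have hvalid : ∀ {x y}, G.Adj x y → col x ≠ col y := by
      intro x y hadj heq
      by_cases hx : 1 < (miss x).card <;> by_cases hy : 1 < (miss y).card <;>
        simp only [col, dif_pos, dif_neg, hx, hy, not_false_iff] at heq
      · -- both ≥ 2
        rw [Sum.inr.injEq] at heq
        by_cases hq : qf x hx = qf y hy
        · rw [← hq] at heq
          have hceq : cF (qf x hx) x = cF (qf x hx) y :=
            eq_of_heq (Sigma.ext_iff.mp heq).2
          have hyA : y ∈ A (qf x hx).1.1 (qf x hx).1.2 := by
            rw [hq]; exact hxq y hy
          exact hcF _ x y (hxq x hx) hyA hadj hceq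
        · exact hq (congrArg Sigma.fst heq)
      · cases heq
      · cases heq
      · -- both singletons
        rw [Sum.inl.injEq] at heq
        have hsing : ∀ z, ¬ 1 < (miss z).card → ∀ k, k ≠ i₁ z → G.Adj z (v k) := by
          intro z hz k hk
          by_contra hc
          have hkm : k ∈ miss z := (hmiss_mem z k).2 hc
          exact hk (Finset.card_le_one.mp (not_lt.mp hz) k hkm (i₁ z) (hi₁_mem z))
        have hXadj := hsing x hx
        have hYadj' := hsing y hy
        have hYadj : ∀ k, k ≠ i₁ x → G.Adj y (v k) := by
          intro k hk
          exact hYadj' k (by rw [← heq]; exact hk)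
        have hXnadj : ¬ G.Adj x (v (i₁ x)) := (hmiss_mem x _).1 (hi₁_mem x)
        have hYnadj : ¬ G.Adj y (v (i₁ x)) := by
          rw [heq]; exact (hmiss_mem y _).1 (hi₁_mem y)
        have hxvi : x ≠ v (i₁ x) := by
          intro hxe
          exact hYnadj (by rw [← hxe]; exact hadj.symm)
        have hyvi : y ≠ v (i₁ x) := by
          intro hye
          exact hXnadj (by rw [← hye]; exact hadj)
        have hmem_er : ∀ z ∈ K.erase (v (i₁ x)), ∃ k, k ≠ i₁ x ∧ v k = z := by
          intro z hz
          obtain ⟨k, rfl⟩ := hv_surj z (Finset.mem_of_mem_erase hz)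
          exact ⟨k, fun h => (Finset.ne_of_mem_erase hz) (congrArg v h), rfl⟩
        have hxK : x ∉ K.erase (v (i₁ x)) := by
          intro hmem
          obtain ⟨k, hk, hkx⟩ := hmem_er x hmem
          exact G.loopless.irrefl x (by nth_rewrite 2 [← hkx]; exact hXadj k hk)
        have hyK : y ∉ K.erase (v (i₁ x)) := by
          intro hmem
          obtain ⟨k, hk, hky⟩ := hmem_er y hmem
          exact G.loopless.irrefl y (by nth_rewrite 2 [← hky]; exact hYadj k hk)
        have hclq : G.IsClique ↑(insert x (insert y (K.erase (v (i₁ x))))) := by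
          rw [Finset.coe_insert, Finset.coe_insert, isClique_insert, isClique_insert]
          refine ⟨⟨hK.isClique.subset (by
            rw [Finset.coe_subset]
            exact Finset.erase_subset _ _), ?_⟩, ?_⟩
          · intro b hb _
            obtain ⟨k, hk, rfl⟩ := hmem_er b hb
            exact hYadj k hk
          · intro b hb _
            rcases Set.mem_insert_iff.mp hb with rfl | hb
            · exact hadj
            · obtain ⟨k, hk, rfl⟩ := hmem_er b hb
              exact hXadj k hk
        have hle := IsClique.card_le_cliqueNum (G := G) (tc := hclq)
        have hxy : x ∉ insert y (K.erase (v (i₁ x))) := by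
          rw [Finset.mem_insert]
          rintro (rfl | hmem)
          · exact G.loopless.irrefl x hadj
          · exact hxK hmem
        rw [Finset.card_insert_of_notMem hxy, Finset.card_insert_of_notMem hyK,
          Finset.card_erase_of_mem (hv_mem (i₁ x)), hK.card_eq] at hle
        have hw1 : 1 ≤ w := Fin.pos (i₁ x)
        omega
    have hcolor := (Coloring.mk col (fun {a b} h => hvalid h)).colorable
    have hcardT : Fintype.card (Fin w ⊕ (Σ q : Q, Fin (N q.1.2)))
        = w + ∑ q : Q, N q.1.2 := by
      simp [Fintype.card_sum, Fintype.card_sigma]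
    have hsum : ∑ q : Q, N q.1.2 = ∑ m ∈ range w, m * ((w - m + (2*p+1)).choose (2*p+1)) := by
      rw [← Finset.sum_subtype (univ.filter (fun q : Fin w × Fin w => q.1 < q.2))
        (by intro q; simp) (fun q => N q.2)]
      rw [Finset.sum_filter, ← Finset.univ_product_univ, Finset.sum_product]
      rw [Finset.sum_comm]
      have hinner : ∀ j : Fin w, (∑ i : Fin w, if (i, j).1 < (i, j).2 then N (i, j).2 else 0)
          = (j : ℕ) * N j := by
        intro j
        simp only
        rw [← Finset.sum_filter, Finset.sum_const, smul_eq_mul]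
        congr 1
        rw [show (univ.filter (fun i : Fin w => i < j)) = Iio j from by
          ext k; simp, Fin.card_Iio]
      rw [Finset.sum_congr rfl (fun j _ => hinner j)]
      exact Fin.sum_univ_eq_sum_range (fun m => m * ((w - m + (2*p+1)).choose (2*p+1))) w
    rw [hcardT, hsum] at hcolor
    have hident : w + ∑ m ∈ range w, m * ((w - m + (2*p+1)).choose (2*p+1))
        = (G.cliqueNum + 2*(p+1)).choose (2*(p+1)+1) := by
      have h1 := identC (2*p+1) w
      rw [Finset.sum_range_succ, Nat.sub_self, Nat.zero_add, Nat.choose_self, Nat.mul_one] at h1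
      rw [← hw]
      have e1 : w + (2*p+1) + 1 = w + 2*(p+1) := by ring
      have e2 : (2*p+1) + 2 = 2*(p+1)+1 := by ring
      rw [e1, e2] at h1
      omega
    rw [← hident]
    exact hcolor

theorem stmt_9 (p : ℕ) (hp : 1 ≤ p) {ι : Type} (W : ι → Type) [∀ i, Fintype (W i)]
    (H : ∀ i, SimpleGraph (W i))
    (hperf : ∀ (V : Type) [Fintype V] (G : SimpleGraph V),
      (∀ i, IsEmpty (H i ↪g G)) → IsPerfect G)
    (V : Type) [Fintype V] (G : SimpleGraph V)
    (hG : ∀ i, IsEmpty ((pK2 p ⊕g H i) ↪g G)) :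
    G.chromaticNumber ≤ (Nat.choose (G.cliqueNum + 2 * p) (2 * p + 1) : ℕ∞) :=
  chromaticNumber_le_iff_colorable.mpr (key_s9 W H hperf p V G hG)
end

section
/- For every integer p ≥ 1, every (pK₂ ∪ P₄)-free graph G satisfies χ(G) ≤ C(ω(G)+2p, 2p+1), where P₄ is the path on 4 vertices and C(a,b) denotes the binomial coefficient. -/
open SimpleGraph

open Finset
variable {V : Type} {W : Type} {G : SimpleGraph V}


lemma isNClique_map_of_induce {S : Set V} {Q : Finset S} {n : ℕ}
    (h : (G.induce S).IsNClique n Q) :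
    G.IsNClique n (Q.map (Function.Embedding.subtype _)) := by
  constructor
  · rw [Finset.coe_map]
    rintro x hx y hy hxy
    simp only [Set.mem_image, Finset.mem_coe] at hx hy
    obtain ⟨a, ha, rfl⟩ := hx
    obtain ⟨b, hb, rfl⟩ := hy
    have hab : a ≠ b := fun hh => hxy (by rw [hh])
    exact h.isClique ha hb hab
  · rw [Finset.card_map, h.card_eq]

lemma cliqueNum_induce_add_le [Fintype V] (S : Set V) (F : Finset V)
    (hF : G.IsClique F) (hdisj : ∀ v ∈ S, v ∉ F)
    (hadj : ∀ v ∈ S, ∀ w ∈ F, G.Adj v w) :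
    (G.induce S).cliqueNum + F.card ≤ G.cliqueNum := by
  classical
  haveI : Fintype S := S.toFinite.fintype
  obtain ⟨Q, hQ⟩ := (G.induce S).exists_isNClique_cliqueNum
  have hQ' := isNClique_map_of_induce hQ
  set Q' : Finset V := Q.map (Function.Embedding.subtype _) with hQ'def
  have hmem : ∀ v ∈ Q', v ∈ S := by
    intro v hv
    rw [hQ'def, Finset.mem_map] at hv
    obtain ⟨a, _, rfl⟩ := hv
    exact a.2
  have hclique : G.IsClique (Q' ∪ F : Finset V) := by
    rw [Finset.coe_union]
    rw [isClique_iff, @Set.pairwise_union_of_symm _ _ _ _ G.symm]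
    refine ⟨hQ'.isClique, hF, ?_⟩
    intro a ha b hb _
    exact hadj a (hmem a ha) b hb
  have hdisj2 : Disjoint Q' F := by
    rw [Finset.disjoint_left]
    exact fun a ha => hdisj a (hmem a ha)
  calc (G.induce S).cliqueNum + F.card = (Q' ∪ F).card := by
        rw [Finset.card_union_of_disjoint hdisj2, hQ'.card_eq]
      _ ≤ G.cliqueNum := IsClique.card_le_cliqueNum (tc := hclique)


lemma induce_adj_iff {S : Set V} {a b : S} : (G.induce S).Adj a b ↔ G.Adj a.1 b.1 := Iff.rfl

lemma adj_pair_le_cliqueNum [Fintype V] {u v : V} (h : G.Adj u v) : 2 ≤ G.cliqueNum := by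
  classical
  have hc : G.IsClique (({u, v} : Finset V) : Set V) := by
    simp only [Finset.coe_insert, Finset.coe_singleton]
    rw [isClique_pair]
    exact fun _ => h
  have hcard : ({u, v} : Finset V).card = 2 := Finset.card_pair h.ne
  have := IsClique.card_le_cliqueNum (tc := hc)
  omega

lemma one_le_cliqueNum [Fintype V] [Nonempty V] : 1 ≤ G.cliqueNum := by
  classical
  obtain ⟨v⟩ := ‹Nonempty V›
  have hc : G.IsClique (({v} : Finset V) : Set V) := by simp
  have := IsClique.card_le_cliqueNum (tc := hc)
  simpa using this

lemma colorable_split_same (S : Set V) (n : ℕ)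
    (h1 : (G.induce S).Colorable n) (h2 : (G.induce Sᶜ).Colorable n)
    (hno : ∀ a ∈ S, ∀ b ∈ Sᶜ, ¬ G.Adj a b) : G.Colorable n := by
  classical
  obtain ⟨c1⟩ := h1
  obtain ⟨c2⟩ := h2
  refine ⟨Coloring.mk (fun v => if h : v ∈ S then c1 ⟨v, h⟩ else c2 ⟨v, by simpa using h⟩) ?_⟩
  intro u v huv
  by_cases hu : u ∈ S <;> by_cases hv : v ∈ S <;>
    simp only [hu, hv, dif_pos, dif_neg, not_false_iff]
  · exact c1.valid (induce_adj_iff.mpr huv)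
  · exact absurd huv (hno u hu v (by simpa using hv))
  · exact absurd huv.symm (hno v hv u (by simpa using hu))
  · exact c2.valid (induce_adj_iff.mpr huv)

lemma colorable_split_add (S : Set V) (a b : ℕ)
    (h1 : (G.induce S).Colorable a) (h2 : (G.induce Sᶜ).Colorable b) :
    G.Colorable (a + b) := by
  classical
  obtain ⟨c1⟩ := h1
  obtain ⟨c2⟩ := h2
  refine ⟨Coloring.mk (fun v => if h : v ∈ S then Fin.castAdd b (c1 ⟨v, h⟩)
    else Fin.natAdd a (c2 ⟨v, by simpa using h⟩)) ?_⟩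
  intro u v huv
  by_cases hu : u ∈ S <;> by_cases hv : v ∈ S <;>
    simp only [hu, hv, dif_pos, dif_neg, not_false_iff] <;> intro hh
  · exact c1.valid (induce_adj_iff.mpr huv) (by
      have := congrArg Fin.val hh
      simp only [Fin.coe_castAdd] at this
      exact Fin.ext this)
  · have := congrArg Fin.val hh
    simp only [Fin.coe_castAdd, Fin.coe_natAdd] at this
    have hlt := (c1 ⟨u, hu⟩).isLt
    omega
  · have := congrArg Fin.val hh
    simp only [Fin.coe_castAdd, Fin.coe_natAdd] at this
    have hlt := (c1 ⟨v, hv⟩).isLt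
    omega
  · refine c2.valid (v := ⟨u, by simpa using hu⟩) (w := ⟨v, by simpa using hv⟩)
      (induce_adj_iff.mpr huv) ?_
    have := congrArg Fin.val hh
    simp only [Fin.coe_natAdd] at this
    exact Fin.ext (by omega)


/-- complement of an induced embedding -/
def Embedding.complMap (f : H ↪g G) : Hᶜ ↪g Gᶜ where
  toFun := f
  inj' := f.inj'
  map_rel_iff' := by
    intro a b
    simp only [compl_adj, RelEmbedding.coe_mk, Function.Embedding.coeFn_mk, ne_eq,
      EmbeddingLike.apply_eq_iff_eq, f.map_adj_iff]

lemma emb4_aux : ∀ a b : Fin 4,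
    ((pathGraph 4)ᶜ.Adj ((![2, 0, 3, 1] : Fin 4 → Fin 4) a) (![2, 0, 3, 1] b) ↔
      (pathGraph 4).Adj a b) := by
  intro a b
  rw [compl_adj, pathGraph_adj, pathGraph_adj]
  fin_cases a <;> fin_cases b <;> simp <;> decide

def emb4 : pathGraph 4 ↪g (pathGraph 4)ᶜ where
  toFun := ![2, 0, 3, 1]
  inj' := by decide
  map_rel_iff' := fun {a b} => emb4_aux a b

def P4Free (G : SimpleGraph V) : Prop := IsEmpty (pathGraph 4 ↪g G)

lemma P4Free.induce (h : P4Free G) (S : Set V) : P4Free (G.induce S) :=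
  ⟨fun f => h.false ((Embedding.induce S).comp f)⟩

lemma P4Free.compl (h : P4Free G) : P4Free Gᶜ := by
  constructor
  intro f
  have f2 : (pathGraph 4)ᶜ ↪g Gᶜᶜ := Embedding.complMap f
  rw [compl_compl] at f2
  exact h.false (f2.comp emb4)

lemma induce_compl_eq (S : Set V) : (G.induce S)ᶜ = Gᶜ.induce S := by
  ext a b
  simp only [compl_adj, comap_adj, Function.Embedding.coe_subtype, ne_eq]
  constructor
  · rintro ⟨h1, h2⟩
    exact ⟨Subtype.coe_ne_coe.mpr h1, h2⟩
  · rintro ⟨h1, h2⟩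
    exact ⟨fun hh => h1 (by rw [hh]), h2⟩


def p4emb (G : SimpleGraph V) (a b c d : V) (hab : G.Adj a b) (hbc : G.Adj b c)
    (hcd : G.Adj c d) (hac : ¬G.Adj a c) (had : ¬G.Adj a d) (hbd : ¬G.Adj b d)
    (neac : a ≠ c) (nead : a ≠ d) (nebd : b ≠ d) : pathGraph 4 ↪g G where
  toFun := ![a, b, c, d]
  inj' := by
    intro x y hxy
    fin_cases x <;> fin_cases y <;> simp_all [hab.ne, hbc.ne, hcd.ne] <;>
      first
        | rfl
        | (exact absurd hxy.symm hab.ne)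
        | (exact absurd hxy.symm neac)
        | (exact absurd hxy.symm nead)
        | (exact absurd hxy.symm hbc.ne)
        | (exact absurd hxy.symm nebd)
        | (exact absurd hxy.symm hcd.ne)
  map_rel_iff' := by
    have hca : ¬G.Adj c a := fun h => hac h.symm
    have hda : ¬G.Adj d a := fun h => had h.symm
    have hdb : ¬G.Adj d b := fun h => hbd h.symm
    intro x y
    show G.Adj (![a, b, c, d] x) (![a, b, c, d] y) ↔ _
    fin_cases x <;> fin_cases y <;>
      simp [pathGraph_adj, hab, hbc, hcd, hac, had, hbd, hab.symm, hbc.symm, hcd.symm,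
        hca, hda, hdb, G.loopless.irrefl a, G.loopless.irrefl b, G.loopless.irrefl c, G.loopless.irrefl d] <;> decide

def HasSplit (G : SimpleGraph V) : Prop :=
  ∃ S : Set V, S.Nonempty ∧ Sᶜ.Nonempty ∧
    ((∀ a ∈ S, ∀ b ∈ Sᶜ, ¬G.Adj a b) ∨ (∀ a ∈ S, ∀ b ∈ Sᶜ, G.Adj a b))

lemma hasSplit_of_compl (h : HasSplit Gᶜ) : HasSplit G := by
  obtain ⟨S, hS, hSc, hcase⟩ := h
  refine ⟨S, hS, hSc, ?_⟩
  rcases hcase with hno | hall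
  · right
    intro a ha b hb
    have hne : a ≠ b := fun hh => hb (hh ▸ ha)
    have := hno a ha b hb
    rw [compl_adj] at this
    push_neg at this
    exact this hne
  · left
    intro a ha b hb
    exact (hall a ha b hb).2

lemma onecase (G : SimpleGraph V) (hfree : P4Free G) (v : V) (S T : Set V)
    (hS : S.Nonempty) (hT : T.Nonempty) (hvS : v ∉ S) (hvT : v ∉ T)
    (hcover : ∀ x, x ≠ v → x ∈ S ∨ x ∈ T)
    (hdisj : ∀ x, x ∈ S → x ∉ T)
    (hnocross : ∀ a ∈ S, ∀ b ∈ T, ¬G.Adj a b) : HasSplit G := by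
  classical
  have hSv : ∀ x ∈ S, x ≠ v := fun x hx hh => hvS (hh ▸ hx)
  have hTv : ∀ x ∈ T, x ≠ v := fun x hx hh => hvT (hh ▸ hx)
  set U : Set V := {x | G.Adj v x} with hU
  set W : Set V := {x | x ≠ v ∧ ¬G.Adj v x} with hW
  have hUW : ∀ x, x ≠ v → x ∈ U ∨ x ∈ W := by
    intro x hx
    by_cases h : G.Adj v x
    · exact Or.inl h
    · exact Or.inr ⟨hx, h⟩
  by_cases hWe : W = ∅
  · -- v adjacent to everything else
    refine ⟨{v}, ⟨v, rfl⟩, ?_, Or.inr ?_⟩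
    · obtain ⟨s, hs⟩ := hS
      exact ⟨s, fun hh => hvS ((Set.mem_singleton_iff.mp hh) ▸ hs)⟩
    · intro a ha b hb
      rw [Set.mem_singleton_iff] at ha
      have hbv : b ≠ v := fun hh => hb hh
      rcases hUW b hbv with h | h
      · rw [ha]; exact h
      · exact absurd h (by rw [hWe]; exact Set.notMem_empty b)
  · by_cases hUe : U = ∅
    · refine ⟨{v}, ⟨v, rfl⟩, ?_, Or.inl ?_⟩
      · obtain ⟨s, hs⟩ := hS
        exact ⟨s, fun hh => hvS ((Set.mem_singleton_iff.mp hh) ▸ hs)⟩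
      · intro a ha b hb hadj
        rw [Set.mem_singleton_iff] at ha
        subst ha
        have : b ∈ U := hadj
        rw [hUe] at this
        exact this
    · by_cases hUS : ∀ x ∈ U, x ∉ S
      · -- no neighbor of v lies in S : split S | rest
        refine ⟨S, hS, ⟨v, hvS⟩, Or.inl ?_⟩
        intro a ha b hb hadj
        by_cases hbv : b = v
        · subst hbv
          exact hUS a hadj.symm ha
        · rcases hcover b hbv with h | h
          · exact hb h
          · exact hnocross a ha b h hadj
      · by_cases hUT : ∀ x ∈ U, x ∉ T
        · refine ⟨T, hT, ⟨v, hvT⟩, Or.inl ?_⟩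
          intro a ha b hb hadj
          by_cases hbv : b = v
          · subst hbv
            exact hUT a hadj.symm ha
          · rcases hcover b hbv with h | h
            · exact hnocross b h a ha hadj.symm
            · exact hb h
        · push_neg at hUS hUT
          obtain ⟨a, haU, haS⟩ := hUS
          obtain ⟨b, hbU, hbT⟩ := hUT
          by_cases hWU : ∃ w ∈ W, ∃ u ∈ U, G.Adj w u
          · exfalso
            obtain ⟨w, hw, u, hu, hwu⟩ := hWU
            have hwv : w ≠ v := hw.1
            have huv : u ≠ v := (G.ne_of_adj hu).symm
            have huw : u ≠ w := fun hh => (hh ▸ hw.2) hu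
            -- u and w must be in the same part
            rcases hcover u huv with huS | huT
            · rcases hcover w hwv with hwS | hwT
              · -- both in S, use b ∈ U ∩ T : P4 = b - v - u - w
                exact hfree.false (p4emb G b v u w hbU.symm hu hwu.symm
                  (fun h => hnocross u huS b hbT h.symm)
                  (fun h => hnocross w hwS b hbT h.symm)
                  hw.2
                  (fun h => hdisj u huS (h ▸ hbT))
                  (fun h => hdisj w hwS (h ▸ hbT))
                  (fun h => hwv h.symm))
              · exact hnocross u huS w hwT hwu.symm
            · rcases hcover w hwv with hwS | hwT
              · exact hnocross w hwS u huT hwu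
              · -- both in T, use a ∈ U ∩ S : P4 = a - v - u - w
                exact hfree.false (p4emb G a v u w haU.symm hu hwu.symm
                  (fun h => hnocross a haS u huT h)
                  (fun h => hnocross a haS w hwT h)
                  hw.2
                  (fun h => hdisj a haS (h ▸ huT))
                  (fun h => hdisj a haS (h ▸ hwT))
                  (fun h => hwv h.symm))
          · -- no W-U edges: split W | U ∪ {v}
            push_neg at hWU
            refine ⟨W, Set.nonempty_iff_ne_empty.mpr hWe, ⟨v, fun hh => hh.1 rfl⟩, Or.inl ?_⟩
            intro x hx y hy hadj
            by_cases hyv : y = v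
            · subst hyv
              exact hx.2 hadj.symm
            · rcases hUW y hyv with h | h
              · exact hWU x hx y h hadj
              · exact hy h

lemma seinsche : ∀ (n : ℕ) (V : Type) [Fintype V] (G : SimpleGraph V),
    Fintype.card V = n → P4Free G → 2 ≤ Fintype.card V → HasSplit G := by
  intro n
  induction n with
  | zero => intro V _ G hcard _ h2; omega
  | succ n ih =>
    intro V _ G hcard hfree h2
    classical
    by_cases hcard2 : Fintype.card V = 2
    · -- two vertices
      have hpos : 0 < Fintype.card V := by omega
      haveI : Nonempty V := Fintype.card_pos_iff.mp hpos
      obtain ⟨v⟩ := ‹Nonempty V›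
      obtain ⟨w, hw⟩ := Fintype.exists_ne_of_one_lt_card (by omega) v
      have htri : ∀ x : V, x = v ∨ x = w := by
        intro x
        by_contra hx
        push_neg at hx
        have h3 : ({x, v, w} : Finset V).card = 3 := by
          rw [Finset.card_insert_of_notMem (by simp [hx.1, hx.2]),
            Finset.card_insert_of_notMem (by simp [Ne.symm hw]), Finset.card_singleton]
        have hle : 3 ≤ Fintype.card V := by
          rw [← h3, Fintype.card]
          exact Finset.card_le_univ _
        omega
      have hwS : w ∈ ({v}ᶜ : Set V) := by simp [hw]
      by_cases hadj : G.Adj v w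
      · refine ⟨{v}, ⟨v, rfl⟩, ⟨w, hwS⟩, Or.inr ?_⟩
        intro a ha b hb
        rw [Set.mem_singleton_iff] at ha
        have hbv : b ≠ v := fun hh => hb hh
        rcases htri b with h | h
        · exact absurd h hbv
        · rw [ha, h]; exact hadj
      · refine ⟨{v}, ⟨v, rfl⟩, ⟨w, hwS⟩, Or.inl ?_⟩
        intro a ha b hb
        rw [Set.mem_singleton_iff] at ha
        have hbv : b ≠ v := fun hh => hb hh
        rcases htri b with h | h
        · exact absurd h hbv
        · rw [ha, h]; exact hadj
    · -- at least three vertices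
      have h3 : 3 ≤ Fintype.card V := by omega
      haveI : Nonempty V := Fintype.card_pos_iff.mp (by omega)
      obtain ⟨v⟩ := ‹Nonempty V›
      set Vs : Set V := {v}ᶜ with hVs
      have hcardVs : Fintype.card ↥Vs = n := by
        have h1 : Fintype.card ↥Vs = Fintype.card V - Fintype.card ↥({v} : Set V) :=
          Fintype.card_compl_set _
        rw [h1, Set.card_singleton]
        omega
      have hsplit' : HasSplit (G.induce Vs) :=
        ih ↥Vs (G.induce Vs) hcardVs (hfree.induce Vs) (by omega)
      obtain ⟨S', hS', hS'c, hcase⟩ := hsplit'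
      set S : Set V := Subtype.val '' S' with hSdef
      set T : Set V := Subtype.val '' (S'ᶜ) with hTdef
      have hSne : S.Nonempty := hS'.image _
      have hTne : T.Nonempty := hS'c.image _
      have hvS : v ∉ S := by
        rintro ⟨x, _, hx2⟩
        exact x.2 (by rw [hx2]; rfl)
      have hvT : v ∉ T := by
        rintro ⟨x, _, hx2⟩
        exact x.2 (by rw [hx2]; rfl)
      have hcover : ∀ x, x ≠ v → x ∈ S ∨ x ∈ T := by
        intro x hx
        have hxVs : x ∈ Vs := hx
        by_cases h : (⟨x, hxVs⟩ : ↥Vs) ∈ S'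
        · exact Or.inl ⟨⟨x, hxVs⟩, h, rfl⟩
        · exact Or.inr ⟨⟨x, hxVs⟩, h, rfl⟩
      have hdisj : ∀ x, x ∈ S → x ∉ T := by
        rintro x ⟨a, ha, ha2⟩ ⟨b, hb, hb2⟩
        have : a = b := Subtype.val_injective (ha2.trans hb2.symm)
        exact hb (this ▸ ha)
      rcases hcase with hno | hall
      · refine onecase G hfree v S T hSne hTne hvS hvT hcover hdisj ?_
        rintro a ⟨a', ha', rfl⟩ b ⟨b', hb', rfl⟩ hadj
        exact hno a' ha' b' hb' (induce_adj_iff.mpr hadj)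
      · refine hasSplit_of_compl (onecase Gᶜ hfree.compl v S T hSne hTne hvS hvT hcover hdisj ?_)
        rintro a ⟨a', ha', rfl⟩ b ⟨b', hb', rfl⟩ hadj
        exact hadj.2 (induce_adj_iff.mp (hall a' ha' b' hb'))

lemma cliqueNum_induce_le [Fintype V] (S : Set V) :
    (G.induce S).cliqueNum ≤ G.cliqueNum := by
  have := cliqueNum_induce_add_le (G := G) S ∅ (by simp) (by simp) (by simp)
  simpa using this

lemma allcross_cliqueNum [Fintype V] (S : Set V)
    (hall : ∀ a ∈ S, ∀ b ∈ Sᶜ, G.Adj a b) :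
    (G.induce S).cliqueNum + (G.induce Sᶜ).cliqueNum ≤ G.cliqueNum := by
  classical
  haveI : Fintype ↥S := S.toFinite.fintype
  haveI : Fintype ↥(Sᶜ) := Sᶜ.toFinite.fintype
  obtain ⟨Q1, hQ1⟩ := (G.induce S).exists_isNClique_cliqueNum
  obtain ⟨Q2, hQ2⟩ := (G.induce Sᶜ).exists_isNClique_cliqueNum
  have hQ1' := isNClique_map_of_induce hQ1
  have hQ2' := isNClique_map_of_induce hQ2
  set Q1' : Finset V := Q1.map (Function.Embedding.subtype _)
  set Q2' : Finset V := Q2.map (Function.Embedding.subtype _)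
  have hmem1 : ∀ x ∈ Q1', x ∈ S := by
    intro x hx
    rw [Finset.mem_map] at hx
    obtain ⟨a, _, rfl⟩ := hx
    exact a.2
  have hmem2 : ∀ x ∈ Q2', x ∈ Sᶜ := by
    intro x hx
    rw [Finset.mem_map] at hx
    obtain ⟨a, _, rfl⟩ := hx
    exact a.2
  have hclique : G.IsClique (Q1' ∪ Q2' : Finset V) := by
    rw [Finset.coe_union, isClique_iff, @Set.pairwise_union_of_symm _ _ _ _ G.symm]
    refine ⟨hQ1'.isClique, hQ2'.isClique, ?_⟩
    intro a ha b hb _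
    exact hall a (hmem1 a ha) b (hmem2 b hb)
  have hdisj2 : Disjoint Q1' Q2' := by
    rw [Finset.disjoint_left]
    exact fun a ha hb => (hmem2 a hb) (hmem1 a ha)
  calc (G.induce S).cliqueNum + (G.induce Sᶜ).cliqueNum = (Q1' ∪ Q2').card := by
        rw [Finset.card_union_of_disjoint hdisj2, hQ1'.card_eq, hQ2'.card_eq]
      _ ≤ G.cliqueNum := IsClique.card_le_cliqueNum (tc := hclique)

lemma cograph_colorable : ∀ (n : ℕ) (V : Type) [Fintype V] (G : SimpleGraph V),
    Fintype.card V ≤ n → P4Free G → G.Colorable G.cliqueNum := by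
  intro n
  induction n with
  | zero =>
    intro V _ G hcard _
    haveI : IsEmpty V := Fintype.card_eq_zero_iff.mp (by omega)
    exact Colorable.of_isEmpty (G := G) _
  | succ n ih =>
    intro V _ G hcard hfree
    classical
    rcases isEmpty_or_nonempty V with he | hne
    · exact Colorable.of_isEmpty (G := G) _
    · rcases le_or_gt (Fintype.card V) 1 with h1 | h1
      · have hc1 : G.Colorable 1 := by
          refine ⟨Coloring.mk (fun _ => 0) ?_⟩
          intro u v huv
          exfalso
          have h2 : 2 ≤ Fintype.card V := Fintype.one_lt_card_iff.mpr ⟨u, v, huv.ne⟩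
          omega
        exact hc1.mono one_le_cliqueNum
      · obtain ⟨S, hSne, hScne, hcase⟩ := seinsche (Fintype.card V) V G rfl hfree h1
        obtain ⟨bc, hbc⟩ := hScne
        obtain ⟨bs, hbs⟩ := hSne
        have hcardS : Fintype.card ↥S ≤ n := by
          have hlt : Fintype.card ↥S < Fintype.card V :=
            Fintype.card_subtype_lt (p := fun x => x ∈ S) (x := bc) hbc
          omega
        have hcardSc : Fintype.card ↥(Sᶜ) ≤ n := by
          have hlt : Fintype.card ↥(Sᶜ) < Fintype.card V :=
            Fintype.card_subtype_lt (p := fun x => x ∈ Sᶜ) (x := bs) (by simpa using hbs)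
          omega
        have cS := ih ↥S (G.induce S) hcardS (hfree.induce S)
        have cSc := ih ↥(Sᶜ) (G.induce Sᶜ) hcardSc (hfree.induce Sᶜ)
        rcases hcase with hno | hall
        · exact colorable_split_same S _ (cS.mono (_root_.cliqueNum_induce_le S))
            (cSc.mono (_root_.cliqueNum_induce_le Sᶜ)) hno
        · exact (colorable_split_add S _ _ cS cSc).mono (allcross_cliqueNum S hall)

lemma arith1 (k : ℕ) : ∀ w : ℕ,
    1 + ∑ m ∈ Finset.range w, Nat.choose (m + k + 1) k = Nat.choose (w + k + 1) (k + 1) := by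
  intro w
  induction w with
  | zero => simp
  | succ w ihw =>
    rw [Finset.sum_range_succ, ← Nat.add_assoc, ihw]
    have : w + 1 + k + 1 = (w + k + 1) + 1 := by omega
    rw [this, Nat.choose_succ_succ' (w + k + 1) k]
    omega

lemma arith2 (q : ℕ) : ∀ w : ℕ,
    w + ∑ m ∈ Finset.range w, (w - 1 - m) * Nat.choose (m + 1 + q) q
      = Nat.choose (w + q + 1) (q + 2) := by
  intro w
  induction w with
  | zero => simp [Nat.choose_eq_zero_of_lt]
  | succ w ihw =>
    have hsplit : ∑ m ∈ Finset.range (w + 1), (w + 1 - 1 - m) * Nat.choose (m + 1 + q) q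
        = (∑ m ∈ Finset.range w, (w - 1 - m) * Nat.choose (m + 1 + q) q)
          + (∑ m ∈ Finset.range w, Nat.choose (m + 1 + q) q) := by
      rw [Finset.sum_range_succ]
      have hz : (w + 1 - 1 - w) = 0 := by omega
      rw [hz, Nat.zero_mul, Nat.add_zero, ← Finset.sum_add_distrib]
      apply Finset.sum_congr rfl
      intro m hm
      rw [Finset.mem_range] at hm
      have : w + 1 - 1 - m = (w - 1 - m) + 1 := by omega
      rw [this]
      ring
    have h1 : ∑ m ∈ Finset.range w, Nat.choose (m + 1 + q) q
        = ∑ m ∈ Finset.range w, Nat.choose (m + q + 1) q := by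
      apply Finset.sum_congr rfl
      intro m _
      congr 1
      omega
    have hpas : Nat.choose (w + 1 + q + 1) (q + 2)
        = Nat.choose (w + q + 1) (q + 1) + Nat.choose (w + q + 1) (q + 2) := by
      have hps : w + 1 + q + 1 = (w + q + 1) + 1 := by omega
      rw [hps]
      exact Nat.choose_succ_succ' (w + q + 1) (q + 1)
    rw [hsplit, h1, hpas]
    have := arith1 q w
    omega

lemma arith_main (q w : ℕ) :
    w + ∑ j ∈ Finset.range w, j * Nat.choose (w - j + q) q
      = Nat.choose (w + q + 1) (q + 2) := by
  have hr := Finset.sum_range_reflect (fun j => j * Nat.choose (w - j + q) q) w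
  have hr2 : ∑ j ∈ Finset.range w, (w - 1 - j) * Nat.choose (w - (w - 1 - j) + q) q
      = ∑ j ∈ Finset.range w, (w - 1 - j) * Nat.choose (j + 1 + q) q := by
    apply Finset.sum_congr rfl
    intro j hj
    rw [Finset.mem_range] at hj
    congr 2
    omega
  rw [← hr, hr2, arith2 q w]

lemma pK2_adj {n : ℕ} {a b : Fin n × Fin 2} :
    (pK2 n).Adj a b ↔ a.1 = b.1 ∧ a.2 ≠ b.2 := Iff.rfl

def emb0 : (pK2 0 ⊕g pathGraph 4) ↪g pathGraph 4 where
  toFun := Sum.elim (fun w => w.1.elim0) id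
  inj' := by
    rintro (w | i) (w' | i') h
    · exact w.1.elim0
    · exact w.1.elim0
    · exact w'.1.elim0
    · simpa using h
  map_rel_iff' := by
    rintro (w | i) (w' | i')
    · exact w.1.elim0
    · exact w.1.elim0
    · exact w'.1.elim0
    · simp [sum_adj]
      exact Iff.rfl

lemma p4free_of_free0 (h : IsEmpty ((pK2 0 ⊕g pathGraph 4) ↪g G)) : P4Free G :=
  ⟨fun f => h.false (f.comp emb0)⟩

lemma free_step {p : ℕ} (hG : IsEmpty ((pK2 (p + 1) ⊕g pathGraph 4) ↪g G))
    (S : Set V) (x y : V) (hxy : G.Adj x y) (hx : x ∉ S) (hy : y ∉ S)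
    (hxS : ∀ v ∈ S, ¬G.Adj x v) (hyS : ∀ v ∈ S, ¬G.Adj y v) :
    IsEmpty ((pK2 p ⊕g pathGraph 4) ↪g G.induce S) := by
  constructor
  intro f
  apply hG.false
  classical
  set fv : (Fin p × Fin 2) ⊕ (Fin 4) → V := fun z => ((f z) : ↥S).val with hfv
  have hfvS : ∀ z, fv z ∈ S := fun z => (f z).2
  have hfv_inj : Function.Injective fv := Subtype.val_injective.comp f.injective
  have hfv_adj : ∀ z z', G.Adj (fv z) (fv z') ↔ (pK2 p ⊕g pathGraph 4).Adj z z' :=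
    fun z z' => induce_adj_iff.symm.trans f.map_adj_iff
  set gz : Fin 2 → V := fun t => if t = 0 then x else y with hgzdef
  have hgz_S : ∀ t, gz t ∉ S := by
    intro t
    fin_cases t <;> simp [hgzdef, hx, hy]
  have hgz_inj : ∀ t t', gz t = gz t' → t = t' := by
    intro t t'
    fin_cases t <;> fin_cases t' <;> simp [hgzdef, hxy.ne, hxy.ne.symm] <;> intro hh <;>
      first
        | rfl
        | (exact absurd hh hxy.ne)
        | (exact absurd hh.symm hxy.ne)
  have hgz_adj : ∀ t t', G.Adj (gz t) (gz t') ↔ t ≠ t' := by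
    intro t t'
    fin_cases t <;> fin_cases t' <;>
      simp [hgzdef, hxy, hxy.symm, G.loopless.irrefl x, G.loopless.irrefl y]
  have hgz_nadj : ∀ t, ∀ v ∈ S, ¬G.Adj (gz t) v := by
    intro t v hv
    fin_cases t <;> simp [hgzdef]
    · exact hxS v hv
    · exact hyS v hv
  set g : (Fin (p + 1) × Fin 2) ⊕ (Fin 4) → V := fun z =>
    match z with
    | Sum.inl w => if h : (w.1 : ℕ) < p then fv (Sum.inl (⟨w.1, h⟩, w.2)) else gz w.2
    | Sum.inr i => fv (Sum.inr i) with hg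
  have hginj : Function.Injective g := by
    intro a b hab
    rcases a with w | i <;> rcases b with w' | i'
    · simp only [hg] at hab
      split_ifs at hab with h1 h2 h2
      · have := hfv_inj hab
        simp only [Sum.inl.injEq, Prod.mk.injEq, Fin.mk.injEq] at this
        have hw1 : w.1 = w'.1 := Fin.ext this.1
        rw [Prod.ext hw1 this.2]
      · exact absurd (hab ▸ hfvS (Sum.inl (⟨w.1, h1⟩, w.2))) (hgz_S _)
      · exact absurd (hab.symm ▸ hfvS (Sum.inl (⟨w'.1, h2⟩, w'.2))) (hgz_S _)
      · have h2eq : w.2 = w'.2 := hgz_inj _ _ hab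
        have h1eq : w.1 = w'.1 := by
          refine Fin.ext ?_
          have e1 : (w.1 : ℕ) = p := by omega
          have e2 : (w'.1 : ℕ) = p := by omega
          omega
        rw [Prod.ext h1eq h2eq]
    · exfalso
      simp only [hg] at hab
      split_ifs at hab with h1
      · exact Sum.inl_ne_inr (hfv_inj hab)
      · exact (hgz_S w.2) (hab ▸ hfvS (Sum.inr i'))
    · exfalso
      simp only [hg] at hab
      split_ifs at hab with h1
      · exact Sum.inr_ne_inl (hfv_inj hab)
      · exact (hgz_S w'.2) (hab.symm ▸ hfvS (Sum.inr i))
    · simp only [hg] at hab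
      exact congrArg Sum.inr (Sum.inr.inj (hfv_inj hab))
  refine ⟨⟨g, hginj⟩, ?_⟩
  intro a b
  show G.Adj (g a) (g b) ↔ (pK2 (p + 1) ⊕g pathGraph 4).Adj a b
  rcases a with w | i <;> rcases b with w' | i'
  · simp only [hg]
    split_ifs with h1 h2 h2
    · rw [hfv_adj]
      simp only [sum_adj, pK2_adj]
      simp [Fin.ext_iff]
    · refine iff_of_false (fun h => hgz_nadj _ _ (hfvS _) h.symm) ?_
      simp only [sum_adj, pK2_adj]
      rintro ⟨hh, -⟩
      rw [Fin.ext_iff] at hh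
      omega
    · refine iff_of_false (fun h => hgz_nadj _ _ (hfvS _) h) ?_
      simp only [sum_adj, pK2_adj]
      rintro ⟨hh, -⟩
      rw [Fin.ext_iff] at hh
      omega
    · rw [hgz_adj]
      simp only [sum_adj, pK2_adj]
      have hfst : w.1 = w'.1 := by
        refine Fin.ext ?_
        have e1 : (w.1 : ℕ) = p := by omega
        have e2 : (w'.1 : ℕ) = p := by omega
        omega
      constructor
      · intro h
        exact ⟨hfst, h⟩
      · intro h
        exact h.2
  · simp only [hg]
    split_ifs with h1
    · rw [hfv_adj]
      simp [sum_adj]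
    · refine iff_of_false (fun h => hgz_nadj _ _ (hfvS _) h) ?_
      simp [sum_adj]
  · simp only [hg]
    split_ifs with h1
    · rw [hfv_adj]
      simp [sum_adj]
    · refine iff_of_false (fun h => hgz_nadj _ _ (hfvS _) h.symm) ?_
      simp [sum_adj]
  · simp only [hg]
    rw [hfv_adj]
    simp [sum_adj]

lemma main_colorable : ∀ (p : ℕ) (V : Type) [Fintype V] (G : SimpleGraph V),
    IsEmpty ((pK2 p ⊕g pathGraph 4) ↪g G) →
    G.Colorable (Nat.choose (G.cliqueNum + 2 * p) (2 * p + 1)) := by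
  intro p
  induction p with
  | zero =>
    intro V _ G h
    have := cograph_colorable (Fintype.card V) V G le_rfl (p4free_of_free0 h)
    simpa using this
  | succ p ih =>
    intro V _ G hG
    classical
    rcases isEmpty_or_nonempty V with he | hne
    · exact Colorable.of_isEmpty (G := G) _
    obtain ⟨K, hK⟩ := G.exists_isNClique_cliqueNum
    have hKcard : K.card = G.cliqueNum := hK.card_eq
    set ω := G.cliqueNum with hwdef
    have hmax : ∀ (s : Finset V), G.IsClique ↑s → s.card ≤ ω :=
      fun s hs => IsClique.card_le_cliqueNum (tc := hs)
    set κ := K.card with hκdef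
    set e : Fin κ ≃ ↥K := K.equivFin.symm with hedef
    set nn : V → Finset (Fin κ) :=
      fun v => Finset.univ.filter (fun i => ¬ G.Adj v ((e i) : V)) with hnn
    have hnn_mem : ∀ (v : V) (i : Fin κ), i ∈ nn v ↔ ¬ G.Adj v ((e i) : V) := by
      intro v i
      simp [hnn]
    have hKmem : ∀ (w : V) (hw : w ∈ K), ((e (e.symm ⟨w, hw⟩)) : V) = w := by
      intro w hw
      simp [hedef]
    have adjK : ∀ i j : Fin κ, i ≠ j → G.Adj ((e i) : V) ((e j) : V) := by
      intro i j hij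
      apply hK.isClique (e i).2 (e j).2
      intro hh
      exact hij (e.injective (Subtype.val_injective hh))
    have h_nn_K : ∀ i : Fin κ, nn ((e i) : V) = {i} := by
      intro i
      ext j
      rw [hnn_mem, Finset.mem_singleton]
      constructor
      · intro h
        by_contra hji
        exact h (adjK i j (fun hh => hji hh.symm))
      · rintro rfl
        exact G.loopless.irrefl _
    have h_nn_ne : ∀ v : V, (nn v).Nonempty := by
      intro v
      by_cases hv : v ∈ K
      · refine ⟨e.symm ⟨v, hv⟩, ?_⟩
        rw [hnn_mem, hKmem v hv]
        exact G.loopless.irrefl v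
      · by_contra hempty
        rw [Finset.not_nonempty_iff_eq_empty] at hempty
        have hadj : ∀ b ∈ K, v ≠ b → G.Adj v b := by
          intro b hb _
          have hi : e.symm ⟨b, hb⟩ ∉ nn v := by rw [hempty]; exact Finset.notMem_empty _
          rw [hnn_mem, hKmem b hb] at hi
          exact not_not.mp hi
        have hclique : G.IsClique ↑(insert v K) := by
          rw [Finset.coe_insert]
          exact hK.isClique.insert hadj
        have hcard : (insert v K).card = κ + 1 := by
          rw [Finset.card_insert_of_notMem hv]
        have := hmax _ hclique
        rw [hcard] at this
        omega
    set m1 : V → Fin κ := fun v => (nn v).min' (h_nn_ne v) with hm1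
    have hm1mem : ∀ v, m1 v ∈ nn v := fun v => Finset.min'_mem _ _
    have herase_ne : ∀ v, 2 ≤ (nn v).card → ((nn v).erase (m1 v)).Nonempty := by
      intro v h2
      rw [← Finset.card_pos, Finset.card_erase_of_mem (hm1mem v)]
      omega
    set m2 : V → Fin κ := fun v =>
      if h : ((nn v).erase (m1 v)).Nonempty then ((nn v).erase (m1 v)).min' h else m1 v with hm2
    have hm2mem : ∀ v, 2 ≤ (nn v).card → m2 v ∈ (nn v).erase (m1 v) := by
      intro v h2
      rw [hm2]
      dsimp only
      rw [dif_pos (herase_ne v h2)]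
      exact Finset.min'_mem _ _
    have hm1m2 : ∀ v, 2 ≤ (nn v).card → m1 v < m2 v := by
      intro v h2
      have hmem := hm2mem v h2
      rw [Finset.mem_erase] at hmem
      exact lt_of_le_of_ne (Finset.min'_le _ _ hmem.2) (Ne.symm hmem.1)
    have hlow : ∀ v, 2 ≤ (nn v).card → ∀ k : Fin κ, k < m2 v → k ≠ m1 v →
        G.Adj v ((e k) : V) := by
      intro v h2 k hk hki
      by_contra hadj
      have hkmem : k ∈ (nn v).erase (m1 v) :=
        Finset.mem_erase.mpr ⟨hki, (hnn_mem v k).mpr hadj⟩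
      have := Finset.min'_le _ _ hkmem
      rw [hm2] at hk
      dsimp only at hk
      rw [dif_pos (herase_ne v h2)] at hk
      exact absurd hk (not_lt.mpr this)
    have hsingle : ∀ v, ¬ 2 ≤ (nn v).card → nn v = {m1 v} := by
      intro v h2
      have h1 : (nn v).card = 1 := by
        have := Finset.card_pos.mpr (h_nn_ne v)
        omega
      obtain ⟨a, ha⟩ := Finset.card_eq_one.mp h1
      have hma : m1 v = a := by
        have := hm1mem v
        rw [ha, Finset.mem_singleton] at this
        exact this
      rw [hma, ha]
    set CC : Fin κ → Fin κ → Set V :=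
      fun i j => {v | 2 ≤ (nn v).card ∧ m1 v = i ∧ m2 v = j} with hCC
    have hCCmem : ∀ v i j, v ∈ CC i j ↔ (2 ≤ (nn v).card ∧ m1 v = i ∧ m2 v = j) := by
      intro v i j
      rfl
    have hCC_notK : ∀ (i j k : Fin κ), ((e k : V)) ∉ CC i j := by
      intro i j k hk
      rw [hCCmem] at hk
      have := hk.1
      rw [h_nn_K k, Finset.card_singleton] at this
      omega
    set Mf : Fin κ → ℕ := fun j => Nat.choose ((ω - (j : ℕ) + 1) + 2 * p) (2 * p + 1) with hMf
    have hpart : ∀ i j : Fin κ, (G.induce (CC i j)).Colorable (Mf j) := by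
      intro i j
      by_cases hij : i < j
      case neg =>
        have hempty : CC i j = ∅ := by
          rw [Set.eq_empty_iff_forall_notMem]
          intro v hv
          rw [hCCmem] at hv
          obtain ⟨h2, e1, e2⟩ := hv
          exact hij (e1 ▸ e2 ▸ hm1m2 v h2)
        haveI : IsEmpty ↥(CC i j) := Set.isEmpty_coe_sort.mpr hempty
        exact Colorable.of_isEmpty (G := G.induce (CC i j)) _
      case pos =>
        have hijne : i ≠ j := ne_of_lt hij
        have hxS : ∀ v ∈ CC i j, ¬ G.Adj ((e i) : V) v := by
          intro v hv hadj
          rw [hCCmem] at hv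
          have hi : i ∈ nn v := hv.2.1 ▸ hm1mem v
          exact ((hnn_mem v i).mp hi) hadj.symm
        have hyS : ∀ v ∈ CC i j, ¬ G.Adj ((e j) : V) v := by
          intro v hv hadj
          rw [hCCmem] at hv
          have hj : j ∈ nn v := by
            have := hm2mem v hv.1
            rw [Finset.mem_erase] at this
            exact hv.2.2 ▸ this.2
          exact ((hnn_mem v j).mp hj) hadj.symm
        have hfree' := free_step hG (CC i j) ((e i) : V) ((e j) : V) (adjK i j hijne)
          (hCC_notK i j i) (hCC_notK i j j) hxS hyS
        have hcol' := ih ↥(CC i j) (G.induce (CC i j)) hfree'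
        -- clique number bound for the part
        set F : Finset V :=
          (Finset.univ.filter (fun k : Fin κ => k < j ∧ k ≠ i)).image (fun k => ((e k) : V))
          with hFdef
        have hFmem : ∀ w, w ∈ F ↔ ∃ k : Fin κ, (k < j ∧ k ≠ i) ∧ ((e k : V)) = w := by
          intro w
          simp [hFdef]
        have hFclique : G.IsClique ↑F := by
          intro a ha b hb hab
          rw [Finset.mem_coe, hFmem] at ha hb
          obtain ⟨k, _, rfl⟩ := ha
          obtain ⟨k', _, rfl⟩ := hb
          refine adjK k k' ?_
          intro hh
          exact hab (by rw [hh])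
        have hdisjF : ∀ v ∈ CC i j, v ∉ F := by
          intro v hv hvF
          rw [hFmem] at hvF
          obtain ⟨k, _, rfl⟩ := hvF
          exact hCC_notK i j k hv
        have hadjF : ∀ v ∈ CC i j, ∀ w ∈ F, G.Adj v w := by
          intro v hv w hw
          rw [hFmem] at hw
          obtain ⟨k, ⟨hk1, hk2⟩, rfl⟩ := hw
          rw [hCCmem] at hv
          exact hlow v hv.1 k (hv.2.2 ▸ hk1) (hv.2.1 ▸ hk2)
        have hcardF : F.card = (j : ℕ) - 1 := by
          have hinj : Function.Injective (fun k : Fin κ => ((e k) : V)) :=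
            fun a b hh => e.injective (Subtype.val_injective hh)
          rw [hFdef, Finset.card_image_of_injective _ hinj]
          have hset : Finset.univ.filter (fun k : Fin κ => k < j ∧ k ≠ i)
              = (Finset.Iio j).erase i := by
            ext k
            simp only [Finset.mem_filter, Finset.mem_univ, true_and, Finset.mem_erase,
              Finset.mem_Iio]
            tauto
          rw [hset, Finset.card_erase_of_mem (Finset.mem_Iio.mpr hij), Fin.card_Iio]
        have hbound := cliqueNum_induce_add_le (G := G) (CC i j) F hFclique hdisjF hadjF
        rw [hcardF, ← hwdef] at hbound
        have hjlt : (j : ℕ) < κ := j.isLt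
        have hjpos : 1 ≤ (j : ℕ) := by
          have : (i : ℕ) < (j : ℕ) := hij
          omega
        have hb2 : (G.induce (CC i j)).cliqueNum ≤ ω - (j : ℕ) + 1 := by omega
        refine hcol'.mono ?_
        rw [hMf]
        exact Nat.choose_le_choose _ (by omega)
      done
    -- chosen colorings of the parts
    set col : ∀ i j : Fin κ, (G.induce (CC i j)).Coloring (Fin (Mf j)) :=
      fun i j => (hpart i j).some with hcoldef
    set colf : Fin κ → Fin κ → V → ℕ := fun i j v =>
      if h : v ∈ CC i j then ((col i j) ⟨v, h⟩ : Fin (Mf j)).val else 0 with hcolf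
    have hcolf_lt : ∀ i j v, v ∈ CC i j → colf i j v < Mf j := by
      intro i j v hv
      rw [hcolf]
      dsimp only
      rw [dif_pos hv]
      exact ((col i j) ⟨v, hv⟩).isLt
    have hcolf_ne : ∀ (i j : Fin κ) (u v : V), u ∈ CC i j → v ∈ CC i j → G.Adj u v →
        colf i j u ≠ colf i j v := by
      intro i j u v hu hv hadj
      rw [hcolf]
      dsimp only
      rw [dif_pos hu, dif_pos hv]
      intro hh
      exact (col i j).valid (induce_adj_iff.mpr hadj) (Fin.ext hh)
    set cfun : V → (Fin κ) ⊕ (Σ j : Fin κ, Fin (j : ℕ) × Fin (Mf j)) := fun v =>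
      if h2 : 2 ≤ (nn v).card then
        Sum.inr ⟨m2 v, (⟨((m1 v) : ℕ), hm1m2 v h2⟩,
          ⟨colf (m1 v) (m2 v) v, hcolf_lt _ _ v ⟨h2, rfl, rfl⟩⟩)⟩
      else Sum.inl (m1 v) with hcfun
    have hvalid : ∀ u v : V, G.Adj u v → cfun u ≠ cfun v := by
      intro u v huv heq
      rw [hcfun] at heq
      dsimp only at heq
      by_cases h2u : 2 ≤ (nn u).card <;> by_cases h2v : 2 ≤ (nn v).card
      · rw [dif_pos h2u, dif_pos h2v] at heq
        have h1 := Sum.inr.inj heq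
        have hj : m2 u = m2 v := congrArg Sigma.fst h1
        have henc := congrArg
          (fun s : (Σ j : Fin κ, Fin (j : ℕ) × Fin (Mf j)) => (((s.2.1 : ℕ)), ((s.2.2 : ℕ)))) h1
        simp only [Prod.mk.injEq] at henc
        obtain ⟨hm1v, hcolv⟩ := henc
        have hi : m1 u = m1 v := Fin.ext hm1v
        rw [← hi, ← hj] at hcolv
        have hmemu : u ∈ CC (m1 u) (m2 u) := ⟨h2u, rfl, rfl⟩
        have hmemv : v ∈ CC (m1 u) (m2 u) := ⟨h2v, hi.symm, hj.symm⟩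
        exact hcolf_ne (m1 u) (m2 u) u v hmemu hmemv huv hcolv
      · rw [dif_pos h2u, dif_neg h2v] at heq
        exact Sum.inr_ne_inl heq
      · rw [dif_neg h2u, dif_pos h2v] at heq
        exact Sum.inl_ne_inr heq
      · rw [dif_neg h2u, dif_neg h2v] at heq
        have hi : m1 u = m1 v := Sum.inl.inj heq
        have hnnu : nn u = {m1 u} := hsingle u h2u
        have hnnv : nn v = {m1 v} := hsingle v h2v
        by_cases hu : u ∈ K
        · have hueq : ((e (e.symm ⟨u, hu⟩)) : V) = u := hKmem u hu
          have hnnu2 : nn u = {e.symm ⟨u, hu⟩} := by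
            have := h_nn_K (e.symm ⟨u, hu⟩)
            rw [hueq] at this
            exact this
          have hk : m1 u = e.symm ⟨u, hu⟩ := by
            have := hm1mem u
            rw [hnnu2, Finset.mem_singleton] at this
            exact this
          have hnadj : ¬ G.Adj v ((e (m1 v)) : V) := (hnn_mem v (m1 v)).mp (hm1mem v)
          rw [← hi, hk, hueq] at hnadj
          exact hnadj huv.symm
        · by_cases hv : v ∈ K
          · have hveq : ((e (e.symm ⟨v, hv⟩)) : V) = v := hKmem v hv
            have hnnv2 : nn v = {e.symm ⟨v, hv⟩} := by
              have := h_nn_K (e.symm ⟨v, hv⟩)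
              rw [hveq] at this
              exact this
            have hk : m1 v = e.symm ⟨v, hv⟩ := by
              have := hm1mem v
              rw [hnnv2, Finset.mem_singleton] at this
              exact this
            have hnadj : ¬ G.Adj u ((e (m1 u)) : V) := (hnn_mem u (m1 u)).mp (hm1mem u)
            rw [hi, hk, hveq] at hnadj
            exact hnadj huv
          · -- both outside K : build a clique of size κ + 1
            set x0 : V := ((e (m1 u)) : V) with hx0
            have hx0K : x0 ∈ K := (e (m1 u)).2
            have hvadj : ∀ b ∈ (↑(K.erase x0) : Set V), v ≠ b → G.Adj v b := by
              intro b hb _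
              rw [Finset.mem_coe, Finset.mem_erase] at hb
              obtain ⟨hbne, hbK⟩ := hb
              have hkb : e.symm ⟨b, hbK⟩ ≠ m1 v := by
                intro hh
                apply hbne
                have hbeq : ((e (m1 v)) : V) = b := by
                  rw [← hh]
                  exact hKmem b hbK
                rw [← hbeq, ← hi]
              have hnot : e.symm ⟨b, hbK⟩ ∉ nn v := by
                rw [hnnv, Finset.mem_singleton]
                exact hkb
              rw [hnn_mem, hKmem b hbK] at hnot
              exact not_not.mp hnot
            have huadj : ∀ b ∈ (insert v (↑(K.erase x0) : Set V)), u ≠ b → G.Adj u b := by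
              intro b hb hub
              rcases Set.mem_insert_iff.mp hb with hbv | hbe
              · rw [hbv]
                exact huv
              · rw [Finset.mem_coe, Finset.mem_erase] at hbe
                obtain ⟨hbne, hbK⟩ := hbe
                have hkb : e.symm ⟨b, hbK⟩ ≠ m1 u := by
                  intro hh
                  apply hbne
                  have hbeq : ((e (m1 u)) : V) = b := by
                    rw [← hh]
                    exact hKmem b hbK
                  rw [← hbeq]
                have hnot : e.symm ⟨b, hbK⟩ ∉ nn u := by
                  rw [hnnu, Finset.mem_singleton]
                  exact hkb
                rw [hnn_mem, hKmem b hbK] at hnot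
                exact not_not.mp hnot
            have hbase : G.IsClique (↑(K.erase x0) : Set V) := by
              apply hK.isClique.subset
              rw [Finset.coe_erase]
              exact Set.diff_subset
            have hclique : G.IsClique ↑(insert u (insert v (K.erase x0))) := by
              rw [Finset.coe_insert, Finset.coe_insert]
              exact (hbase.insert hvadj).insert huadj
            have hcard : (insert u (insert v (K.erase x0))).card = κ + 1 := by
              rw [Finset.card_insert_of_notMem, Finset.card_insert_of_notMem,
                Finset.card_erase_of_mem hx0K]
              · have hpos : 0 < κ := (m1 u).pos
                omega
              · intro hmem
                exact hv (Finset.mem_of_mem_erase hmem)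
              · intro hmem
                rcases Finset.mem_insert.mp hmem with hh | hh
                · exact huv.ne hh
                · exact hu (Finset.mem_of_mem_erase hh)
            have := hmax _ hclique
            rw [hcard] at this
            omega
    have ccol : G.Coloring ((Fin κ) ⊕ (Σ j : Fin κ, Fin (j : ℕ) × Fin (Mf j))) :=
      Coloring.mk cfun (fun {u v} h => hvalid u v h)
    have hcolorable := ccol.colorable
    have hcardCT : Fintype.card ((Fin κ) ⊕ (Σ j : Fin κ, Fin (j : ℕ) × Fin (Mf j)))
        = κ + ∑ jn ∈ Finset.range κ, jn * Nat.choose (κ - jn + (2 * p + 1)) (2 * p + 1) := by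
      rw [Fintype.card_sum, Fintype.card_sigma]
      simp only [Fintype.card_prod, Fintype.card_fin]
      congr 1
      rw [Fin.sum_univ_eq_sum_range (fun jn => jn * Nat.choose ((ω - jn + 1) + 2 * p) (2 * p + 1)) κ]
      apply Finset.sum_congr rfl
      intro jn hjn
      rw [Finset.mem_range] at hjn
      congr 2
      omega
    have hfinal : κ + ∑ jn ∈ Finset.range κ, jn * Nat.choose (κ - jn + (2 * p + 1)) (2 * p + 1)
        = Nat.choose (ω + 2 * (p + 1)) (2 * (p + 1) + 1) := by
      rw [arith_main (2 * p + 1) κ]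
      congr 1 <;> omega
    rw [hcardCT, hfinal] at hcolorable
    exact hcolorable


theorem stmt_10 (p : ℕ) (hp : 1 ≤ p) (V : Type) [Fintype V] (G : SimpleGraph V)
    (hG : IsEmpty ((pK2 p ⊕g pathGraph 4) ↪g G)) :
    G.chromaticNumber ≤ (Nat.choose (G.cliqueNum + 2 * p) (2 * p + 1) : ℕ∞) := by
  exact (main_colorable p V G hG).chromaticNumber_le
end
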